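/- arXiv:2204.11753 — 12 statements merged into one kernel-verified Lean document; each statement's English description precedes it below -/
import Mathlib

section
/- For every list of m jobs with positive integer lengths and every n machines with positive integer speeds r_1,…,r_n, there exists a fractional allocation of the jobs to the machines in which at most n−1 jobs are split and the completion time of every machine i equals S = (Σ_j x_j)/(r_1+⋯+r_n). (The 'line-cutting' construction: arrange the jobs on a line and cut it into n consecutive pieces of lengths r_i·S.) -/
/-- Key clamp identity: the overlap length as a difference of clamped values. -/
lemma clamp_eq (a b c c' : ℚ) (hab : a ≤ b) (hcc : c ≤ c') :
    max 0 (min b c' - max a c) = min b (max a c') - min b (max a c) := by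
  simp only [min_def, max_def]
  split_ifs <;> linarith

/-- For every list of `m` jobs with positive integer lengths and every `n ≥ 1`
machines with positive integer speeds, there exists a fractional allocation in which at most
`n - 1` jobs are split and every machine's completion time equals the perfect completion time
`S = (∑ j, x j) / (∑ i, r i)`. -/
theorem stmt_0 (m n : ℕ) (hn : 0 < n)
    (x : Fin m → ℕ) (hx : ∀ j, 0 < x j)
    (r : Fin n → ℕ) (hr : ∀ i, 0 < r i) :
    ∃ f : Fin m → Fin n → ℚ,
      (∀ j i, 0 ≤ f j i) ∧
      (∀ j, ∑ i, f j i = (x j : ℚ)) ∧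
      (Finset.univ.filter
          (fun j => 1 < (Finset.univ.filter (fun i => 0 < f j i)).card)).card ≤ n - 1 ∧
      (∀ i, (∑ j, f j i) / (r i : ℚ) =
        (∑ j, (x j : ℚ)) / ((∑ i, r i : ℕ) : ℚ)) := by
  classical
  set T : ℚ := ∑ j, (x j : ℚ) with hT
  set Aq : ℚ := ((∑ i, r i : ℕ) : ℚ) with hAq
  have hApos : 0 < Aq := by
    rw [hAq]
    have : 0 < ∑ i, r i :=
      Finset.sum_pos (fun i _ => hr i)
        (Finset.univ_nonempty_iff.mpr (Fin.pos_iff_nonempty.mp hn))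
    exact_mod_cast this
  have hTpos : 0 ≤ T := Finset.sum_nonneg (fun j _ => by positivity)
  set S : ℚ := T / Aq with hS
  have hS0 : 0 ≤ S := div_nonneg hTpos hApos.le
  set x' : ℕ → ℚ := fun k => if h : k < m then (x ⟨k, h⟩ : ℚ) else 0 with hx'
  set r' : ℕ → ℚ := fun k => if h : k < n then (r ⟨k, h⟩ : ℚ) else 0 with hr'
  have hx'0 : ∀ k, 0 ≤ x' k := by intro k; rw [hx']; dsimp; split <;> positivity
  have hr'0 : ∀ k, 0 ≤ r' k := by intro k; rw [hr']; dsimp; split <;> positivity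
  set P : ℕ → ℚ := fun j => ∑ k ∈ Finset.range j, x' k with hP
  set C : ℕ → ℚ := fun i => S * ∑ k ∈ Finset.range i, r' k with hC
  have hPmono : Monotone P := by
    intro a b hab
    exact Finset.sum_le_sum_of_subset_of_nonneg (Finset.range_subset_range.mpr hab) (fun k _ _ => hx'0 k)
  have hCmono : Monotone C := by
    intro a b hab
    exact mul_le_mul_of_nonneg_left
      (Finset.sum_le_sum_of_subset_of_nonneg (Finset.range_subset_range.mpr hab)
        (fun k _ _ => hr'0 k)) hS0
  have hP0 : P 0 = 0 := by simp [hP]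
  have hC0 : C 0 = 0 := by simp [hC]
  have hPm : P m = T := by
    rw [hP, hT]
    dsimp only
    rw [← Fin.sum_univ_eq_sum_range]
    refine Finset.sum_congr rfl fun k _ => ?_
    rw [hx']
    simp [k.isLt]
  have hCn : C n = T := by
    rw [hC]
    dsimp only
    have : ∑ k ∈ Finset.range n, r' k = Aq := by
      rw [hAq, ← Fin.sum_univ_eq_sum_range, Nat.cast_sum]
      refine Finset.sum_congr rfl fun k _ => ?_
      rw [hr']
      simp [k.isLt]
    rw [this, hS, div_mul_cancel₀ _ (ne_of_gt hApos)]
  have hPx : ∀ j : Fin m, P (j + 1) - P j = (x j : ℚ) := by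
    intro j
    rw [hP]
    dsimp only
    rw [Finset.sum_range_succ]
    simp [hx', j.isLt]
  have hCr : ∀ i : Fin n, C (i + 1) - C i = S * (r i : ℚ) := by
    intro i
    rw [hC]
    dsimp only
    rw [Finset.sum_range_succ, mul_add]
    simp [hr', i.isLt]
  -- a split job contains an interior cut point
  have getcut : ∀ (jj : Fin m) (i1 i2 : Fin n), (i1 : ℕ) < (i2 : ℕ) →
      0 < max 0 (min (P (jj.1 + 1)) (C (i1.1 + 1)) - max (P jj.1) (C i1.1)) →
      0 < max 0 (min (P (jj.1 + 1)) (C (i2.1 + 1)) - max (P jj.1) (C i2.1)) →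
      ∃ k, (0 < k ∧ k < n) ∧ P jj.1 < C k ∧ C k < P (jj.1 + 1) := by
    intro jj i1 i2 hlt hi1 hi2
    have h1' : 0 < min (P (jj.1 + 1)) (C (i1.1 + 1)) - max (P jj.1) (C i1.1) := by
      by_contra h
      push_neg at h
      rw [max_eq_left h] at hi1
      exact lt_irrefl _ hi1
    have h2' : 0 < min (P (jj.1 + 1)) (C (i2.1 + 1)) - max (P jj.1) (C i2.1) := by
      by_contra h
      push_neg at h
      rw [max_eq_left h] at hi2
      exact lt_irrefl _ hi2
    have h1 : P jj.1 < C (i1.1 + 1) :=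
      calc P jj.1 ≤ max (P jj.1) (C i1.1) := le_max_left _ _
        _ < min (P (jj.1 + 1)) (C (i1.1 + 1)) := by linarith
        _ ≤ C (i1.1 + 1) := min_le_right _ _
    have h2 : C i2.1 < P (jj.1 + 1) :=
      calc C i2.1 ≤ max (P jj.1) (C i2.1) := le_max_right _ _
        _ < min (P (jj.1 + 1)) (C (i2.1 + 1)) := by linarith
        _ ≤ P (jj.1 + 1) := min_le_left _ _
    exact ⟨i1.1 + 1, ⟨Nat.succ_pos _, lt_of_le_of_lt hlt i2.isLt⟩, h1,
      lt_of_le_of_lt (hCmono hlt) h2⟩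
  have getcut' : ∀ jj : Fin m, 1 < (Finset.univ.filter (fun i : Fin n =>
      0 < max 0 (min (P (jj.1 + 1)) (C (i.1 + 1)) - max (P jj.1) (C i.1)))).card →
      ∃ k, (0 < k ∧ k < n) ∧ P jj.1 < C k ∧ C k < P (jj.1 + 1) := by
    intro jj hjj
    obtain ⟨i1, hi1, i2, hi2, hne⟩ := Finset.one_lt_card.mp hjj
    simp only [Finset.mem_filter, Finset.mem_univ, true_and] at hi1 hi2
    rcases lt_or_gt_of_ne (fun h : (i1 : ℕ) = (i2 : ℕ) => hne (Fin.ext h)) with h | h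
    · exact getcut jj i1 i2 h hi1 hi2
    · exact getcut jj i2 i1 h hi2 hi1
  refine ⟨fun j i => max 0 (min (P (j.1 + 1)) (C (i.1 + 1)) - max (P j.1) (C i.1)),
    fun j i => le_max_left _ _, ?_, ?_, ?_⟩
  · -- row sums
    intro j
    have hab : P j.1 ≤ P (j.1 + 1) := hPmono (Nat.le_succ _)
    have key : ∀ i : Fin n,
        max 0 (min (P (j.1 + 1)) (C (i.1 + 1)) - max (P j.1) (C i.1)) =
        min (P (j.1 + 1)) (max (P j.1) (C (i.1 + 1))) -
          min (P (j.1 + 1)) (max (P j.1) (C i.1)) :=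
      fun i => clamp_eq _ _ _ _ hab (hCmono (Nat.le_succ _))
    rw [Finset.sum_congr rfl (fun i _ => key i)]
    rw [Fin.sum_univ_eq_sum_range (fun k =>
      min (P (j.1 + 1)) (max (P j.1) (C (k + 1))) - min (P (j.1 + 1)) (max (P j.1) (C k)))]
    rw [Finset.sum_range_sub (fun k => min (P (j.1 + 1)) (max (P j.1) (C k)))]
    have h1 : P (j.1 + 1) ≤ T := hPm ▸ hPmono j.isLt
    have h2 : 0 ≤ P j.1 := hP0 ▸ hPmono (Nat.zero_le _)
    rw [hCn, hC0]
    rw [max_eq_right (le_trans hab h1), min_eq_left h1, max_eq_left h2, min_eq_right hab]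
    exact hPx j
  · -- split count
    refine le_trans (Finset.card_le_card_of_injOn
      (f := fun j : Fin m =>
        if h : ∃ k, (0 < k ∧ k < n) ∧ P j.1 < C k ∧ C k < P (j.1 + 1) then h.choose else 0)
      (t := Finset.Ioo 0 n) ?_ ?_) (by simp [Nat.card_Ioo])
    · -- maps into Ioo 0 n
      intro j hj
      simp only [Finset.coe_filter, Finset.mem_filter, Finset.mem_univ, true_and, Set.mem_setOf_eq] at hj
      have hex := getcut' j hj
      simp only [dif_pos hex]
      have := hex.choose_spec
      simp [Finset.mem_Ioo, this.1.1, this.1.2]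
    · -- injective
      intro j hj j' hj' heq
      simp only [Finset.coe_filter, Finset.mem_univ, true_and, Set.mem_setOf_eq] at hj hj'
      have hexj := getcut' j hj
      have hexj' := getcut' j' hj'
      simp only [dif_pos hexj, dif_pos hexj'] at heq
      have s1 := hexj.choose_spec
      have s2 := hexj'.choose_spec
      rw [heq] at s1
      by_contra hne
      rcases lt_or_gt_of_ne (fun h : (j : ℕ) = (j' : ℕ) => hne (Fin.ext h)) with h | h
      · have : P (j.1 + 1) ≤ P j'.1 := hPmono h
        linarith [s1.2.2, s2.2.1]
      · have : P (j'.1 + 1) ≤ P j.1 := hPmono h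
        linarith [s2.2.2, s1.2.1]
  · -- column sums
    intro i
    have hcc : C i.1 ≤ C (i.1 + 1) := hCmono (Nat.le_succ _)
    have key : ∀ j : Fin m,
        max 0 (min (P (j.1 + 1)) (C (i.1 + 1)) - max (P j.1) (C i.1)) =
        min (C (i.1 + 1)) (max (C i.1) (P (j.1 + 1))) -
          min (C (i.1 + 1)) (max (C i.1) (P j.1)) := by
      intro j
      rw [min_comm (P (j.1 + 1)) (C (i.1 + 1)), max_comm (P j.1) (C i.1)]
      exact clamp_eq _ _ _ _ hcc (hPmono (Nat.le_succ _))
    rw [Finset.sum_congr rfl (fun j _ => key j)]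
    rw [Fin.sum_univ_eq_sum_range (fun k =>
      min (C (i.1 + 1)) (max (C i.1) (P (k + 1))) - min (C (i.1 + 1)) (max (C i.1) (P k)))]
    rw [Finset.sum_range_sub (fun k => min (C (i.1 + 1)) (max (C i.1) (P k)))]
    have h1 : C (i.1 + 1) ≤ T := hCn ▸ hCmono i.isLt
    have h2 : 0 ≤ C i.1 := hC0 ▸ hCmono (Nat.zero_le _)
    rw [hPm, hP0]
    rw [max_eq_right (le_trans hcc h1), min_eq_left h1, max_eq_left h2, min_eq_right hcc]
    rw [hCr i]
    rw [mul_div_assoc, div_self (by exact_mod_cast (hr i).ne'), mul_one]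
end

section
/- In every fractional allocation of the jobs among the n machines, there exists at least one machine i whose completion time satisfies b_i ≤ (2 − 1/r_i)·S. (Otherwise the total allocated length would exceed Σ_i r_i(2 − 1/r_i)S = Σ_i (2r_i − 1)S ≥ A·S, a contradiction.) -/
/-- In every fractional allocation of the jobs among the `n` machines there is a
machine `i` with completion time at most `(2 - 1/r i) * S`. -/
theorem stmt_1 (m n : ℕ) (hn : 0 < n)
    (x : Fin m → ℕ) (hx : ∀ j, 0 < x j)
    (r : Fin n → ℕ) (hr : ∀ i, 0 < r i)
    (f : Fin m → Fin n → ℚ) (hf0 : ∀ j i, 0 ≤ f j i)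
    (hfsum : ∀ j, ∑ i, f j i = (x j : ℚ)) :
    ∃ i : Fin n,
      (∑ j, f j i) / (r i : ℚ) ≤
        (2 - 1 / (r i : ℚ)) * ((∑ j, (x j : ℚ)) / ((∑ i, r i : ℕ) : ℚ)) := by
  by_contra h
  push_neg at h
  set A : ℚ := ((∑ i, r i : ℕ) : ℚ) with hA
  set S : ℚ := (∑ j, (x j : ℚ)) / A with hS
  have hApos : 0 < A := by
    have : 0 < ∑ i, r i := Finset.sum_pos (fun i _ => hr i) (by
      simpa using Finset.univ_nonempty_iff.mpr ⟨⟨0, hn⟩⟩)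
    rw [hA]; exact_mod_cast this
  have hSnn : 0 ≤ S := by
    apply div_nonneg _ hApos.le
    exact Finset.sum_nonneg fun j _ => by positivity
  -- for each i : (2*r i - 1) * S < ∑ j, f j i
  have key : ∀ i : Fin n, (2 * (r i : ℚ) - 1) * S < ∑ j, f j i := by
    intro i
    have hri : (0:ℚ) < (r i : ℚ) := by exact_mod_cast hr i
    have := h i
    rw [lt_div_iff₀ hri] at this
    calc (2 * (r i : ℚ) - 1) * S = (2 - 1 / (r i : ℚ)) * S * (r i : ℚ) := by
          field_simp
      _ < ∑ j, f j i := this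
  have hsum : ∑ i : Fin n, (2 * (r i : ℚ) - 1) * S < ∑ i, ∑ j, f j i :=
    Finset.sum_lt_sum_of_nonempty (Finset.univ_nonempty_iff.mpr ⟨⟨0, hn⟩⟩)
      (fun i _ => key i)
  have hswap : ∑ i : Fin n, ∑ j, f j i = A * S := by
    rw [Finset.sum_comm]
    simp only [hfsum]
    rw [hS]
    field_simp
  have hlhs : ∑ i : Fin n, (2 * (r i : ℚ) - 1) * S = (2 * A - n) * S := by
    rw [← Finset.sum_mul]
    congr 1
    rw [Finset.sum_sub_distrib, ← Finset.mul_sum]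
    simp [hA, Nat.cast_sum]
  rw [hswap, hlhs] at hsum
  have hAn : (n : ℚ) ≤ A := by
    rw [hA]
    have : n ≤ ∑ i, r i := by
      calc n = ∑ _i : Fin n, 1 := by simp
        _ ≤ ∑ i, r i := Finset.sum_le_sum fun i _ => hr i
    exact_mod_cast this
  have : A * S ≤ (2 * A - n) * S := by
    apply mul_le_mul_of_nonneg_right _ hSnn
    linarith
  linarith
end

section
/- Let t ≥ 1 be a rational number. There exists an integral partition of all m jobs among the n machines with makespan at most (1+t)·S if and only if there exists an integral partition of only the jobs of length at least S among the n machines with makespan at most (1+t)·S. (For the nontrivial direction: given such a partition of the long jobs, the jobs of length less than S can be added one by one, always to a machine with completion time at most (2 − 1/r_i)·S, keeping the makespan at most 2S ≤ (1+t)S.) -/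
/-- For rational `t ≥ 1`, there is an integral partition of all jobs with makespan
at most `(1+t)·S` iff there is an integral partition of only the jobs of length at least `S`
with makespan at most `(1+t)·S`. -/
theorem stmt_2 (m n : ℕ) (hn : 0 < n)
    (x : Fin m → ℕ) (hx : ∀ j, 0 < x j)
    (r : Fin n → ℕ) (hr : ∀ i, 0 < r i)
    (S : ℚ) (hS : S = (∑ j, (x j : ℚ)) / ((∑ i, r i : ℕ) : ℚ))
    (t : ℚ) (ht : 1 ≤ t) :
    (∃ P : Fin m → Fin n, ∀ i,
        (∑ j ∈ Finset.univ.filter (fun j => P j = i), (x j : ℚ)) / (r i : ℚ)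
          ≤ (1 + t) * S) ↔
    (∃ P : Fin m → Fin n, ∀ i,
        (∑ j ∈ Finset.univ.filter (fun j => S ≤ (x j : ℚ) ∧ P j = i), (x j : ℚ)) / (r i : ℚ)
          ≤ (1 + t) * S) := by
  have hAnat : 0 < ∑ i, r i := by
    refine Finset.sum_pos (fun i _ => hr i) ?_
    exact Finset.univ_nonempty_iff.mpr (Fin.pos_iff_nonempty.mp hn)
  have hA : (0:ℚ) < ((∑ i, r i : ℕ) : ℚ) := by exact_mod_cast hAnat
  have hS0 : 0 ≤ S := by
    rw [hS]
    apply div_nonneg _ hA.le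
    exact Finset.sum_nonneg fun j _ => by positivity
  have hri : ∀ i, (0:ℚ) < (r i : ℚ) := fun i => by exact_mod_cast hr i
  constructor
  · rintro ⟨P, hP⟩
    refine ⟨P, fun i => ?_⟩
    refine le_trans ?_ (hP i)
    refine div_le_div_of_nonneg_right ?_ (hri i).le
    refine Finset.sum_le_sum_of_subset_of_nonneg ?_ (fun j _ _ => by positivity)
    intro j hj
    simp only [Finset.mem_filter, Finset.mem_univ, true_and] at hj ⊢
    exact hj.2
  · rintro ⟨Q, hQ⟩
    -- total length equals A * S
    have hTot : (∑ j, (x j : ℚ)) = ((∑ i, r i : ℕ) : ℚ) * S := by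
      rw [hS, mul_comm, div_mul_cancel₀ _ hA.ne']
    have hnA : (n : ℚ) ≤ ((∑ i, r i : ℕ) : ℚ) := by
      have : (n : ℕ) ≤ ∑ i, r i := by
        calc n = ∑ _i : Fin n, 1 := by simp
        _ ≤ ∑ i, r i := Finset.sum_le_sum fun i _ => hr i
      exact_mod_cast this
    have key : ∀ U : Finset (Fin m), (∀ j ∈ U, (x j : ℚ) < S) →
        ∃ P : Fin m → Fin n, ∀ i,
          (∑ j ∈ Finset.univ.filter (fun j => (S ≤ (x j : ℚ) ∨ j ∈ U) ∧ P j = i), (x j : ℚ))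
            ≤ (1 + t) * S * (r i : ℚ) := by
      intro U
      induction U using Finset.induction with
      | empty =>
        intro _
        refine ⟨Q, fun i => ?_⟩
        have h := hQ i
        rw [div_le_iff₀ (hri i)] at h
        simpa using h
      | @insert a U ha ih =>
        intro hins
        have hxa : (x a : ℚ) < S := hins a (Finset.mem_insert_self a U)
        obtain ⟨P, hP⟩ := ih (fun j hj => hins j (Finset.mem_insert_of_mem hj))
        set num : Fin n → ℚ := fun i =>
          ∑ j ∈ Finset.univ.filter (fun j => (S ≤ (x j : ℚ) ∨ j ∈ U) ∧ P j = i), (x j : ℚ)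
          with hnum
        have havg : ∃ i0, num i0 ≤ (2 * (r i0 : ℚ) - 1) * S := by
          by_contra hcon
          push_neg at hcon
          have hsum : ∑ i, num i ≤ ((∑ i, r i : ℕ) : ℚ) * S := by
            rw [← hTot]
            have : ∑ i, num i
                = ∑ j ∈ Finset.univ.filter (fun j => S ≤ (x j : ℚ) ∨ j ∈ U), (x j : ℚ) := by
              simp only [hnum]
              rw [← Finset.sum_fiberwise (Finset.univ.filter
                (fun j => S ≤ (x j : ℚ) ∨ j ∈ U)) P (fun j => (x j : ℚ))]
              congr 1
              ext i
              rw [Finset.filter_filter]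
            rw [this]
            refine Finset.sum_le_sum_of_subset_of_nonneg (Finset.filter_subset _ _)
              (fun j _ _ => by positivity)
          have hlt : ∑ i, ((2 * (r i : ℚ) - 1) * S) < ∑ i, num i := by
            refine Finset.sum_lt_sum_of_nonempty ?_ (fun i _ => hcon i)
            exact Finset.univ_nonempty_iff.mpr (Fin.pos_iff_nonempty.mp hn)
          have hsplit : ∑ i, ((2 * (r i : ℚ) - 1) * S)
              = (2 * ((∑ i, r i : ℕ) : ℚ) - n) * S := by
            rw [← Finset.sum_mul]
            congr 1
            push_cast
            rw [Finset.sum_sub_distrib, ← Finset.mul_sum]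
            simp
          rw [hsplit] at hlt
          nlinarith [mul_nonneg (sub_nonneg.mpr hnA) hS0]
        obtain ⟨i0, hi0⟩ := havg
        refine ⟨Function.update P a i0, fun i => ?_⟩
        have hset : ∀ i, Finset.univ.filter
            (fun j => (S ≤ (x j : ℚ) ∨ j ∈ insert a U) ∧ Function.update P a i0 j = i)
            = if i = i0 then insert a (Finset.univ.filter
                (fun j => (S ≤ (x j : ℚ) ∨ j ∈ U) ∧ P j = i))
              else Finset.univ.filter (fun j => (S ≤ (x j : ℚ) ∨ j ∈ U) ∧ P j = i) := by
          intro i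
          ext j
          by_cases hj : j = a
          · subst hj
            simp only [Finset.mem_filter, Finset.mem_univ, true_and, Finset.mem_insert,
              Function.update_self]
            rcases eq_or_ne i i0 with h | h
            · subst h; simp [not_le.mpr hxa, ha]
            · simp [h, Ne.symm h, not_le.mpr hxa, ha]
          · simp only [Finset.mem_filter, Finset.mem_univ, true_and, Finset.mem_insert,
              Function.update_of_ne hj]
            rcases eq_or_ne i i0 with h | h
            · subst h; simp [hj]
            · simp [h, hj]
        rw [hset i]
        rcases eq_or_ne i i0 with h | h
        · subst h
          rw [if_pos rfl, Finset.sum_insert (by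
            simp [not_le.mpr hxa, ha])]
          have hrpos : (1:ℚ) ≤ (r i : ℚ) := by exact_mod_cast hr i
          have := hi0
          nlinarith [mul_nonneg (mul_nonneg (sub_nonneg.mpr ht) hS0) (hri i).le]
        · rw [if_neg h]
          exact hP i
    obtain ⟨P, hP⟩ := key (Finset.univ.filter (fun j => (x j : ℚ) < S)) (by simp)
    refine ⟨P, fun i => ?_⟩
    rw [div_le_iff₀ (hri i)]
    have := hP i
    have hset : Finset.univ.filter (fun j =>
        (S ≤ (x j : ℚ) ∨ j ∈ Finset.univ.filter (fun j => (x j : ℚ) < S)) ∧ P j = i)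
        = Finset.univ.filter (fun j => P j = i) := by
      ext j
      simp [le_or_gt]
    rwa [hset] at this
end

section
/- Let n ≥ 3, let d ≥ n−2 be rational, set t = d·M/S and assume t < 1 and m > n, and set ε = t/(4·A·n²·m²). If some job has length x with 2εAS ≤ x ≤ (t/(n−2) − 2ε)·AS (a 'medium' job), then either there exists a t-feasible integral partition with at most one almost-full machine, or there exists no t-feasible integral partition at all. -/
set_option maxHeartbeats 1000000


open Finset

namespace Stmt5Aux

variable {m n : ℕ}

def load (x : Fin m → ℕ) (P : Fin m → Fin n) (i : Fin n) : ℚ :=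
  ∑ j ∈ Finset.univ.filter (fun j => P j = i), (x j : ℚ)

lemma load_nonneg (x : Fin m → ℕ) (P : Fin m → Fin n) (i : Fin n) : 0 ≤ load x P i :=
  Finset.sum_nonneg fun j _ => by positivity

lemma load_total (x : Fin m → ℕ) (P : Fin m → Fin n) :
    ∑ i, load x P i = ∑ j, (x j : ℚ) :=
  Finset.sum_fiberwise Finset.univ P (fun j => (x j : ℚ))

lemma load_eq_sum_ite (x : Fin m → ℕ) (P : Fin m → Fin n) (i : Fin n) :
    load x P i = ∑ j, if P j = i then (x j : ℚ) else 0 :=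
  Finset.sum_filter _ _

lemma load_update (x : Fin m → ℕ) (P : Fin m → Fin n) (j0 : Fin m) (v i : Fin n) :
    load x (Function.update P j0 v) i =
      load x P i + (if v = i then (x j0 : ℚ) else 0) - (if P j0 = i then (x j0 : ℚ) else 0) := by
  rw [load_eq_sum_ite, load_eq_sum_ite]
  rw [← Finset.add_sum_erase _ (fun j => if Function.update P j0 v j = i then (x j : ℚ) else 0)
      (Finset.mem_univ j0)]
  rw [← Finset.add_sum_erase _ (fun j => if P j = i then (x j : ℚ) else 0)
      (Finset.mem_univ j0)]
  have h1 : ∑ j ∈ Finset.univ.erase j0,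
      (if Function.update P j0 v j = i then (x j : ℚ) else 0)
      = ∑ j ∈ Finset.univ.erase j0, (if P j = i then (x j : ℚ) else 0) :=
    Finset.sum_congr rfl fun j hj => by
      rw [Function.update_of_ne (Finset.mem_erase.mp hj).1]
  rw [h1, Function.update_self]
  ring

noncomputable def phi (x : Fin m → ℕ) (θ : Fin n → ℚ) (P : Fin m → Fin n) : ℚ :=
  (((Finset.univ.filter (fun i => θ i < load x P i)).card : ℚ)) * ((∑ j, (x j : ℚ)) + 1)
    + ∑ i ∈ Finset.univ.filter (fun i => θ i < load x P i), load x P i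

lemma phi_lt (x : Fin m → ℕ) (θ : Fin n → ℚ) (P P' : Fin m → Fin n)
    (hsub : ∀ i, θ i < load x P' i → θ i < load x P i)
    (hle : ∀ i, θ i < load x P' i → load x P' i ≤ load x P i)
    (q : Fin n) (hq : θ q < load x P q) (hq' : load x P' q < load x P q) :
    phi x θ P' < phi x θ P := by
  classical
  set F' := Finset.univ.filter (fun i => θ i < load x P' i) with hF'def
  set F := Finset.univ.filter (fun i => θ i < load x P i) with hFdef
  have hsubF : F' ⊆ F := by
    intro i hi
    rw [hF'def, Finset.mem_filter] at hi
    rw [hFdef, Finset.mem_filter]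
    exact ⟨hi.1, hsub i hi.2⟩
  have hXnn : (0 : ℚ) ≤ ∑ j, (x j : ℚ) := Finset.sum_nonneg fun j _ => by positivity
  have hqF : q ∈ F := by rw [hFdef, Finset.mem_filter]; exact ⟨Finset.mem_univ q, hq⟩
  have hFnn : (0:ℚ) ≤ ∑ i ∈ F, load x P i := Finset.sum_nonneg fun i _ => load_nonneg x P i
  unfold phi
  rw [← hF'def, ← hFdef]
  by_cases hqF' : q ∈ F'
  · have h1 : ∑ i ∈ F', load x P' i < ∑ i ∈ F, load x P i := by
      calc ∑ i ∈ F', load x P' i < ∑ i ∈ F', load x P i := by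
            refine Finset.sum_lt_sum (fun i hi => hle i ?_) ⟨q, hqF', hq'⟩
            rw [hF'def, Finset.mem_filter] at hi; exact hi.2
        _ ≤ ∑ i ∈ F, load x P i :=
            Finset.sum_le_sum_of_subset_of_nonneg hsubF (fun i _ _ => load_nonneg x P i)
    have h2 : (F'.card : ℚ) ≤ (F.card : ℚ) := by
      exact_mod_cast Finset.card_le_card hsubF
    have h3 := mul_le_mul_of_nonneg_right h2 (by linarith : (0:ℚ) ≤ (∑ j, (x j : ℚ)) + 1)
    linarith
  · have hsub2 : F' ⊆ F.erase q := by
      intro i hi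
      exact Finset.mem_erase.mpr ⟨fun h => hqF' (h ▸ hi), hsubF hi⟩
    have hcard1 : 1 ≤ F.card := Finset.card_pos.mpr ⟨q, hqF⟩
    have hcard : F'.card ≤ F.card - 1 := by
      have := Finset.card_le_card hsub2
      rwa [Finset.card_erase_of_mem hqF] at this
    have h2 : (F'.card : ℚ) ≤ (F.card : ℚ) - 1 := by
      have hc : ((F.card - 1 : ℕ) : ℚ) = (F.card : ℚ) - 1 := by
        rw [Nat.cast_sub hcard1]; norm_num
      rw [← hc]; exact_mod_cast hcard
    have h3 : ∑ i ∈ F', load x P' i ≤ ∑ j, (x j : ℚ) := by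
      calc ∑ i ∈ F', load x P' i ≤ ∑ i, load x P' i :=
            Finset.sum_le_sum_of_subset_of_nonneg (Finset.subset_univ F')
              (fun i _ _ => load_nonneg x P' i)
        _ = ∑ j, (x j : ℚ) := load_total x P'
    have h4 := mul_le_mul_of_nonneg_right h2 (by linarith : (0:ℚ) ≤ (∑ j, (x j : ℚ)) + 1)
    linarith

end Stmt5Aux

open Finset Stmt5Aux


/-- Completion time of machine `i` under integral partition `P`. -/
def btime {m n : ℕ} (x : Fin m → ℕ) (r : Fin n → ℕ) (P : Fin m → Fin n) (i : Fin n) : ℚ :=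
  (∑ j ∈ Finset.univ.filter (fun j => P j = i), (x j : ℚ)) / (r i : ℚ)

/-- if the instance contains a medium job, then either some `t`-feasible
partition has at most one almost-full machine, or there is no `t`-feasible partition. -/
theorem stmt_5 (m n : ℕ) (hn : 3 ≤ n) (hm : n < m)
    (x : Fin m → ℕ) (hx : ∀ j, 0 < x j)
    (r : Fin n → ℕ) (hr : ∀ i, 0 < r i)
    (A : ℕ) (hA : A = ∑ i, r i)
    (S M : ℚ) (hS : S = (∑ j, (x j : ℚ)) / (A : ℚ))
    (hM : (A : ℚ) * M = ((Finset.univ.sup x : ℕ) : ℚ))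
    (d : ℚ) (hd : ((n : ℚ) - 2) ≤ d)
    (t : ℚ) (htdef : t = d * M / S) (ht1 : t < 1)
    (ε : ℚ) (hεdef : ε = t / (4 * (A : ℚ) * (n : ℚ) ^ 2 * (m : ℚ) ^ 2))
    (hmed : ∃ j : Fin m,
        2 * ε * (A : ℚ) * S ≤ (x j : ℚ) ∧
        (x j : ℚ) ≤ (t / ((n : ℚ) - 2) - 2 * ε) * (A : ℚ) * S) :
    (∃ P : Fin m → Fin n,
        (∀ i, btime x r P i ≤ (1 + t) * S) ∧
        (Finset.univ.filter (fun i => (1 + t) * S / (1 + ε) < btime x r P i)).card ≤ 1) ∨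
    ¬ ∃ P : Fin m → Fin n, ∀ i, btime x r P i ≤ (1 + t) * S := by
  classical
  by_cases hex : ∃ P : Fin m → Fin n, ∀ i, btime x r P i ≤ (1 + t) * S
  swap
  · exact Or.inr hex
  obtain ⟨P₀, hP₀⟩ := hex
  -- basic numeric facts
  have hm0 : 0 < m := by omega
  have hnQ : (3:ℚ) ≤ (n:ℚ) := by exact_mod_cast hn
  have hmQ : (4:ℚ) ≤ (m:ℚ) := by
    have : 4 ≤ m := by omega
    exact_mod_cast this
  have hrQ : ∀ i, (0:ℚ) < (r i:ℚ) := fun i => by exact_mod_cast hr i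
  have hAQ : (A:ℚ) = ∑ i, (r i:ℚ) := by rw [hA]; push_cast; ring
  have hnA : (n:ℚ) ≤ (A:ℚ) := by
    rw [hAQ]
    calc (n:ℚ) = ∑ _i : Fin n, (1:ℚ) := by simp
      _ ≤ ∑ i, (r i:ℚ) := Finset.sum_le_sum (fun i _ => by exact_mod_cast hr i)
  have hA0 : (0:ℚ) < (A:ℚ) := by linarith
  set X := ∑ j, (x j:ℚ) with hXdef
  have hX0 : 0 < X := Finset.sum_pos (fun j _ => by exact_mod_cast hx j)
    ⟨⟨0, hm0⟩, Finset.mem_univ _⟩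
  have hXAS : X = (A:ℚ) * S := by rw [hS]; field_simp
  have hS0 : 0 < S := by
    rw [hS]; exact div_pos hX0 hA0
  set xhat := ((Finset.univ.sup x : ℕ):ℚ) with hxhatdef
  have hjle : ∀ j, (x j:ℚ) ≤ xhat := by
    intro j
    rw [hxhatdef]
    exact Nat.cast_le.mpr (Finset.le_sup (f := x) (Finset.mem_univ j))
  have hxhat0 : (0:ℚ) < xhat :=
    lt_of_lt_of_le (by exact_mod_cast hx ⟨0, hm0⟩) (hjle ⟨0, hm0⟩)
  have hM0 : 0 < M := by
    by_contra h
    push_neg at h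
    have h2 : (A:ℚ)*M ≤ 0 := mul_nonpos_iff.mpr (Or.inl ⟨le_of_lt hA0, h⟩)
    rw [hM] at h2
    linarith
  have hd1 : (1:ℚ) ≤ d := by linarith
  have ht0 : 0 < t := by
    rw [htdef]; exact div_pos (mul_pos (by linarith) hM0) hS0
  have htX : t * X = d * xhat := by
    have h1 : t * S = d * M := by rw [htdef]; field_simp
    calc t * X = (t*S)*(A:ℚ) := by rw [hXAS]; ring
      _ = d*((A:ℚ)*M) := by rw [h1]; ring
      _ = d * xhat := by rw [hM]
  have hA3 : (3:ℚ) ≤ (A:ℚ) := le_trans hnQ hnA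
  have hn2sq : (9:ℚ) ≤ (n:ℚ)^2 := by nlinarith
  have hm2sq : (16:ℚ) ≤ (m:ℚ)^2 := by nlinarith
  have hD432 : (108:ℚ) ≤ 4*(A:ℚ)*(n:ℚ)^2 := by nlinarith
  have hD12 : (12:ℚ) ≤ 4*(A:ℚ)*(n:ℚ)^2*(m:ℚ)^2 := by nlinarith
  have hε0 : 0 < ε := by
    rw [hεdef]; exact div_pos ht0 (by nlinarith)
  have hεD : ε * (4*(A:ℚ)*(n:ℚ)^2*(m:ℚ)^2) = t := by
    rw [hεdef]; field_simp
  have h2εt : 2*ε < t := by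
    have h12 := mul_le_mul_of_nonneg_left hD12 (le_of_lt hε0)
    linarith [hεD, hε0]
  have hε1 : (0:ℚ) < 1 + ε := by linarith
  -- medium job
  obtain ⟨jm, hm1, hm2⟩ := hmed
  set xs := ((x jm:ℕ):ℚ) with hxsdef
  have hm1' : 2*ε*X ≤ xs := by
    have h : 2*ε*((A:ℚ)*S) = 2*ε*(A:ℚ)*S := by ring
    rw [hXAS, h]; exact hm1
  have hn2pos : (0:ℚ) < (n:ℚ) - 2 := by linarith
  have hm2X : ((n:ℚ)-2)*xs ≤ t*X - 2*ε*X := by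
    have key : ((n:ℚ)-2) * ((t/((n:ℚ)-2) - 2*ε)*(A:ℚ)*S) = t*X - 2*ε*X*((n:ℚ)-2) := by
      rw [hXAS]; field_simp
    have h1 := mul_le_mul_of_nonneg_left hm2 (le_of_lt hn2pos)
    rw [key] at h1
    have h2 : (1:ℚ) ≤ (n:ℚ) - 2 := by linarith
    have h3 : 2*ε*X*(1:ℚ) ≤ 2*ε*X*((n:ℚ)-2) :=
      mul_le_mul_of_nonneg_left h2 (by positivity)
    linarith
  -- thresholds and caps
  set capf : Fin n → ℚ := fun i => (r i:ℚ) * ((1+t)*S) with hcapfdef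
  set θf : Fin n → ℚ := fun i => (r i:ℚ) * ((1+t)*S) / (1+ε) with hθfdef
  have hC0 : (0:ℚ) < (1+t)*S := mul_pos (by linarith) hS0
  have hθcap : ∀ i, θf i ≤ capf i := fun i => by
    rw [hθfdef, hcapfdef]
    exact div_le_self (by positivity) (by linarith)
  have hθ0 : ∀ i, 0 < θf i := fun i => by
    rw [hθfdef]; exact div_pos (mul_pos (hrQ i) hC0) hε1
  have hθsum : ∑ i, θf i = (1+t)*X/(1+ε) := by
    rw [hθfdef]
    rw [← Finset.sum_div, ← Finset.sum_mul, ← hAQ, hXAS]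
    ring
  -- feasibility translation
  have hbt : ∀ (Q : Fin m → Fin n) i, btime x r Q i = load x Q i / (r i:ℚ) := fun Q i => rfl
  have hfeas_iff : ∀ Q : Fin m → Fin n,
      (∀ i, btime x r Q i ≤ (1+t)*S) ↔ (∀ i, load x Q i ≤ capf i) := by
    intro Q
    constructor
    · intro h i
      have := h i
      rw [hbt, div_le_iff₀ (hrQ i)] at this
      rw [hcapfdef]
      calc load x Q i ≤ (1+t)*S*(r i:ℚ) := this
        _ = (r i:ℚ)*((1+t)*S) := by ring
    · intro h i
      rw [hbt, div_le_iff₀ (hrQ i)]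
      calc load x Q i ≤ capf i := h i
        _ = (1+t)*S*(r i:ℚ) := by rw [hcapfdef]; ring
  have halm : ∀ (Q : Fin m → Fin n) i,
      ((1+t)*S/(1+ε) < btime x r Q i) ↔ θf i < load x Q i := by
    intro Q i
    have hθfi : θf i = (1+t)*S/(1+ε)*(r i:ℚ) := by
      show (r i:ℚ) * ((1+t)*S) / (1+ε) = _
      ring
    rw [hbt, lt_div_iff₀ (hrQ i), hθfi]
  -- minimizer
  set Feas : Finset (Fin m → Fin n) :=
    Finset.univ.filter (fun Q => ∀ i, btime x r Q i ≤ (1+t)*S) with hFeasdef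
  have hP₀Feas : P₀ ∈ Feas := by
    rw [hFeasdef, Finset.mem_filter]; exact ⟨Finset.mem_univ _, hP₀⟩
  obtain ⟨P, hPFeas, hPmin⟩ := Finset.exists_min_image Feas (phi x θf) ⟨P₀, hP₀Feas⟩
  have hPfeasbt : ∀ i, btime x r P i ≤ (1+t)*S := by
    rw [hFeasdef, Finset.mem_filter] at hPFeas; exact hPFeas.2
  have hPload : ∀ i, load x P i ≤ capf i := (hfeas_iff P).mp hPfeasbt
  set F := Finset.univ.filter (fun i => θf i < load x P i) with hFdef
  by_cases hk : F.card ≤ 1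
  · left
    refine ⟨P, hPfeasbt, ?_⟩
    have heq : Finset.univ.filter (fun i => (1+t)*S/(1+ε) < btime x r P i) = F := by
      rw [hFdef]
      exact Finset.filter_congr (fun i _ => halm P i)
    rw [heq]; exact hk
  exfalso
  have hk2 : 2 ≤ F.card := by omega
  set NonF := Finset.univ \ F with hNonFdef
  have hmemF : ∀ i, i ∈ F ↔ θf i < load x P i := fun i => by
    rw [hFdef, Finset.mem_filter]; simp
  have hmemNonF : ∀ i, i ∈ NonF ↔ load x P i ≤ θf i := fun i => by
    rw [hNonFdef, Finset.mem_sdiff, hmemF i]; simp [not_lt]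
  obtain ⟨q₀, hq₀F⟩ := Finset.card_pos.mp (by omega : 0 < F.card)
  have hq₀ : θf q₀ < load x P q₀ := (hmemF q₀).mp hq₀F
  -- a job on q₀
  have hq₀ne : (Finset.univ.filter (fun j => P j = q₀)).Nonempty := by
    by_contra h
    rw [Finset.not_nonempty_iff_eq_empty] at h
    have hz : load x P q₀ = 0 := by
      show ∑ j ∈ Finset.univ.filter (fun j => P j = q₀), ((x j:ℕ):ℚ) = 0
      rw [h, Finset.sum_empty]
    rw [hz] at hq₀
    linarith [hθ0 q₀]
  obtain ⟨j₀, hj₀mem⟩ := hq₀ne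
  have hj₀ : P j₀ = q₀ := (Finset.mem_filter.mp hj₀mem).2
  set y₀ := ((x j₀:ℕ):ℚ) with hy₀def
  have hy₀0 : 0 < y₀ := by rw [hy₀def]; exact_mod_cast hx j₀
  have hy₀xhat : y₀ ≤ xhat := hjle j₀
  -- sums over F and NonF
  have hDsum : 0 < ∑ i ∈ F, (load x P i - θf i) := by
    refine Finset.sum_pos (fun i hi => ?_) ⟨q₀, hq₀F⟩
    have := (hmemF i).mp hi; linarith
  have hGid : ∑ v ∈ NonF, (θf v - load x P v)
      = (∑ i, θf i) - X + ∑ i ∈ F, (load x P i - θf i) := by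
    have hsd : ∑ v ∈ NonF, (θf v - load x P v) + ∑ i ∈ F, (θf i - load x P i)
        = ∑ i, (θf i - load x P i) := by
      rw [hNonFdef]; exact Finset.sum_sdiff (Finset.subset_univ F)
    have htot : ∑ i, (θf i - load x P i) = (∑ i, θf i) - X := by
      rw [Finset.sum_sub_distrib, load_total]
    have hneg : ∑ i ∈ F, (θf i - load x P i) = - ∑ i ∈ F, (load x P i - θf i) := by
      rw [← Finset.sum_neg_distrib]
      exact Finset.sum_congr rfl (fun i _ => by ring)
    linarith
  have hθX : (t - 2*ε)*X ≤ (∑ i, θf i) - X := by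
    rw [hθsum]
    have key : (1+t)*X/(1+ε) - X - (t-2*ε)*X = X*(ε*(1-t+2*ε))/(1+ε) := by
      field_simp; ring
    have hnn : (0:ℚ) ≤ X*(ε*(1-t+2*ε))/(1+ε) :=
      div_nonneg (mul_nonneg (le_of_lt hX0)
        (mul_nonneg (le_of_lt hε0) (by linarith : (0:ℚ) ≤ 1-t+2*ε))) (le_of_lt hε1)
    linarith [key]
  have hG_lb : t*X - 2*ε*X < ∑ v ∈ NonF, (θf v - load x P v) := by
    rw [hGid]
    have : (t-2*ε)*X = t*X - 2*ε*X := by ring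
    linarith
  have htX2ε : 0 < t*X - 2*ε*X := by
    have h1 := mul_pos (by linarith : (0:ℚ) < t - 2*ε) hX0
    have h2 : (t-2*ε)*X = t*X - 2*ε*X := by ring
    linarith
  have hNonFne : NonF.Nonempty := by
    by_contra h
    rw [Finset.not_nonempty_iff_eq_empty] at h
    rw [h, Finset.sum_empty] at hG_lb
    linarith
  obtain ⟨w, hwNonF, hwmax⟩ :=
    Finset.exists_max_image NonF (fun v => θf v - load x P v) hNonFne
  have hwload : load x P w ≤ θf w := (hmemNonF w).mp hwNonF
  have hgapw0 : 0 ≤ θf w - load x P w := by linarith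
  -- cards
  have hFn : F.card ≤ n := by
    have := Finset.card_le_card (Finset.subset_univ F)
    simpa using this
  have hNonFcard : NonF.card = n - F.card := by
    rw [hNonFdef, Finset.card_sdiff_of_subset (Finset.subset_univ F)]
    simp
  have hNonFpos : 1 ≤ NonF.card := Finset.card_pos.mpr hNonFne
  have hcastNonF : (NonF.card:ℚ) = (n:ℚ) - (F.card:ℚ) := by
    rw [hNonFcard, Nat.cast_sub hFn]
  have hnkle : (NonF.card:ℚ) ≤ (n:ℚ) - 2 := by
    rw [hcastNonF]
    have : (2:ℚ) ≤ (F.card:ℚ) := by exact_mod_cast hk2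
    linarith
  have hGub : ∑ v ∈ NonF, (θf v - load x P v)
      ≤ (NonF.card:ℚ) * (θf w - load x P w) := by
    have := Finset.sum_le_card_nsmul NonF (fun v => θf v - load x P v)
      (θf w - load x P w) (fun v hv => hwmax v hv)
    simpa [nsmul_eq_mul] using this
  have hF2 : xs ≤ θf w - load x P w := by
    have h1 : (NonF.card:ℚ)*(θf w - load x P w) ≤ ((n:ℚ)-2)*(θf w - load x P w) :=
      mul_le_mul_of_nonneg_right hnkle hgapw0
    have h2 : ((n:ℚ)-2)*xs < ((n:ℚ)-2)*(θf w - load x P w) := by linarith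
    exact le_of_lt ((mul_lt_mul_iff_right₀ hn2pos).mp h2)
  -- Move I : any job on an almost-full machine exceeds every gap
  have hC1 : ∀ (jy : Fin m), θf (P jy) < load x P (P jy) →
      ∀ v ∈ NonF, θf v - load x P v < ((x jy:ℕ):ℚ) := by
    intro jy hq v hv
    by_contra hcon
    push_neg at hcon
    have hvload : load x P v ≤ θf v := (hmemNonF v).mp hv
    have hqv : P jy ≠ v := by intro h; rw [h] at hq; linarith
    set P' := Function.update P jy v with hP'def
    have hLv : load x P' v = load x P v + ((x jy:ℕ):ℚ) := by
      rw [hP'def, load_update]; simp [hqv]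
    have hLq : load x P' (P jy) = load x P (P jy) - ((x jy:ℕ):ℚ) := by
      rw [hP'def, load_update]; simp [Ne.symm hqv]
    have hLo : ∀ i, i ≠ v → i ≠ P jy → load x P' i = load x P i := by
      intro i h1 h2
      rw [hP'def, load_update]; simp [Ne.symm h1, Ne.symm h2]
    have hxy0 : (0:ℚ) < ((x jy:ℕ):ℚ) := by exact_mod_cast hx jy
    have hfeas' : ∀ i, load x P' i ≤ capf i := by
      intro i
      rcases eq_or_ne i v with rfl | hiv
      · rw [hLv]; calc load x P i + ((x jy:ℕ):ℚ) ≤ θf i := by linarith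
          _ ≤ capf i := hθcap i
      rcases eq_or_ne i (P jy) with rfl | hiq
      · rw [hLq]; linarith [hPload (P jy)]
      · rw [hLo i hiv hiq]; exact hPload i
    have hP'Feas : P' ∈ Feas := by
      rw [hFeasdef, Finset.mem_filter]
      exact ⟨Finset.mem_univ _, (hfeas_iff P').mpr hfeas'⟩
    have hphilt : phi x θf P' < phi x θf P := by
      refine phi_lt x θf P P' ?_ ?_ (P jy) hq ?_
      · intro i hi
        rcases eq_or_ne i v with rfl | hiv
        · rw [hLv] at hi; linarith
        rcases eq_or_ne i (P jy) with rfl | hiq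
        · rw [hLq] at hi; linarith
        · rw [hLo i hiv hiq] at hi; exact hi
      · intro i hi
        rcases eq_or_ne i v with rfl | hiv
        · rw [hLv] at hi; linarith
        rcases eq_or_ne i (P jy) with rfl | hiq
        · rw [hLq]; linarith
        · rw [hLo i hiv hiq]
      · rw [hLq]; linarith
    exact absurd (hPmin P' hP'Feas) (not_le.mpr hphilt)
  -- medium job sits on a non-almost-full machine
  have hvstarNonF : P jm ∈ NonF := by
    rw [hmemNonF]
    by_contra h
    push_neg at h
    have := hC1 jm h w hwNonF
    rw [← hxsdef] at this
    linarith
  have hvsload : load x P (P jm) ≤ θf (P jm) := (hmemNonF (P jm)).mp hvstarNonF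
  have hq₀vs : q₀ ≠ P jm := by
    intro h; rw [← h] at hvsload; linarith
  have hjmj₀ : j₀ ≠ jm := by
    intro h; apply hq₀vs; rw [← hj₀, h]
  have hq₀w : q₀ ≠ w := by
    intro h; rw [h] at hq₀; linarith
  have hy₀gapw : θf w - load x P w < y₀ := by
    have := hC1 j₀ (by rw [hj₀]; exact hq₀) w hwNonF
    rw [← hy₀def] at this; exact this
  have hy₀xs : xs < y₀ := by linarith
  -- Move II : swap bound at the medium machine
  have hC2 : θf (P jm) - load x P (P jm) < y₀ - xs := by
    by_contra hcon
    push_neg at hcon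
    by_cases hvw : P jm = w
    · -- swap j₀ to w and jm to q₀
      set P1 := Function.update P jm q₀ with hP1def
      set P'' := Function.update P1 j₀ w with hP''def
      have hL1 : ∀ i, load x P1 i = load x P i
          + (if q₀ = i then xs else 0) - (if w = i then xs else 0) := by
        intro i; rw [hP1def, load_update, ← hxsdef, hvw]
      have hP1j₀ : P1 j₀ = q₀ := by
        rw [hP1def, Function.update_of_ne hjmj₀, hj₀]
      have hL2 : ∀ i, load x P'' i = load x P1 i
          + (if w = i then y₀ else 0) - (if q₀ = i then y₀ else 0) := by
        intro i; rw [hP''def, load_update, ← hy₀def, hP1j₀]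
      have hLq : load x P'' q₀ = load x P q₀ + xs - y₀ := by
        rw [hL2, hL1]; simp [hq₀w, Ne.symm hq₀w]
      have hLw : load x P'' w = load x P w - xs + y₀ := by
        rw [hL2, hL1]; simp [hq₀w, Ne.symm hq₀w]
      have hLo : ∀ i, i ≠ q₀ → i ≠ w → load x P'' i = load x P i := by
        intro i h1 h2
        rw [hL2, hL1]; simp [Ne.symm h1, Ne.symm h2]
      have hgapcon : y₀ - xs ≤ θf w - load x P w := by rw [← hvw]; exact hcon
      have hfeas' : ∀ i, load x P'' i ≤ capf i := by
        intro i
        rcases eq_or_ne i q₀ with rfl | h1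
        · rw [hLq]; linarith [hPload i]
        rcases eq_or_ne i w with rfl | h2
        · rw [hLw]; linarith [hθcap i, hgapcon]
        · rw [hLo i h1 h2]; exact hPload i
      have hP''Feas : P'' ∈ Feas := by
        rw [hFeasdef, Finset.mem_filter]
        exact ⟨Finset.mem_univ _, (hfeas_iff P'').mpr hfeas'⟩
      have hphilt : phi x θf P'' < phi x θf P := by
        refine phi_lt x θf P P'' ?_ ?_ q₀ hq₀ ?_
        · intro i hi
          rcases eq_or_ne i q₀ with rfl | h1
          · rw [hLq] at hi; linarith
          rcases eq_or_ne i w with rfl | h2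
          · rw [hLw] at hi; linarith
          · rw [hLo i h1 h2] at hi; exact hi
        · intro i hi
          rcases eq_or_ne i q₀ with rfl | h1
          · rw [hLq]; linarith
          rcases eq_or_ne i w with rfl | h2
          · rw [hLw] at hi; linarith
          · rw [hLo i h1 h2]
        · rw [hLq]; linarith
      exact absurd (hPmin P'' hP''Feas) (not_le.mpr hphilt)
    · -- move jm to w, j₀ to P jm
      have hvq : P jm ≠ q₀ := Ne.symm hq₀vs
      have hvwne : P jm ≠ w := hvw
      have hwq : w ≠ q₀ := Ne.symm hq₀w
      set P1 := Function.update P jm w with hP1def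
      set P'' := Function.update P1 j₀ (P jm) with hP''def
      have hL1 : ∀ i, load x P1 i = load x P i
          + (if w = i then xs else 0) - (if P jm = i then xs else 0) := by
        intro i; rw [hP1def, load_update, ← hxsdef]
      have hP1j₀ : P1 j₀ = q₀ := by
        rw [hP1def, Function.update_of_ne hjmj₀, hj₀]
      have hL2 : ∀ i, load x P'' i = load x P1 i
          + (if P jm = i then y₀ else 0) - (if q₀ = i then y₀ else 0) := by
        intro i; rw [hP''def, load_update, ← hy₀def, hP1j₀]
      have hLq : load x P'' q₀ = load x P q₀ - y₀ := by
        rw [hL2, hL1]; simp [hvq, hwq]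
      have hLw : load x P'' w = load x P w + xs := by
        rw [hL2, hL1]; simp [hvwne, hwq, Ne.symm hwq]
      have hLvs : load x P'' (P jm) = load x P (P jm) - xs + y₀ := by
        rw [hL2, hL1]; simp [Ne.symm hvwne, hq₀vs, Ne.symm hq₀vs]
      have hLo : ∀ i, i ≠ q₀ → i ≠ w → i ≠ P jm → load x P'' i = load x P i := by
        intro i h1 h2 h3
        rw [hL2, hL1]; simp [Ne.symm h1, Ne.symm h2, Ne.symm h3]
      have hfeas' : ∀ i, load x P'' i ≤ capf i := by
        intro i
        rcases eq_or_ne i q₀ with rfl | h1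
        · rw [hLq]; linarith [hPload i]
        rcases eq_or_ne i w with rfl | h2
        · rw [hLw]; linarith [hθcap i, hF2]
        rcases eq_or_ne i (P jm) with rfl | h3
        · rw [hLvs]; linarith [hθcap (P jm), hcon]
        · rw [hLo i h1 h2 h3]; exact hPload i
      have hP''Feas : P'' ∈ Feas := by
        rw [hFeasdef, Finset.mem_filter]
        exact ⟨Finset.mem_univ _, (hfeas_iff P'').mpr hfeas'⟩
      have hphilt : phi x θf P'' < phi x θf P := by
        refine phi_lt x θf P P'' ?_ ?_ q₀ hq₀ ?_
        · intro i hi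
          rcases eq_or_ne i q₀ with rfl | h1
          · rw [hLq] at hi; linarith
          rcases eq_or_ne i w with rfl | h2
          · rw [hLw] at hi; linarith
          rcases eq_or_ne i (P jm) with rfl | h3
          · rw [hLvs] at hi; linarith
          · rw [hLo i h1 h2 h3] at hi; exact hi
        · intro i hi
          rcases eq_or_ne i q₀ with rfl | h1
          · rw [hLq]; linarith
          rcases eq_or_ne i w with rfl | h2
          · rw [hLw] at hi; linarith
          rcases eq_or_ne i (P jm) with rfl | h3
          · rw [hLvs] at hi; linarith
          · rw [hLo i h1 h2 h3]
        · rw [hLq]; linarith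
      exact absurd (hPmin P'' hP''Feas) (not_le.mpr hphilt)
  -- final counting
  have herase : ∑ v ∈ NonF.erase (P jm), (θf v - load x P v)
      ≤ ((NonF.card:ℚ) - 1) * xhat := by
    have h1 : ∀ v ∈ NonF.erase (P jm), θf v - load x P v ≤ xhat := by
      intro v hv
      have hvNF : v ∈ NonF := Finset.mem_of_mem_erase hv
      have := hC1 j₀ (by rw [hj₀]; exact hq₀) v hvNF
      rw [← hy₀def] at this
      linarith
    have h2 := Finset.sum_le_card_nsmul _ _ _ h1
    have hcarde : (NonF.erase (P jm)).card = NonF.card - 1 :=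
      Finset.card_erase_of_mem hvstarNonF
    rw [hcarde] at h2
    have hcast : ((NonF.card - 1:ℕ):ℚ) = (NonF.card:ℚ) - 1 := by
      rw [Nat.cast_sub hNonFpos]; norm_num
    calc ∑ v ∈ NonF.erase (P jm), (θf v - load x P v)
        ≤ ((NonF.card - 1:ℕ):ℚ) * xhat := by simpa [nsmul_eq_mul] using h2
      _ = ((NonF.card:ℚ) - 1) * xhat := by rw [hcast]
  have hGsplit : ∑ v ∈ NonF, (θf v - load x P v)
      = (θf (P jm) - load x P (P jm)) + ∑ v ∈ NonF.erase (P jm), (θf v - load x P v) :=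
    (Finset.add_sum_erase NonF _ hvstarNonF).symm
  have hfinal : t*X - 2*ε*X < (NonF.card:ℚ)*xhat - 2*ε*X := by
    calc t*X - 2*ε*X < ∑ v ∈ NonF, (θf v - load x P v) := hG_lb
      _ = (θf (P jm) - load x P (P jm)) + ∑ v ∈ NonF.erase (P jm), (θf v - load x P v) :=
          hGsplit
      _ < (y₀ - xs) + ((NonF.card:ℚ) - 1) * xhat := by linarith
      _ ≤ (xhat - 2*ε*X) + ((NonF.card:ℚ) - 1) * xhat := by linarith
      _ = (NonF.card:ℚ)*xhat - 2*ε*X := by ring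
  have hup : (NonF.card:ℚ)*xhat ≤ ((n:ℚ)-2)*xhat :=
    mul_le_mul_of_nonneg_right hnkle (le_of_lt hxhat0)
  have hdown : ((n:ℚ)-2)*xhat ≤ t*X := by
    rw [htX]; exact mul_le_mul_of_nonneg_right hd (le_of_lt hxhat0)
  linarith
end

section
/- Let n ≥ 3, let d ≥ n−2 be rational, set t = d·M/S and assume t < 1 and m > n, and set ε = t/(4·A·n²·m²). If there exists a t-feasible integral partition with at least two almost-full machines, then there exists a t-feasible integral partition with exactly two almost-full machines. -/
set_option maxHeartbeats 2000000 in
/-- if there exists a `t`-feasible partition with at least two almost-full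
machines, then there exists a `t`-feasible partition with exactly two almost-full machines. -/
theorem stmt_7 (m n : ℕ) (hn : 3 ≤ n) (hm : n < m)
    (x : Fin m → ℕ) (hx : ∀ j, 0 < x j)
    (r : Fin n → ℕ) (hr : ∀ i, 0 < r i)
    (A : ℕ) (hA : A = ∑ i, r i)
    (S M : ℚ) (hS : S = (∑ j, (x j : ℚ)) / (A : ℚ))
    (hM : (A : ℚ) * M = ((Finset.univ.sup x : ℕ) : ℚ))
    (d : ℚ) (hd : ((n : ℚ) - 2) ≤ d)
    (t : ℚ) (htdef : t = d * M / S) (ht1 : t < 1)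
    (ε : ℚ) (hεdef : ε = t / (4 * (A : ℚ) * (n : ℚ) ^ 2 * (m : ℚ) ^ 2))
    (h2 : ∃ P : Fin m → Fin n,
        (∀ i, btime x r P i ≤ (1 + t) * S) ∧
        2 ≤ (Finset.univ.filter (fun i => (1 + t) * S / (1 + ε) < btime x r P i)).card) :
    ∃ P : Fin m → Fin n,
      (∀ i, btime x r P i ≤ (1 + t) * S) ∧
      (Finset.univ.filter (fun i => (1 + t) * S / (1 + ε) < btime x r P i)).card = 2 := by
  classical
  obtain ⟨P0, hP0feas, hP0card⟩ := h2
  -- basic positivity facts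
  have hn0 : 0 < n := by omega
  have hm0 : 0 < m := by omega
  have hAn : n ≤ A := by
    subst hA
    calc n = ∑ _i : Fin n, 1 := by simp
    _ ≤ ∑ i, r i := Finset.sum_le_sum fun i _ => hr i
  have hA0 : 0 < A := lt_of_lt_of_le hn0 hAn
  have hAq : (0:ℚ) < (A:ℚ) := by exact_mod_cast hA0
  have hn3q : (3:ℚ) ≤ (n:ℚ) := by exact_mod_cast hn
  have hA3q : (3:ℚ) ≤ (A:ℚ) := by exact_mod_cast le_trans hn hAn
  have hm4q : (4:ℚ) ≤ (m:ℚ) := by exact_mod_cast (by omega : 4 ≤ m)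
  have hAsum : (A:ℚ) = ∑ i, (r i : ℚ) := by rw [hA]; push_cast; ring
  have hrq : ∀ i, (0:ℚ) < (r i : ℚ) := fun i => by exact_mod_cast hr i
  have hxq : ∀ j, (1:ℚ) ≤ (x j : ℚ) := fun j => by exact_mod_cast hx j
  have hxsum_pos : (0:ℚ) < ∑ j, (x j : ℚ) := by
    have : (0:ℚ) < (x ⟨0, hm0⟩ : ℚ) := lt_of_lt_of_le one_pos (hxq _)
    exact Finset.sum_pos (fun j _ => lt_of_lt_of_le one_pos (hxq j)) ⟨⟨0, hm0⟩, Finset.mem_univ _⟩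
  have hS0 : 0 < S := by rw [hS]; exact div_pos hxsum_pos hAq
  have hAS : (A:ℚ) * S = ∑ j, (x j : ℚ) := by
    rw [hS]; field_simp
  -- the maximal job size
  set Xn : ℕ := Finset.univ.sup x with hXn
  have hXle : ∀ j, (x j : ℚ) ≤ (Xn : ℚ) := fun j => by
    exact_mod_cast Finset.le_sup (Finset.mem_univ j)
  have hXpos : (0:ℚ) < (Xn : ℚ) := lt_of_lt_of_le one_pos (le_trans (hxq ⟨0, hm0⟩) (hXle ⟨0, hm0⟩))
  have hM0 : 0 < M := by
    have : (0:ℚ) < (A:ℚ) * M := by rw [hM]; exact hXpos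
    nlinarith
  have hd0 : (0:ℚ) < d := lt_of_lt_of_le (by linarith) hd
  have ht0 : 0 < t := by rw [htdef]; positivity
  have hε0 : 0 < ε := by rw [hεdef]; positivity
  have h1ε : (0:ℚ) < 1 + ε := by linarith
  have h1t : (0:ℚ) < 1 + t := by linarith
  set thr : ℚ := (1 + t) * S / (1 + ε) with hthr_def
  have hthr0 : 0 < thr := by rw [hthr_def]; positivity
  have hthrle : thr ≤ (1 + t) * S := by
    rw [hthr_def]
    exact div_le_self (by positivity) (by linarith)
  -- bound on the maximal job size
  have hXbound : (Xn : ℚ) ≤ (A:ℚ) * t * S / ((n:ℚ) - 2) := by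
    have hMeq : M = t * S / d := by
      rw [htdef]; field_simp
    have hXeq : (Xn : ℚ) = (A:ℚ) * t * S / d := by
      rw [← hM, hMeq]; ring
    rw [hXeq]
    have h2n : (0:ℚ) < (n:ℚ) - 2 := by linarith
    exact div_le_div_of_nonneg_left (by positivity) h2n hd
  -- the key strict inequality
  have hmain : ((n:ℚ) - 3) * ((A:ℚ) * t * S / ((n:ℚ) - 2)) < (A:ℚ) * thr - (A:ℚ) * S := by
    have h2n : (0:ℚ) < (n:ℚ) - 2 := by linarith
    have hεt : ε * (4 * (A:ℚ) * (n:ℚ) ^ 2 * (m:ℚ) ^ 2) = t := by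
      rw [hεdef]; field_simp
    have hm2 : (16:ℚ) ≤ (m:ℚ) ^ 2 := by nlinarith
    have hD : (192:ℚ) * (n:ℚ) ^ 2 ≤ 4 * (A:ℚ) * (n:ℚ) ^ 2 * (m:ℚ) ^ 2 := by
      have h1 : (48:ℚ) ≤ (A:ℚ) * (m:ℚ) ^ 2 := by
        have := mul_le_mul hA3q hm2 (by norm_num) (by linarith)
        linarith
      have h2 : (0:ℚ) ≤ ((A:ℚ) * (m:ℚ) ^ 2 - 48) * (n:ℚ) ^ 2 :=
        mul_nonneg (by linarith) (sq_nonneg _)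
      nlinarith [h2]
    have hscal : (n:ℚ) - 2 + t * ((n:ℚ) - 3) < 4 * (A:ℚ) * (n:ℚ) ^ 2 * (m:ℚ) ^ 2 := by
      have h1 : t * ((n:ℚ) - 3) ≤ (n:ℚ) - 3 := by nlinarith
      have h2 : 3 * (n:ℚ) ≤ (n:ℚ) ^ 2 := by nlinarith
      linarith
    have hεprod : ε * ((n:ℚ) - 2 + t * ((n:ℚ) - 3)) < t := by
      calc ε * ((n:ℚ) - 2 + t * ((n:ℚ) - 3)) < ε * (4 * (A:ℚ) * (n:ℚ) ^ 2 * (m:ℚ) ^ 2) :=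
            mul_lt_mul_of_pos_left hscal hε0
      _ = t := hεt
    have h1 : ((n:ℚ) - 3) * t * (1 + ε) < (t - ε) * ((n:ℚ) - 2) := by nlinarith
    have e1 : (A:ℚ) * thr - (A:ℚ) * S = (A:ℚ) * S * (t - ε) / (1 + ε) := by
      rw [hthr_def]; field_simp; ring
    have e2 : ((n:ℚ) - 3) * ((A:ℚ) * t * S / ((n:ℚ) - 2))
        = (A:ℚ) * S * t * ((n:ℚ) - 3) / ((n:ℚ) - 2) := by ring
    rw [e1, e2, div_lt_div_iff₀ h2n h1ε]
    nlinarith [mul_lt_mul_of_pos_left h1 (mul_pos hAq hS0)]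
  -- one step: if at least 3 machines are almost-full, we can move one job to reduce
  have move : ∀ P : Fin m → Fin n,
      (∀ i, btime x r P i ≤ (1 + t) * S) →
      3 ≤ (Finset.univ.filter (fun i => thr < btime x r P i)).card →
      ∃ P' : Fin m → Fin n,
        (∀ i, btime x r P' i ≤ (1 + t) * S) ∧
        2 ≤ (Finset.univ.filter (fun i => thr < btime x r P' i)).card ∧
        (∑ j ∈ Finset.univ.filter (fun j => thr < btime x r P' (P' j)), x j)
          < (∑ j ∈ Finset.univ.filter (fun j => thr < btime x r P (P j)), x j) := by
    intro P hfeas hcard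
    set L : Fin n → ℚ := fun i => ∑ j ∈ Finset.univ.filter (fun j => P j = i), (x j : ℚ) with hL
    have hbt : ∀ i, btime x r P i = L i / (r i : ℚ) := fun i => rfl
    have hLsum : ∑ i, L i = (A:ℚ) * S := by
      rw [hAS, hL]
      exact Finset.sum_fiberwise Finset.univ P (fun j => (x j : ℚ))
    -- find an almost-full machine `f` with a job `j0` on it
    have hFne : (Finset.univ.filter (fun i => thr < btime x r P i)).Nonempty := by
      rw [← Finset.card_pos]; omega
    obtain ⟨f, hfmem⟩ := hFne
    have hf_full : thr < btime x r P f := (Finset.mem_filter.mp hfmem).2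
    have hLf_pos : 0 < L f := by
      have h1 : 0 < L f / (r f : ℚ) := lt_trans hthr0 (by rw [← hbt]; exact hf_full)
      have h2 := mul_pos h1 (hrq f)
      rwa [div_mul_cancel₀ _ (ne_of_gt (hrq f))] at h2
    have hjob : ∃ j0, P j0 = f := by
      by_contra hcon
      push_neg at hcon
      have : L f = 0 := by
        rw [hL]
        simp only
        rw [Finset.filter_false_of_mem (fun j _ => hcon j), Finset.sum_empty]
      linarith
    obtain ⟨j0, hj0⟩ := hjob
    -- find a machine that is not almost-full with lots of spare capacity
    have hi0 : ∃ i0, ¬ (thr < btime x r P i0) ∧ L i0 + (Xn : ℚ) < (r i0 : ℚ) * thr := by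
      by_contra hcon
      push_neg at hcon
      -- sum analysis
      have hsplit : ∑ i, ((r i : ℚ) * thr - L i) = (A:ℚ) * thr - (A:ℚ) * S := by
        rw [Finset.sum_sub_distrib, ← Finset.sum_mul, ← hAsum, hLsum]
      have hsplit2 : ∑ i, ((r i : ℚ) * thr - L i)
          = (∑ i ∈ Finset.univ.filter (fun i => thr < btime x r P i), ((r i : ℚ) * thr - L i))
          + (∑ i ∈ Finset.univ.filter (fun i => ¬ thr < btime x r P i), ((r i : ℚ) * thr - L i)) :=
        (Finset.sum_filter_add_sum_filter_not _ _ _).symm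
      have hfull_le : (∑ i ∈ Finset.univ.filter (fun i => thr < btime x r P i),
          ((r i : ℚ) * thr - L i)) ≤ 0 := by
        apply Finset.sum_nonpos
        intro i hi
        have hi' : thr < L i / (r i : ℚ) := by rw [← hbt]; exact (Finset.mem_filter.mp hi).2
        have h2 : thr * (r i : ℚ) < L i := (lt_div_iff₀ (hrq i)).mp hi'
        nlinarith
      have hnf_le : (∑ i ∈ Finset.univ.filter (fun i => ¬ thr < btime x r P i),
            ((r i : ℚ) * thr - L i))
          ≤ ((Finset.univ.filter (fun i => ¬ thr < btime x r P i)).card : ℚ) * (Xn : ℚ) := by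
        calc (∑ i ∈ Finset.univ.filter (fun i => ¬ thr < btime x r P i), ((r i : ℚ) * thr - L i))
            ≤ ∑ _i ∈ Finset.univ.filter (fun i => ¬ thr < btime x r P i), (Xn : ℚ) := by
              apply Finset.sum_le_sum
              intro i hi
              have := hcon i (not_lt.mp (Finset.mem_filter.mp hi).2)
              linarith
        _ = ((Finset.univ.filter (fun i => ¬ thr < btime x r P i)).card : ℚ) * (Xn : ℚ) := by
              rw [Finset.sum_const, nsmul_eq_mul]
      have hcard_nf : ((Finset.univ.filter (fun i => ¬ thr < btime x r P i)).card : ℚ)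
          ≤ (n:ℚ) - 3 := by
        have h1 : (Finset.univ.filter (fun i => thr < btime x r P i)).card
            + (Finset.univ.filter (fun i => ¬ thr < btime x r P i)).card = n := by
          rw [Finset.card_filter_add_card_filter_not]
          simp
        have h2 : (Finset.univ.filter (fun i => ¬ thr < btime x r P i)).card ≤ n - 3 := by omega
        have h3 : ((Finset.univ.filter (fun i => ¬ thr < btime x r P i)).card : ℚ)
            ≤ ((n - 3 : ℕ) : ℚ) := by exact_mod_cast h2
        calc ((Finset.univ.filter (fun i => ¬ thr < btime x r P i)).card : ℚ)
            ≤ ((n - 3 : ℕ) : ℚ) := h3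
        _ ≤ (n:ℚ) - 3 := by
              push_cast [Nat.cast_sub (by omega : 3 ≤ n)]
              linarith
      have hchain : (A:ℚ) * thr - (A:ℚ) * S
          ≤ ((n:ℚ) - 3) * ((A:ℚ) * t * S / ((n:ℚ) - 2)) := by
        calc (A:ℚ) * thr - (A:ℚ) * S
            = ∑ i, ((r i : ℚ) * thr - L i) := hsplit.symm
        _ ≤ ((Finset.univ.filter (fun i => ¬ thr < btime x r P i)).card : ℚ) * (Xn : ℚ) := by
              rw [hsplit2]; linarith
        _ ≤ ((n:ℚ) - 3) * (Xn : ℚ) :=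
              mul_le_mul_of_nonneg_right hcard_nf (le_of_lt hXpos)
        _ ≤ ((n:ℚ) - 3) * ((A:ℚ) * t * S / ((n:ℚ) - 2)) :=
              mul_le_mul_of_nonneg_left hXbound (by linarith)
      linarith
    obtain ⟨i0, hi0nf, hi0cap⟩ := hi0
    have hfi0 : f ≠ i0 := by
      intro h
      exact hi0nf (h ▸ hf_full)
    -- the new partition
    set P' : Fin m → Fin n := fun j => if j = j0 then i0 else P j with hP'def
    have hP'j0 : P' j0 = i0 := by simp [hP'def]
    have hP'ne : ∀ j, j ≠ j0 → P' j = P j := fun j hj => by simp [hP'def, hj]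
    -- filters
    have hj0mem : j0 ∈ Finset.univ.filter (fun j => P j = f) := by
      simp [hj0]
    have hj0notin : j0 ∉ Finset.univ.filter (fun j => P j = i0) := by
      simp [hj0, hfi0]
    have hfil_i0 : Finset.univ.filter (fun j => P' j = i0)
        = insert j0 (Finset.univ.filter (fun j => P j = i0)) := by
      ext j
      by_cases hjj : j = j0
      · subst hjj; simp [hP'j0]
      · simp [hP'ne j hjj, hjj]
    have hfil_f : Finset.univ.filter (fun j => P' j = f)
        = (Finset.univ.filter (fun j => P j = f)).erase j0 := by
      ext j
      by_cases hjj : j = j0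
      · subst hjj; simp [hP'j0, hfi0.symm, Ne.symm hfi0]
      · simp [hP'ne j hjj, hjj]
    have hfil_other : ∀ i, i ≠ i0 → i ≠ f →
        Finset.univ.filter (fun j => P' j = i) = Finset.univ.filter (fun j => P j = i) := by
      intro i hii0 hif
      ext j
      by_cases hjj : j = j0
      · subst hjj
        simp [hP'j0, Ne.symm hii0, hj0, Ne.symm hif]
      · simp [hP'ne j hjj]
    -- new btime values
    have hbt'_i0 : btime x r P' i0 = (L i0 + (x j0 : ℚ)) / (r i0 : ℚ) := by
      simp only [btime, hfil_i0]
      rw [Finset.sum_insert hj0notin]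
      rw [hL]
      ring_nf
    have hbt'_f : btime x r P' f = (L f - (x j0 : ℚ)) / (r f : ℚ) := by
      simp only [btime, hfil_f]
      rw [Finset.sum_erase_eq_sub hj0mem, hL]
    have hbt'_other : ∀ i, i ≠ i0 → i ≠ f → btime x r P' i = btime x r P i := by
      intro i h1 h2
      simp only [btime, hfil_other i h1 h2]
    -- feasibility of P'
    have hi0_new_lt : btime x r P' i0 < thr := by
      rw [hbt'_i0, div_lt_iff₀ (hrq i0)]
      have := hXle j0
      nlinarith
    have hfeas' : ∀ i, btime x r P' i ≤ (1 + t) * S := by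
      intro i
      by_cases h1 : i = i0
      · subst h1
        exact le_trans (le_of_lt hi0_new_lt) hthrle
      by_cases h2 : i = f
      · rw [h2, hbt'_f]
        refine le_trans ?_ (hfeas f)
        rw [hbt f]
        apply (div_le_div_iff_of_pos_right (hrq f)).mpr
        have := hxq j0
        linarith
      · rw [hbt'_other i h1 h2]; exact hfeas i
    -- almost-full machines of P'
    have hfull'_sub : ∀ i, thr < btime x r P' i → thr < btime x r P i := by
      intro i hi
      by_cases h1 : i = i0
      · subst h1; exact absurd hi (not_lt_of_gt hi0_new_lt)
      by_cases h2 : i = f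
      · subst h2; exact hf_full
      · rw [hbt'_other i h1 h2] at hi; exact hi
    have hfull'_i0 : ¬ thr < btime x r P' i0 := not_lt_of_gt hi0_new_lt
    have hcard' : 2 ≤ (Finset.univ.filter (fun i => thr < btime x r P' i)).card := by
      have hsub : (Finset.univ.filter (fun i => thr < btime x r P i))
          ⊆ insert f (Finset.univ.filter (fun i => thr < btime x r P' i)) := by
        intro i hi
        have hi' : thr < btime x r P i := (Finset.mem_filter.mp hi).2
        by_cases h2 : i = f
        · subst h2; exact Finset.mem_insert_self _ _
        · apply Finset.mem_insert_of_mem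
          have h1 : i ≠ i0 := by
            intro h
            exact hi0nf (h ▸ hi')
          rw [Finset.mem_filter]
          exact ⟨Finset.mem_univ _, by rw [hbt'_other i h1 h2]; exact hi'⟩
      have := Finset.card_le_card hsub
      have := Finset.card_insert_le f (Finset.univ.filter (fun i => thr < btime x r P' i))
      omega
    -- the measure decreases
    have hmeas : (∑ j ∈ Finset.univ.filter (fun j => thr < btime x r P' (P' j)), x j)
        < (∑ j ∈ Finset.univ.filter (fun j => thr < btime x r P (P j)), x j) := by
      have hj0mem' : j0 ∈ Finset.univ.filter (fun j => thr < btime x r P (P j)) := by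
        simp only [Finset.mem_filter, Finset.mem_univ, true_and, hj0]
        exact hf_full
      have hsub : Finset.univ.filter (fun j => thr < btime x r P' (P' j))
          ⊆ (Finset.univ.filter (fun j => thr < btime x r P (P j))).erase j0 := by
        intro j hj
        have hj' : thr < btime x r P' (P' j) := (Finset.mem_filter.mp hj).2
        have hjne : j ≠ j0 := by
          intro h
          subst h
          rw [hP'j0] at hj'
          exact hfull'_i0 hj'
        rw [Finset.mem_erase]
        refine ⟨hjne, ?_⟩
        rw [Finset.mem_filter]
        rw [hP'ne j hjne] at hj'
        exact ⟨Finset.mem_univ _, hfull'_sub _ hj'⟩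
      have h1 : (∑ j ∈ Finset.univ.filter (fun j => thr < btime x r P' (P' j)), x j)
          ≤ ∑ j ∈ (Finset.univ.filter (fun j => thr < btime x r P (P j))).erase j0, x j :=
        Finset.sum_le_sum_of_subset hsub
      have h2 : x j0 + (∑ j ∈ (Finset.univ.filter (fun j => thr < btime x r P (P j))).erase j0, x j)
          = ∑ j ∈ Finset.univ.filter (fun j => thr < btime x r P (P j)), x j :=
        Finset.add_sum_erase _ _ hj0mem'
      have := hx j0
      omega
    exact ⟨P', hfeas', hcard', hmeas⟩
  -- induction on the total size of jobs on almost-full machines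
  have key : ∀ (N : ℕ) (P : Fin m → Fin n),
      (∑ j ∈ Finset.univ.filter (fun j => thr < btime x r P (P j)), x j) ≤ N →
      (∀ i, btime x r P i ≤ (1 + t) * S) →
      2 ≤ (Finset.univ.filter (fun i => thr < btime x r P i)).card →
      ∃ P' : Fin m → Fin n,
        (∀ i, btime x r P' i ≤ (1 + t) * S) ∧
        (Finset.univ.filter (fun i => thr < btime x r P' i)).card = 2 := by
    intro N
    induction N with
    | zero =>
      intro P hΦ hfeas hc
      rcases eq_or_lt_of_le hc with hc2 | hc3
      · exact ⟨P, hfeas, hc2.symm⟩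
      · obtain ⟨P', _, _, hdec⟩ := move P hfeas (by omega)
        omega
    | succ N ih =>
      intro P hΦ hfeas hc
      rcases eq_or_lt_of_le hc with hc2 | hc3
      · exact ⟨P, hfeas, hc2.symm⟩
      · obtain ⟨P', hfeas', hc', hdec⟩ := move P hfeas (by omega)
        exact ih P' (by omega) hfeas' hc'
  exact key (∑ j ∈ Finset.univ.filter (fun j => thr < btime x r P0 (P0 j)), x j) P0
    le_rfl hP0feas hP0card
end

section
/- Reduction correctness for NP-hardness of the interval problem. Fix an integer n ≥ 3 and a rational 0 < d < n−2. Let X₁ be a list of 2m′ positive integers, let M be the rational number such that the sum of X₁ equals 2n(1 − d/(n−2))·M, assume n·M is a positive integer and every element of X₁ is at most n(1 − d/(n−2))·M. Let X₂ be obtained from X₁ by replacing each element x by nM − x, and let X₃ consist of X₂ together with (n−2)(m′−1) additional jobs of length nM. Let S = (Σ_{x∈X₃} x)/n. Then X₁ can be partitioned into two subsets with equal sum and equal cardinality if and only if X₃ admits an integral partition among n identical machines (r_i = 1 for all i) with makespan at most S + d·M. -/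
/-- The job lengths of the instance `X₃`: the inverted jobs `nM - x` (encoded with `K = nM`)
together with `(n-2)*(m'-1)` jobs of length `K`. -/
def x3jobs (m' K : ℕ) (x1 : Fin (2 * m') → ℕ) (n : ℕ) :
    (Fin (2 * m') ⊕ Fin ((n - 2) * (m' - 1))) → ℕ :=
  Sum.elim (fun j => K - x1 j) (fun _ => K)

set_option maxHeartbeats 1600000 in
/-- reduction correctness for NP-hardness of the interval problem:
`X₁` has an equal-sum equal-cardinality partition iff `X₃` admits an integral partition among
`n` identical machines with makespan at most `S + d·M`. -/
theorem stmt_8 (n : ℕ) (hn : 3 ≤ n)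
    (d : ℚ) (hd0 : 0 < d) (hd : d < (n : ℚ) - 2)
    (m' : ℕ) (hm' : 1 ≤ m')
    (x1 : Fin (2 * m') → ℕ) (hx1 : ∀ j, 0 < x1 j)
    (M : ℚ) (hsum : (∑ j, (x1 j : ℚ)) = 2 * (n : ℚ) * (1 - d / ((n : ℚ) - 2)) * M)
    (K : ℕ) (hK : 0 < K) (hKM : (K : ℚ) = (n : ℚ) * M)
    (hbound : ∀ j, (x1 j : ℚ) ≤ (n : ℚ) * (1 - d / ((n : ℚ) - 2)) * M) :
    (∃ T : Finset (Fin (2 * m')), T.card = m' ∧ ∑ j ∈ T, x1 j = ∑ j ∈ Tᶜ, x1 j) ↔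
    (∃ P : (Fin (2 * m') ⊕ Fin ((n - 2) * (m' - 1))) → Fin n,
      ∀ i : Fin n,
        (∑ j ∈ Finset.univ.filter (fun j => P j = i), (x3jobs m' K x1 n j : ℚ))
          ≤ (∑ j : Fin (2 * m') ⊕ Fin ((n - 2) * (m' - 1)), (x3jobs m' K x1 n j : ℚ)) / (n : ℚ)
            + d * M) := by
  classical
  have hn2 : 2 ≤ n := by omega
  have hnQ : (0:ℚ) < n := by exact_mod_cast (by omega : 0 < n)
  have hn3Q : (3:ℚ) ≤ (n:ℚ) := by exact_mod_cast hn
  have hn2Q : (0:ℚ) < (n:ℚ) - 2 := by linarith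
  have hKQ : (0:ℚ) < K := by exact_mod_cast hK
  set C : ℚ := (K:ℚ) * d / ((n:ℚ) - 2) with hCdef
  have hC0 : 0 < C := by positivity
  have hCK : C < K := by
    rw [hCdef, div_lt_iff₀ hn2Q]; nlinarith
  have hkey : (n:ℚ) * (1 - d / ((n : ℚ) - 2)) * M = (K:ℚ) - C := by
    rw [hCdef]
    field_simp
    linear_combination (d - (n:ℚ) + 2) * hKM
  have hbound' : ∀ j, (x1 j : ℚ) ≤ (K:ℚ) - C := fun j => hkey ▸ hbound j
  have hsum' : (∑ j, (x1 j : ℚ)) = 2 * ((K:ℚ) - C) := by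
    rw [hsum, show (2:ℚ) * (n:ℚ) * (1 - d / ((n : ℚ) - 2)) * M
      = 2 * ((n:ℚ) * (1 - d / ((n : ℚ) - 2)) * M) by ring, hkey]
  have hx1le : ∀ j, x1 j ≤ K := by
    intro j
    have h1 := hbound' j
    have : (x1 j : ℚ) ≤ (K:ℚ) := by linarith
    exact_mod_cast this
  have hcast : ∀ j, ((K - x1 j : ℕ) : ℚ) = (K:ℚ) - (x1 j : ℚ) := by
    intro j; push_cast [hx1le j]; ring
  have hmQ : (1:ℚ) ≤ (m':ℚ) := by exact_mod_cast hm'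
  -- cast facts
  have hcastn2 : ((n - 2 : ℕ) : ℚ) = (n:ℚ) - 2 := by push_cast [hn2]; ring
  have hcastm1 : ((m' - 1 : ℕ) : ℚ) = (m':ℚ) - 1 := by push_cast [hm']; ring
  -- the load decomposition
  have hload : ∀ (P : (Fin (2 * m') ⊕ Fin ((n - 2) * (m' - 1))) → Fin n) (i : Fin n),
      (∑ j ∈ Finset.univ.filter (fun j => P j = i), (x3jobs m' K x1 n j : ℚ))
      = (((Finset.univ.filter (fun a : Fin (2*m') => P (Sum.inl a) = i)).card : ℚ)
          + ((Finset.univ.filter (fun r : Fin ((n-2)*(m'-1)) => P (Sum.inr r) = i)).card : ℚ))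
            * (K:ℚ)
        - ∑ a ∈ Finset.univ.filter (fun a : Fin (2*m') => P (Sum.inl a) = i), (x1 a : ℚ) := by
    intro P i
    rw [Finset.sum_filter, Fintype.sum_sum_type]
    simp only [x3jobs, Sum.elim_inl, Sum.elim_inr]
    have h1 : (∑ a : Fin (2*m'), if P (Sum.inl a) = i then ((K - x1 a : ℕ) : ℚ) else 0)
        = ∑ a ∈ Finset.univ.filter (fun a : Fin (2*m') => P (Sum.inl a) = i),
            ((K:ℚ) - (x1 a : ℚ)) := by
      rw [← Finset.sum_filter]
      exact Finset.sum_congr rfl fun a _ => hcast a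
    have h2 : (∑ r : Fin ((n-2)*(m'-1)), if P (Sum.inr r) = i then ((K:ℕ) : ℚ) else 0)
        = ((Finset.univ.filter (fun r : Fin ((n-2)*(m'-1)) => P (Sum.inr r) = i)).card : ℚ)
          * (K:ℚ) := by
      rw [← Finset.sum_filter, Finset.sum_const, nsmul_eq_mul]
    rw [h1, h2, Finset.sum_sub_distrib, Finset.sum_const, nsmul_eq_mul]
    ring
  -- total sum of jobs
  have htot : (∑ j : Fin (2 * m') ⊕ Fin ((n - 2) * (m' - 1)), (x3jobs m' K x1 n j : ℚ))
      = (2*(m':ℚ)) * (K:ℚ) - 2*((K:ℚ) - C) + (((n:ℚ)-2)*((m':ℚ)-1)) * (K:ℚ) := by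
    rw [Fintype.sum_sum_type]
    simp only [x3jobs, Sum.elim_inl, Sum.elim_inr]
    have h1 : (∑ a : Fin (2*m'), ((K - x1 a : ℕ) : ℚ))
        = (2*(m':ℚ)) * (K:ℚ) - 2*((K:ℚ) - C) := by
      rw [show (∑ a : Fin (2*m'), ((K - x1 a : ℕ) : ℚ))
            = ∑ a : Fin (2*m'), ((K:ℚ) - (x1 a : ℚ)) from
          Finset.sum_congr rfl fun a _ => hcast a,
        Finset.sum_sub_distrib, Finset.sum_const, Finset.card_univ, Fintype.card_fin,
        nsmul_eq_mul, hsum']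
      push_cast; ring
    have h2 : (∑ _r : Fin ((n-2)*(m'-1)), ((K:ℕ) : ℚ))
        = (((n:ℚ)-2)*((m':ℚ)-1)) * (K:ℚ) := by
      rw [Finset.sum_const, Finset.card_univ, Fintype.card_fin, nsmul_eq_mul]
      push_cast [hn2, hm']; ring
    rw [h1, h2]
  -- the threshold
  have hthr : (∑ j : Fin (2 * m') ⊕ Fin ((n - 2) * (m' - 1)), (x3jobs m' K x1 n j : ℚ)) / (n:ℚ)
      + d * M = ((m':ℚ) - 1) * (K:ℚ) + C := by
    rw [htot, hCdef]
    have hMK : M = (K:ℚ) / n := by rw [hKM]; field_simp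
    rw [hMK]
    field_simp
    ring
  rw [hthr]
  constructor
  · -- forward direction
    rintro ⟨T, hTcard, hTsum⟩
    have hTsumQ : (∑ j ∈ T, (x1 j : ℚ)) = (K:ℚ) - C := by
      have hsplit : (∑ j ∈ T, (x1 j : ℚ)) + (∑ j ∈ Tᶜ, (x1 j : ℚ))
          = ∑ j, (x1 j : ℚ) := Finset.sum_add_sum_compl T _
      have heq : (∑ j ∈ T, (x1 j : ℚ)) = (∑ j ∈ Tᶜ, (x1 j : ℚ)) := by
        exact_mod_cast congrArg (Nat.cast : ℕ → ℚ) hTsum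
      rw [hsum'] at hsplit
      linarith
    have hTc_card : Tᶜ.card = m' := by
      have := Finset.card_compl T
      rw [Fintype.card_fin, hTcard] at this
      omega
    have hTcsumQ : (∑ j ∈ Tᶜ, (x1 j : ℚ)) = (K:ℚ) - C := by
      have hsplit : (∑ j ∈ T, (x1 j : ℚ)) + (∑ j ∈ Tᶜ, (x1 j : ℚ))
          = ∑ j, (x1 j : ℚ) := Finset.sum_add_sum_compl T _
      rw [hsum'] at hsplit; linarith
    set P : (Fin (2 * m') ⊕ Fin ((n - 2) * (m' - 1))) → Fin n :=
      Sum.elim (fun a => if a ∈ T then (⟨0, by omega⟩ : Fin n) else ⟨1, by omega⟩)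
        (fun r => ⟨2 + ((finProdFinEquiv.symm r).1 : ℕ), by
          have := ((finProdFinEquiv.symm r).1).isLt; omega⟩) with hPdef
    refine ⟨P, fun i => ?_⟩
    rw [hload P i]
    set sF := Finset.univ.filter (fun a : Fin (2*m') => P (Sum.inl a) = i) with hsF
    set bF := Finset.univ.filter (fun r : Fin ((n-2)*(m'-1)) => P (Sum.inr r) = i) with hbF
    rcases Nat.lt_or_ge i.val 2 with hi2 | hi2
    · -- i is machine 0 or 1 : only the small jobs of T resp. Tᶜ
      have hbF_empty : bF = ∅ := by
        rw [hbF]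
        refine Finset.filter_false_of_mem (fun r _ => ?_)
        simp only [hPdef, Sum.elim_inr]
        intro h
        have := congrArg Fin.val h
        simp only at this
        omega
      rcases Nat.lt_or_ge i.val 1 with hi1 | hi1
      · -- machine 0
        have hiv : i = ⟨0, by omega⟩ := by apply Fin.ext; simp only [Fin.val_mk]; omega
        have hsFT : sF = T := by
          rw [hsF]
          ext a
          simp only [Finset.mem_filter, Finset.mem_univ, true_and, hPdef, Sum.elim_inl, hiv]
          by_cases ha : a ∈ T <;> simp [ha, Fin.ext_iff]
        rw [hbF_empty, hsFT, hTcard, hTsumQ]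
        simp only [Finset.card_empty, Nat.cast_zero, add_zero]
        ring_nf
        linarith
      · -- machine 1
        have hiv : i = ⟨1, by omega⟩ := by apply Fin.ext; simp only [Fin.val_mk]; omega
        have hsFT : sF = Tᶜ := by
          rw [hsF]
          ext a
          simp only [Finset.mem_filter, Finset.mem_univ, true_and, hPdef, Sum.elim_inl, hiv,
            Finset.mem_compl]
          by_cases ha : a ∈ T <;> simp [ha, Fin.ext_iff]
        rw [hbF_empty, hsFT, hTc_card, hTcsumQ]
        simp only [Finset.card_empty, Nat.cast_zero, add_zero]
        ring_nf
        linarith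
    · -- machine ≥ 2 : only big jobs, m'-1 of them
      have hsF_empty : sF = ∅ := by
        rw [hsF]
        refine Finset.filter_false_of_mem (fun a _ => ?_)
        simp only [hPdef, Sum.elim_inl]
        by_cases ha : a ∈ T <;>
          · simp only [ha, if_true, if_false]
            intro h
            have := congrArg Fin.val h
            simp only at this
            omega
      have hc : bF.card = m' - 1 := by
        have hilt := i.isLt
        have hmap : ∀ r, (P (Sum.inr r) = i) ↔
            ((finProdFinEquiv.symm r).1 : ℕ) = i.val - 2 := by
          intro r
          simp only [hPdef, Sum.elim_inr, Fin.ext_iff, Fin.val_mk]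
          omega
        rw [hbF, Finset.card_filter]
        calc (∑ r, if P (Sum.inr r) = i then 1 else 0)
            = ∑ r, (if ((finProdFinEquiv.symm r).1 : ℕ) = i.val - 2 then 1 else 0) :=
              Finset.sum_congr rfl (fun r _ => by rw [if_congr (hmap r) rfl rfl])
          _ = ∑ p : Fin (n-2) × Fin (m'-1), (if (p.1 : ℕ) = i.val - 2 then 1 else 0) :=
              Equiv.sum_comp finProdFinEquiv.symm
                (fun p : Fin (n-2) × Fin (m'-1) => if (p.1 : ℕ) = i.val - 2 then 1 else 0)
          _ = ∑ p1 : Fin (n-2), ∑ _p2 : Fin (m'-1),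
                (if (p1 : ℕ) = i.val - 2 then 1 else 0) := Fintype.sum_prod_type _
          _ = ∑ p1 : Fin (n-2), (if p1 = (⟨i.val - 2, by omega⟩ : Fin (n-2)) then m' - 1
                else 0) := by
              refine Finset.sum_congr rfl fun p1 _ => ?_
              rw [Finset.sum_const, Finset.card_univ, Fintype.card_fin]
              by_cases h : p1 = (⟨i.val - 2, by omega⟩ : Fin (n-2))
              · rw [if_pos h, if_pos (by rw [h])]
                simp
              · rw [if_neg h, if_neg (fun hh => h (Fin.ext (by simpa using hh)))]
                simp
          _ = m' - 1 := by
              rw [Finset.sum_ite_eq']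
              simp
      rw [hsF_empty, hc]
      simp only [Finset.card_empty, Nat.cast_zero, zero_add, Finset.sum_empty, sub_zero]
      rw [hcastm1]
      nlinarith [hC0]
  · -- backward direction
    rintro ⟨P, hP⟩
    set sF : Fin n → Finset (Fin (2*m')) :=
      fun i => Finset.univ.filter (fun a : Fin (2*m') => P (Sum.inl a) = i) with hsF
    set bF : Fin n → Finset (Fin ((n-2)*(m'-1))) :=
      fun i => Finset.univ.filter (fun r : Fin ((n-2)*(m'-1)) => P (Sum.inr r) = i) with hbF
    set sig : Fin n → ℚ := fun i => ∑ a ∈ sF i, (x1 a : ℚ) with hsig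
    have hLd : ∀ i, (((sF i).card : ℚ) + ((bF i).card : ℚ)) * (K:ℚ) - sig i
        ≤ ((m':ℚ) - 1) * (K:ℚ) + C := by
      intro i
      have := hP i
      rw [hload P i] at this
      exact this
    have hsig0 : ∀ i, 0 ≤ sig i := fun i => Finset.sum_nonneg fun a _ => by positivity
    have hsigtot : ∑ i, sig i = 2 * ((K:ℚ) - C) := by
      rw [hsig]
      rw [Finset.sum_fiberwise Finset.univ (fun a => P (Sum.inl a)) (fun a => (x1 a : ℚ))]
      exact hsum'
    have hsigle : ∀ i, sig i ≤ 2 * ((K:ℚ) - C) := by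
      intro i
      rw [← hsigtot]
      exact Finset.single_le_sum (fun j _ => hsig0 j) (Finset.mem_univ i)
    have ht : ∀ i, (sF i).card + (bF i).card ≤ m' := by
      intro i
      by_contra hcon
      push_neg at hcon
      have h1 : ((m':ℚ) + 1) ≤ ((sF i).card : ℚ) + ((bF i).card : ℚ) := by
        have : (m' + 1 : ℕ) ≤ (sF i).card + (bF i).card := hcon
        exact_mod_cast this
      have h2 := hLd i
      have h3 := hsigle i
      have h4 := mul_le_mul_of_nonneg_right h1 hKQ.le
      linarith
    have hbsum : ∑ i, (sF i).card = 2 * m' := by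
      have := Finset.card_eq_sum_card_fiberwise
        (f := fun a : Fin (2*m') => P (Sum.inl a)) (s := Finset.univ) (t := Finset.univ)
        (fun a _ => Finset.mem_univ _)
      rw [Finset.card_univ, Fintype.card_fin] at this
      exact this.symm
    have hasum : ∑ i, (bF i).card = (n-2) * (m'-1) := by
      have := Finset.card_eq_sum_card_fiberwise
        (f := fun r : Fin ((n-2)*(m'-1)) => P (Sum.inr r)) (s := Finset.univ) (t := Finset.univ)
        (fun a _ => Finset.mem_univ _)
      rw [Finset.card_univ, Fintype.card_fin] at this
      exact this.symm
    set U : Finset (Fin n) := Finset.univ.filter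
      (fun i => (sF i).card + (bF i).card = m') with hU
    -- arithmetic facts about products
    have hp1 : (n-2) * (m'-1) + (n-2) = (n-2) * m' := by
      rw [← Nat.mul_succ]
      congr 1
      omega
    have hp2 : (n-2) * m' + 2 * m' = n * m' := by
      rw [← Nat.add_mul]
      congr 1
      omega
    have hcardn : U.card + Uᶜ.card = n := by
      rw [Finset.card_add_card_compl, Fintype.card_fin]
    have hUcard2 : 2 ≤ U.card := by
      have hsplit : (∑ i ∈ U, ((sF i).card + (bF i).card))
          + (∑ i ∈ Uᶜ, ((sF i).card + (bF i).card))
          = 2 * m' + (n-2) * (m'-1) := by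
        rw [Finset.sum_add_sum_compl, Finset.sum_add_distrib, hbsum, hasum]
      have hUb : ∑ i ∈ U, ((sF i).card + (bF i).card) ≤ U.card * m' := by
        calc ∑ i ∈ U, ((sF i).card + (bF i).card) ≤ ∑ _i ∈ U, m' :=
              Finset.sum_le_sum fun i _ => ht i
          _ = U.card * m' := by rw [Finset.sum_const, smul_eq_mul]
      have hUcb : ∑ i ∈ Uᶜ, ((sF i).card + (bF i).card) + Uᶜ.card ≤ Uᶜ.card * m' := by
        have hh : ∑ i ∈ Uᶜ, ((sF i).card + (bF i).card + 1)
            = ∑ i ∈ Uᶜ, ((sF i).card + (bF i).card) + Uᶜ.card := by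
          rw [Finset.sum_add_distrib
            (f := fun i => (sF i).card + (bF i).card) (g := fun _ => 1),
            Finset.sum_const, smul_eq_mul, mul_one]
        calc ∑ i ∈ Uᶜ, ((sF i).card + (bF i).card) + Uᶜ.card
            = ∑ i ∈ Uᶜ, ((sF i).card + (bF i).card + 1) := hh.symm
          _ ≤ ∑ _i ∈ Uᶜ, m' := by
              refine Finset.sum_le_sum fun i hi => ?_
              have h1 := ht i
              have h2 : ¬((sF i).card + (bF i).card = m') := by
                simpa [hU] using (Finset.mem_compl.mp hi)
              omega
          _ = Uᶜ.card * m' := by rw [Finset.sum_const, smul_eq_mul]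
      have hnm : (U.card + Uᶜ.card) * m' = n * m' := by rw [hcardn]
      rw [Nat.add_mul] at hnm
      omega
    have hUsig : ∀ i ∈ U, (K:ℚ) - C ≤ sig i := by
      intro i hi
      have hit : (sF i).card + (bF i).card = m' := by
        simpa [hU] using hi
      have hcst : ((sF i).card : ℚ) + ((bF i).card : ℚ) = (m':ℚ) := by
        exact_mod_cast congrArg (Nat.cast : ℕ → ℚ) hit
      have := hLd i
      rw [hcst] at this
      linarith
    have hKC0 : (0:ℚ) < (K:ℚ) - C := by linarith
    have hUsigsum : ∑ i ∈ U, sig i ≤ 2 * ((K:ℚ) - C) := by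
      rw [← hsigtot]
      exact Finset.sum_le_sum_of_subset_of_nonneg (Finset.subset_univ U)
        (fun i _ _ => hsig0 i)
    have hUcard : U.card = 2 := by
      have hlow : (U.card : ℚ) * ((K:ℚ) - C) ≤ ∑ i ∈ U, sig i := by
        have := Finset.card_nsmul_le_sum U sig ((K:ℚ) - C) hUsig
        simpa [nsmul_eq_mul] using this
      have : (U.card : ℚ) * ((K:ℚ) - C) ≤ 2 * ((K:ℚ) - C) := le_trans hlow hUsigsum
      have hle : (U.card : ℚ) ≤ 2 := by
        exact le_of_mul_le_mul_right (by linarith) hKC0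
      have : U.card ≤ 2 := by exact_mod_cast hle
      omega
    obtain ⟨i1, i2, hne, hUeq⟩ := Finset.card_eq_two.mp hUcard
    have hi1U : i1 ∈ U := by rw [hUeq]; simp
    have hi2U : i2 ∈ U := by rw [hUeq]; simp
    have hpairsum : sig i1 + sig i2 = ∑ i ∈ U, sig i := by
      rw [hUeq, Finset.sum_pair hne]
    -- the complement machines carry no small jobs
    have hcompl0 : ∑ i ∈ Uᶜ, sig i = 0 := by
      have hsplit : ∑ i ∈ U, sig i + ∑ i ∈ Uᶜ, sig i = 2 * ((K:ℚ) - C) := by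
        rw [Finset.sum_add_sum_compl, hsigtot]
      have h1 := hUsig i1 hi1U
      have h2 := hUsig i2 hi2U
      have h3 : ∑ i ∈ Uᶜ, sig i ≥ 0 :=
        Finset.sum_nonneg fun i _ => hsig0 i
      rw [← hpairsum] at hsplit
      linarith
    have hsig1 : sig i1 = (K:ℚ) - C := by
      have hsplit : ∑ i ∈ U, sig i + ∑ i ∈ Uᶜ, sig i = 2 * ((K:ℚ) - C) := by
        rw [Finset.sum_add_sum_compl, hsigtot]
      have h1 := hUsig i1 hi1U
      have h2 := hUsig i2 hi2U
      rw [hcompl0, add_zero] at hsplit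
      rw [← hpairsum] at hsplit
      linarith
    have hcomplcard : ∀ i ∈ Uᶜ, (sF i).card = 0 := by
      intro i hi
      by_contra hcon
      have hne' : (sF i).Nonempty := Finset.card_pos.mp (Nat.pos_of_ne_zero hcon)
      obtain ⟨a, ha⟩ := hne'
      have hposa : (0:ℚ) < (x1 a : ℚ) := by exact_mod_cast hx1 a
      have : 0 < sig i := by
        refine lt_of_lt_of_le hposa ?_
        exact Finset.single_le_sum (f := fun j : Fin (2*m') => (x1 j : ℚ))
          (fun j _ => by positivity) ha
      have hz : sig i = 0 := by
        have := (Finset.sum_eq_zero_iff_of_nonneg (fun j _ => hsig0 j)).mp hcompl0 i hi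
        exact this
      linarith
    have hcards : (sF i1).card + (sF i2).card = 2 * m' := by
      have hsplit : ∑ i ∈ U, (sF i).card + ∑ i ∈ Uᶜ, (sF i).card = 2 * m' := by
        rw [Finset.sum_add_sum_compl, hbsum]
      rw [Finset.sum_eq_zero hcomplcard, add_zero, hUeq, Finset.sum_pair hne] at hsplit
      exact hsplit
    have hcard1 : (sF i1).card = m' := by
      have h1 := ht i1
      have h2 := ht i2
      omega
    refine ⟨sF i1, hcard1, ?_⟩
    have hTQ : (∑ j ∈ sF i1, (x1 j : ℚ)) = (∑ j ∈ (sF i1)ᶜ, (x1 j : ℚ)) := by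
      have hsplit : (∑ j ∈ sF i1, (x1 j : ℚ)) + (∑ j ∈ (sF i1)ᶜ, (x1 j : ℚ))
          = ∑ j, (x1 j : ℚ) := Finset.sum_add_sum_compl _ _
      rw [hsum'] at hsplit
      have : (∑ j ∈ sF i1, (x1 j : ℚ)) = (K:ℚ) - C := hsig1
      linarith
    exact_mod_cast hTQ
end

section
/- For every fractional allocation f whose set of split jobs has cardinality s and whose completion times are b_1,…,b_n, there exists a fractional allocation f′ with the same completion times b_1,…,b_n in which at most s jobs are split and every split job of f′ has length at least the length of every non-split job of f′ (i.e., only the s longest jobs are split). -/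
open Finset

def splitSet {m n : ℕ} (f : Fin m → Fin n → ℚ) : Finset (Fin m) :=
  Finset.univ.filter (fun j => 1 < (Finset.univ.filter (fun i => 0 < f j i)).card)

lemma key (m n : ℕ) (x : Fin m → ℕ) (hx : ∀ j, 0 < x j) (k : ℕ) :
    ∀ (f : Fin m → Fin n → ℚ), (∀ j i, 0 ≤ f j i) →
    (∀ j, ∑ i, f j i = (x j : ℚ)) →
    ((∑ j, x j) - (∑ j ∈ splitSet f, x j) = k) →
    ∃ f' : Fin m → Fin n → ℚ,
      (∀ j i, 0 ≤ f' j i) ∧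
      (∀ j, ∑ i, f' j i = (x j : ℚ)) ∧
      (∀ i, ∑ j, f' j i = ∑ j, f j i) ∧
      (splitSet f').card ≤ (splitSet f).card ∧
      (∀ j j', j ∈ splitSet f' → j' ∉ splitSet f' → x j' ≤ x j) := by
  induction k using Nat.strong_induction_on with
  | _ k IH =>
    intro f hf0 hfsum hk
    by_cases hdone : ∀ j j', j ∈ splitSet f → j' ∉ splitSet f → x j' ≤ x j
    · exact ⟨f, hf0, hfsum, fun i => rfl, le_refl _, hdone⟩
    push_neg at hdone
    obtain ⟨j, j', hjS, hj'S, hlt⟩ := hdone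
    have hjj' : j ≠ j' := by rintro rfl; exact hj'S hjS
    -- j' is unsplit: find its unique machine i0
    have hcard1 : (Finset.univ.filter (fun i => 0 < f j' i)).card = 1 := by
      have hle : (Finset.univ.filter (fun i => 0 < f j' i)).card ≤ 1 := by
        have := hj'S
        simp only [splitSet, mem_filter, mem_univ, true_and, not_lt] at this
        exact this
      rcases Nat.lt_or_ge (Finset.univ.filter (fun i => 0 < f j' i)).card 1 with h | h
      · exfalso
        have hempty : (Finset.univ.filter (fun i => 0 < f j' i)) = ∅ :=
          Finset.card_eq_zero.mp (Nat.lt_one_iff.mp h)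
        have hz : ∀ i, f j' i = 0 := by
          intro i
          by_contra hne
          have hp : 0 < f j' i := lt_of_le_of_ne (hf0 j' i) (Ne.symm hne)
          have : i ∈ (Finset.univ.filter (fun i => 0 < f j' i)) := by
            simp [hp]
          simp [hempty] at this
        have hs0 := hfsum j'
        rw [Finset.sum_eq_zero (fun i _ => hz i)] at hs0
        have hxp : (0 : ℚ) < x j' := by exact_mod_cast hx j'
        linarith
      · omega
    obtain ⟨i0, hi0⟩ := Finset.card_eq_one.mp hcard1
    have hfj'zero : ∀ i, i ≠ i0 → f j' i = 0 := by
      intro i hi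
      by_contra hne
      have hpos : 0 < f j' i := lt_of_le_of_ne (hf0 j' i) (Ne.symm hne)
      have : i ∈ (Finset.univ.filter (fun i => 0 < f j' i)) := by simp [hpos]
      rw [hi0] at this
      exact hi (Finset.mem_singleton.mp this)
    have hfj'i0 : f j' i0 = (x j' : ℚ) := by
      have hs0 := hfsum j'
      rw [← Finset.sum_subset (Finset.subset_univ {i0})
        (fun i _ hi => hfj'zero i (by simpa using hi))] at hs0
      simpa using hs0
    -- j is split: find a support machine other than i0
    have hjcard : 1 < (Finset.univ.filter (fun i => 0 < f j i)).card := by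
      have := hjS; simpa [splitSet] using this
    obtain ⟨i1, hi1mem, hi1ne⟩ := Finset.exists_mem_ne hjcard i0
    have hi1pos : 0 < f j i1 := by simpa using (Finset.mem_filter.mp hi1mem).2
    -- the swapped allocation
    set d : ℚ := (x j' : ℚ) - (x j : ℚ) with hd
    have hdpos : 0 < d := by
      rw [hd]; have : (x j : ℚ) < x j' := by exact_mod_cast hlt
      linarith
    set g : Fin m → Fin n → ℚ := fun a i =>
      if a = j then (if i = i0 then (x j : ℚ) else 0)
      else if a = j' then (if i = i0 then f j i0 + d else f j i)
      else f a i with hgdef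
    have hxjq : (0 : ℚ) < x j := by exact_mod_cast hx j
    have hg0 : ∀ a i, 0 ≤ g a i := by
      intro a i
      simp only [hgdef]
      split_ifs
      all_goals first
        | linarith
        | linarith [hf0 j i0]
        | exact hf0 j i
        | exact hf0 a i
    have hgsum : ∀ a, ∑ i, g a i = (x a : ℚ) := by
      intro a
      by_cases ha : a = j
      · simp only [hgdef, if_pos ha]
        rw [ha]
        simp
      by_cases ha' : a = j'
      · simp only [hgdef, if_neg ha, if_pos ha']
        rw [ha']
        have hcong : ∀ i, (if i = i0 then f j i0 + d else f j i)
            = f j i + (if i = i0 then d else 0) := by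
          intro i; split_ifs with h
          · rw [h]
          · ring
        rw [Finset.sum_congr rfl (fun i _ => hcong i), Finset.sum_add_distrib, hfsum j]
        simp [hd]
      · simp only [hgdef, if_neg ha, if_neg ha']
        exact hfsum a
    have hsupp : ∀ a, a ≠ j → a ≠ j' → ∀ i, g a i = f a i := by
      intro a ha ha' i; simp [hgdef, ha, ha']
    have hgcol : ∀ i, ∑ a, g a i = ∑ a, f a i := by
      intro i
      have hdecomp : ∀ (h : Fin m → ℚ), ∑ a, h a
          = ∑ a ∈ (univ.erase j).erase j', h a + h j' + h j := by
        intro h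
        rw [← Finset.sum_erase_add univ h (mem_univ j),
          ← Finset.sum_erase_add (univ.erase j) h
            (Finset.mem_erase.mpr ⟨Ne.symm hjj', mem_univ j'⟩)]
      rw [hdecomp (fun a => g a i), hdecomp (fun a => f a i)]
      have hrest : ∑ a ∈ (univ.erase j).erase j', g a i
          = ∑ a ∈ (univ.erase j).erase j', f a i := by
        refine Finset.sum_congr rfl (fun a ha => ?_)
        have h1 : a ≠ j' := (Finset.mem_erase.mp ha).1
        have h2 : a ≠ j := (Finset.mem_erase.mp (Finset.mem_erase.mp ha).2).1
        exact hsupp a h2 h1 i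
      rw [hrest]
      have hgj : g j i = if i = i0 then (x j : ℚ) else 0 := by
        simp [hgdef]
      have hgj' : g j' i = if i = i0 then f j i0 + d else f j i := by
        simp [hgdef, Ne.symm hjj']
      rw [hgj, hgj']
      split_ifs with h
      · subst h; rw [hfj'i0, hd]; ring
      · rw [hfj'zero i h]; ring
    have hsplitg : splitSet g = insert j' ((splitSet f).erase j) := by
      ext a
      simp only [splitSet, mem_filter, mem_univ, true_and, Finset.mem_insert,
        Finset.mem_erase]
      by_cases ha : a = j
      · have hfilt : (univ.filter fun i => 0 < g a i) = {i0} := by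
          ext i
          simp only [mem_filter, mem_univ, true_and, mem_singleton, hgdef, if_pos ha]
          split_ifs with h
          · simp [h, hxjq]
          · simp [h]
        rw [hfilt]
        simp [ha, hjj']
      by_cases ha' : a = j'
      · have hmem0 : i0 ∈ univ.filter fun i => 0 < g a i := by
          simp [hgdef, ha', Ne.symm hjj']
          have := hf0 j i0
          linarith
        have hmem1 : i1 ∈ univ.filter fun i => 0 < g a i := by
          simp only [mem_filter, mem_univ, true_and, hgdef, if_neg ha, if_pos ha',
            if_neg hi1ne]
          exact hi1pos
        have : 1 < (univ.filter fun i => 0 < g a i).card :=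
          Finset.one_lt_card.mpr ⟨i0, hmem0, i1, hmem1, Ne.symm hi1ne⟩
        simp only [ha'] at this
        simp [this, ha']
      · have hfilt : (univ.filter fun i => 0 < g a i) = univ.filter fun i => 0 < f a i :=
          Finset.filter_congr (fun i _ => by rw [hsupp a ha ha'])
        rw [hfilt]
        simp [ha, ha']
    have hj'nerase : j' ∉ (splitSet f).erase j := fun h => hj'S (Finset.mem_erase.mp h).2
    have hcardg : (splitSet g).card = (splitSet f).card := by
      rw [hsplitg, Finset.card_insert_of_notMem hj'nerase,
        Finset.card_erase_of_mem hjS]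
      have : 1 ≤ (splitSet f).card := Finset.card_pos.mpr ⟨j, hjS⟩
      omega
    have hsumg : ∑ a ∈ splitSet g, x a = ∑ a ∈ splitSet f, x a + x j' - x j := by
      rw [hsplitg, Finset.sum_insert hj'nerase]
      have herase := Finset.sum_erase_add (splitSet f) x hjS
      omega
    have hmono : ∑ a ∈ splitSet f, x a < ∑ a ∈ splitSet g, x a := by
      rw [hsumg]
      have hle : x j ≤ ∑ a ∈ splitSet f, x a :=
        Finset.single_le_sum (fun a _ => Nat.zero_le _) hjS
      have := hx j
      have := hlt
      omega
    have hbound : ∑ a ∈ splitSet g, x a ≤ ∑ a, x a :=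
      Finset.sum_le_sum_of_subset (Finset.subset_univ _)
    have hk' : (∑ a, x a) - (∑ a ∈ splitSet g, x a) < k := by omega
    obtain ⟨f', h1, h2, h3, h4, h5⟩ := IH _ hk' g hg0 hgsum rfl
    exact ⟨f', h1, h2, fun i => (h3 i).trans (hgcol i), hcardg ▸ h4, h5⟩

/-- for every fractional allocation with `s` split jobs there is a fractional
allocation with the same completion times, at most `s` split jobs, in which every split job is
at least as long as every non-split job (only the longest jobs are split). -/
theorem stmt_9 (m n : ℕ)
    (x : Fin m → ℕ) (hx : ∀ j, 0 < x j)
    (r : Fin n → ℕ) (hr : ∀ i, 0 < r i)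
    (f : Fin m → Fin n → ℚ) (hf0 : ∀ j i, 0 ≤ f j i)
    (hfsum : ∀ j, ∑ i, f j i = (x j : ℚ))
    (s : ℕ)
    (hs : (Finset.univ.filter (fun j =>
        1 < (Finset.univ.filter (fun i => 0 < f j i)).card)).card = s) :
    ∃ f' : Fin m → Fin n → ℚ,
      (∀ j i, 0 ≤ f' j i) ∧
      (∀ j, ∑ i, f' j i = (x j : ℚ)) ∧
      (∀ i, (∑ j, f' j i) / (r i : ℚ) = (∑ j, f j i) / (r i : ℚ)) ∧
      (Finset.univ.filter (fun j =>
          1 < (Finset.univ.filter (fun i => 0 < f' j i)).card)).card ≤ s ∧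
      (∀ j j' : Fin m,
        1 < (Finset.univ.filter (fun i => 0 < f' j i)).card →
        ¬ 1 < (Finset.univ.filter (fun i => 0 < f' j' i)).card →
        x j' ≤ x j) := by
  obtain ⟨f', h1, h2, h3, h4, h5⟩ :=
    key m n x hx ((∑ j, x j) - (∑ j ∈ splitSet f, x j)) f hf0 hfsum rfl
  refine ⟨f', h1, h2, fun i => by rw [h3 i], ?_, ?_⟩
  · have : (splitSet f).card = s := hs
    calc (Finset.univ.filter (fun j =>
          1 < (Finset.univ.filter (fun i => 0 < f' j i)).card)).card
        = (splitSet f').card := rfl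
      _ ≤ (splitSet f).card := h4
      _ = s := this
  · intro a b hsplit hnsplit
    exact h5 a b (by simpa [splitSet] using hsplit) (by simpa [splitSet] using hnsplit)
end

section
/- Reduction from interval target to split jobs (identical machines). Fix integers n ≥ 2 and d ≥ 0. Let X be a list of jobs with positive integer lengths, with maximum job length nM and sum nS. Let X′ consist of X together with d additional jobs of length nM. Then X admits an integral partition among n identical machines with makespan at most S + d·M if and only if X′ admits a fractional allocation among n identical machines with at most d split jobs in which every machine's completion time equals S + d·M (a perfect partition of X′). -/
/-- The job lengths of `X′`: the jobs of `X` together with `d` extra jobs whose length is the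
maximum job length of `X`. -/
def xPrime (m d : ℕ) (x : Fin m → ℕ) : (Fin m ⊕ Fin d) → ℕ :=
  Sum.elim x (fun _ => Finset.univ.sup x)

lemma unsplit_struct {n : ℕ} (g : Fin n → ℚ) (h0 : ∀ i, 0 ≤ g i) {c : ℚ} (hc : 0 < c)
    (hsum : ∑ i, g i = c)
    (hcard : ¬ 1 < (Finset.univ.filter (fun i => 0 < g i)).card) :
    ∃ i0, g i0 = c ∧ ∀ i, i ≠ i0 → g i = 0 := by
  have hne : (Finset.univ.filter (fun i => 0 < g i)).Nonempty := by
    by_contra h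
    rw [Finset.not_nonempty_iff_eq_empty] at h
    have : ∀ i, g i = 0 := by
      intro i
      by_contra hgi
      have : i ∈ Finset.univ.filter (fun i => 0 < g i) := by
        simp [lt_of_le_of_ne (h0 i) (Ne.symm hgi)]
      simp [h] at this
    simp [Finset.sum_congr rfl (fun i _ => this i)] at hsum
    exact hc.ne' hsum.symm
  obtain ⟨i0, hi0⟩ := hne
  refine ⟨i0, ?_, ?_⟩
  · have hz : ∀ i ∈ Finset.univ, i ≠ i0 → g i = 0 := by
      intro i _ hne'
      by_contra hgi
      have hi : i ∈ Finset.univ.filter (fun i => 0 < g i) := by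
        simp [lt_of_le_of_ne (h0 i) (Ne.symm hgi)]
      exact hcard (Finset.one_lt_card.2 ⟨i, hi, i0, hi0, hne'⟩)
    rw [← hsum, Finset.sum_eq_single i0 hz (by simp)]
  · intro i hne'
    by_contra hgi
    have hi : i ∈ Finset.univ.filter (fun i => 0 < g i) := by
      simp [lt_of_le_of_ne (h0 i) (Ne.symm hgi)]
    exact hcard (Finset.one_lt_card.2 ⟨i, hi, i0, hi0, hne'⟩)

/-- reduction from interval target to split jobs on identical machines.
`X` has an integral partition with makespan at most `S + d·M` iff `X′` (which adds `d` jobs of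
the maximum length `n·M`) has a fractional allocation with at most `d` split jobs in which
every machine's completion time equals `S + d·M`. -/
theorem stmt_10 (n d : ℕ) (hn : 2 ≤ n) (m : ℕ) (hm : 0 < m)
    (x : Fin m → ℕ) (hx : ∀ j, 0 < x j)
    (M S : ℚ)
    (hM : ((Finset.univ.sup x : ℕ) : ℚ) = (n : ℚ) * M)
    (hS : (∑ j, (x j : ℚ)) = (n : ℚ) * S) :
    (∃ P : Fin m → Fin n, ∀ i : Fin n,
        (∑ j ∈ Finset.univ.filter (fun j => P j = i), (x j : ℚ)) ≤ S + (d : ℚ) * M) ↔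
    (∃ f : (Fin m ⊕ Fin d) → Fin n → ℚ,
        (∀ j i, 0 ≤ f j i) ∧
        (∀ j, ∑ i, f j i = (xPrime m d x j : ℚ)) ∧
        (Finset.univ.filter (fun j : Fin m ⊕ Fin d =>
            1 < (Finset.univ.filter (fun i => 0 < f j i)).card)).card ≤ d ∧
        (∀ i : Fin n, ∑ j, f j i = S + (d : ℚ) * M)) := by
  classical
  have hnQ : (0:ℚ) < n := by positivity
  have hsup_pos : 0 < Finset.univ.sup x :=
    lt_of_lt_of_le (hx ⟨0, hm⟩) (Finset.le_sup (Finset.mem_univ _))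
  have hsupQ : (0:ℚ) < ((Finset.univ.sup x : ℕ) : ℚ) := by exact_mod_cast hsup_pos
  constructor
  · rintro ⟨P, hP⟩
    set L : Fin n → ℚ := fun i => ∑ j ∈ Finset.univ.filter (fun j => P j = i), (x j : ℚ) with hL
    have hLsum : ∑ i, L i = (n : ℚ) * S := by
      rw [hL, ← hS]
      exact Finset.sum_fiberwise_of_maps_to (fun j _ => Finset.mem_univ (P j)) _
    have hLzero : d = 0 → ∀ i, L i = S + (d : ℚ) * M := by
      intro hd i
      subst hd
      have h1 : ∀ i ∈ (Finset.univ : Finset (Fin n)), L i ≤ S + (0:ℕ) * M := fun i _ => hP i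
      have h2 : ∑ i, L i = ∑ _i : Fin n, (S + ((0:ℕ):ℚ) * M) := by
        simp [hLsum, Finset.sum_const, mul_comm]
      exact (Finset.sum_eq_sum_iff_of_le h1).1 h2 i (Finset.mem_univ i)
    refine ⟨Sum.elim (fun j i => if P j = i then (x j : ℚ) else 0)
      (fun _ i => (S + (d : ℚ) * M - L i) / d), ?_, ?_, ?_, ?_⟩
    · rintro (j | k) i
      · dsimp only [Sum.elim_inl]
        split <;> positivity
      · dsimp only [Sum.elim_inr]
        have : L i ≤ S + (d : ℚ) * M := hP i
        have hd0 : (0:ℚ) ≤ (d:ℚ) := by positivity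
        have := sub_nonneg.2 this
        positivity
    · rintro (j | k)
      · simp [xPrime, Finset.sum_ite_eq']
      · have hd : 0 < d := k.pos
        have hdQ : ((d:ℚ)) ≠ 0 := by positivity
        dsimp only [Sum.elim_inr]
        rw [← Finset.sum_div, Finset.sum_sub_distrib, Finset.sum_const, hLsum,
          Finset.card_univ, Fintype.card_fin]
        simp only [xPrime, Sum.elim_inr]
        rw [hM]
        field_simp
        ring
    · have hsub : (Finset.univ.filter (fun j : Fin m ⊕ Fin d =>
          1 < (Finset.univ.filter (fun i => 0 < (Sum.elim (fun j i => if P j = i then (x j : ℚ) else 0)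
            (fun _ i => (S + (d : ℚ) * M - L i) / d)) j i)).card)).card ≤
            (Finset.univ.map ⟨Sum.inr, Sum.inr_injective⟩ : Finset (Fin m ⊕ Fin d)).card := by
        apply Finset.card_le_card
        rintro (j | k) ha
        · exfalso
          simp only [Finset.mem_filter, Finset.mem_univ, true_and] at ha
          have : (Finset.univ.filter (fun i => 0 < if P j = i then (x j : ℚ) else 0)) = {P j} := by
            ext i
            simp only [Finset.mem_filter, Finset.mem_univ, true_and, Finset.mem_singleton]
            constructor
            · intro h
              by_contra hne
              rw [if_neg (fun h' => hne h'.symm)] at h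
              exact lt_irrefl _ h
            · rintro rfl
              rw [if_pos rfl]
              exact_mod_cast hx j
          have ha' : 1 < ({P j} : Finset (Fin n)).card := by rw [← this]; exact ha
          simp at ha'
        · simp
      calc _ ≤ _ := hsub
        _ = d := by simp
    · intro i
      rw [Fintype.sum_sum_type]
      simp only [Sum.elim_inl, Sum.elim_inr]
      have h1 : (∑ j : Fin m, if P j = i then (x j : ℚ) else 0) = L i :=
        (Finset.sum_filter (fun j => P j = i) (fun j => (x j : ℚ))).symm
      rw [h1]
      rcases Nat.eq_zero_or_pos d with hd | hd
      · subst hd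
        simp [hLzero rfl i]
      · have hdQ : ((d:ℚ)) ≠ 0 := by positivity
        rw [Finset.sum_const, Finset.card_univ, Fintype.card_fin, nsmul_eq_mul]
        field_simp
        ring
  · rintro ⟨f, h0, hrow, hsplit, hcol⟩
    set sup : ℚ := ((Finset.univ.sup x : ℕ) : ℚ) with hsupdef
    have hrowl : ∀ j : Fin m, ∑ i, f (Sum.inl j) i = (x j : ℚ) := by
      intro j; simpa [xPrime] using hrow (Sum.inl j)
    have hrowr : ∀ k : Fin d, ∑ i, f (Sum.inr k) i = sup := by
      intro k; simpa [xPrime] using hrow (Sum.inr k)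
    set SO : Finset (Fin m) := Finset.univ.filter
      (fun j => 1 < (Finset.univ.filter (fun i => 0 < f (Sum.inl j) i)).card) with hSO
    set SB : Finset (Fin d) := Finset.univ.filter
      (fun k => 1 < (Finset.univ.filter (fun i => 0 < f (Sum.inr k) i)).card) with hSB
    set UB : Finset (Fin d) := Finset.univ.filter
      (fun k => ¬ 1 < (Finset.univ.filter (fun i => 0 < f (Sum.inr k) i)).card) with hUB
    -- machine of each unsplit big job
    have hbex : ∀ k ∈ UB, ∃ i0, f (Sum.inr k) i0 = sup ∧ ∀ i, i ≠ i0 → f (Sum.inr k) i = 0 := by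
      intro k hk
      refine unsplit_struct _ (h0 _) hsupQ (hrowr k) ?_
      simpa [hUB] using hk
    have i0 : Fin n := ⟨0, by omega⟩
    set b : Fin d → Fin n := fun k => if hk : k ∈ UB then (hbex k hk).choose else i0 with hb
    have hbspec : ∀ k ∈ UB, f (Sum.inr k) (b k) = sup := by
      intro k hk
      rw [hb]; dsimp only
      rw [dif_pos hk]
      exact (hbex k hk).choose_spec.1
    -- machine of each unsplit original job
    have hpex : ∀ j ∉ SO, ∃ i0, f (Sum.inl j) i0 = (x j : ℚ) ∧
        ∀ i, i ≠ i0 → f (Sum.inl j) i = 0 := by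
      intro j hj
      refine unsplit_struct _ (h0 _) (by exact_mod_cast hx j) (hrowl j) ?_
      simpa [hSO] using hj
    set P0 : Fin m → Fin n := fun j => if hj : j ∉ SO then (hpex j hj).choose else i0 with hP0
    have hP0spec : ∀ j ∉ SO, f (Sum.inl j) (P0 j) = (x j : ℚ) := by
      intro j hj
      rw [hP0]; dsimp only
      rw [dif_pos hj]
      exact (hpex j hj).choose_spec.1
    -- cardinalities
    have hcards : SO.card + SB.card ≤ d := by
      have hdisj : Disjoint (SO.image Sum.inl) (SB.image (Sum.inr : Fin d → Fin m ⊕ Fin d)) := by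
        simp [Finset.disjoint_left]
      have hsub : (SO.image Sum.inl) ∪ (SB.image Sum.inr) ⊆
          Finset.univ.filter (fun j : Fin m ⊕ Fin d =>
            1 < (Finset.univ.filter (fun i => 0 < f j i)).card) := by
        intro a ha
        rcases Finset.mem_union.1 ha with h | h
        · obtain ⟨j, hj, rfl⟩ := Finset.mem_image.1 h
          simp only [hSO, Finset.mem_filter, Finset.mem_univ, true_and] at hj ⊢
          exact hj
        · obtain ⟨k, hk, rfl⟩ := Finset.mem_image.1 h
          simp only [hSB, Finset.mem_filter, Finset.mem_univ, true_and] at hk ⊢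
          exact hk
      calc SO.card + SB.card
          = (SO.image Sum.inl ∪ SB.image Sum.inr).card := by
            rw [Finset.card_union_of_disjoint hdisj,
              Finset.card_image_of_injective _ Sum.inl_injective,
              Finset.card_image_of_injective _ Sum.inr_injective]
        _ ≤ _ := Finset.card_le_card hsub
        _ ≤ d := hsplit
    have hUBcard : SB.card + UB.card = d := by
      have := Finset.card_filter_add_card_filter_not (s := (Finset.univ : Finset (Fin d)))
        (p := fun k => 1 < (Finset.univ.filter (fun i => 0 < f (Sum.inr k) i)).card)
      simpa [hSB, hUB] using this
    have hSOUB : SO.card ≤ UB.card := by omega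
    -- the assignment
    have key : ∃ P : Fin m → Fin n, (∀ j, j ∉ SO → f (Sum.inl j) (P j) = (x j : ℚ)) ∧
        ∀ i : Fin n, ((Finset.univ.filter (fun j => P j = i)).filter (· ∈ SO)).card ≤
          (UB.filter (fun k => b k = i)).card := by
      rcases Finset.eq_empty_or_nonempty SO with hSOe | hSOne
      · refine ⟨P0, fun j hj => hP0spec j hj, fun i => ?_⟩
        have : ((Finset.univ.filter (fun j => P0 j = i)).filter (· ∈ SO)) = ∅ := by
          rw [hSOe]; simp
        simp [this]
      · have hdpos : 0 < d := by
          have : 0 < SO.card := Finset.card_pos.2 hSOne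
          omega
        have : Nonempty (Fin d) := ⟨⟨0, hdpos⟩⟩
        obtain ⟨φ, hφmem, hφinj⟩ := Set.Finite.exists_injOn_of_encard_le
          (s := (SO : Set (Fin m))) (t := (UB : Set (Fin d))) (Set.toFinite _)
          (by rw [Set.encard_coe_eq_coe_finsetCard, Set.encard_coe_eq_coe_finsetCard]
              exact_mod_cast hSOUB)
        refine ⟨fun j => if j ∈ SO then b (φ j) else P0 j, ?_, ?_⟩
        · intro j hj
          show f (Sum.inl j) (if j ∈ SO then b (φ j) else P0 j) = (x j : ℚ)
          rw [if_neg hj]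
          exact hP0spec j hj
        · intro i
          apply Finset.card_le_card_of_injOn φ
          · intro j hj
            simp only [Finset.mem_coe, Finset.mem_filter, Finset.mem_univ, true_and] at hj
            obtain ⟨hPj, hjSO⟩ := hj
            rw [if_pos hjSO] at hPj
            have hφj : φ j ∈ UB := hφmem (by exact_mod_cast hjSO)
            exact Finset.mem_filter.2 ⟨hφj, hPj⟩
          · apply Set.InjOn.mono _ hφinj
            intro j hj
            simp only [Finset.coe_filter, Set.mem_setOf_eq] at hj
            exact_mod_cast hj.2
    obtain ⟨P, hPun, hPcard⟩ := key
    refine ⟨P, fun i => ?_⟩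
    set A := Finset.univ.filter (fun j => P j = i) with hA
    have hsplitsum : ∑ j ∈ A.filter (· ∈ SO), (x j : ℚ) + ∑ j ∈ A.filter (¬ · ∈ SO), (x j : ℚ)
        = ∑ j ∈ A, (x j : ℚ) := Finset.sum_filter_add_sum_filter_not A _ _
    have hbound1 : ∑ j ∈ A.filter (¬ · ∈ SO), (x j : ℚ) ≤ ∑ j : Fin m, f (Sum.inl j) i := by
      have heq : ∑ j ∈ A.filter (¬ · ∈ SO), (x j : ℚ)
          = ∑ j ∈ A.filter (¬ · ∈ SO), f (Sum.inl j) i := by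
        apply Finset.sum_congr rfl
        intro j hj
        simp only [Finset.mem_filter, Finset.mem_univ, true_and, hA] at hj
        rw [← hj.1, hPun j hj.2]
      rw [heq]
      exact Finset.sum_le_sum_of_subset_of_nonneg (Finset.subset_univ _)
        (fun j _ _ => h0 _ _)
    have hbound2 : ∑ j ∈ A.filter (· ∈ SO), (x j : ℚ) ≤ ∑ k : Fin d, f (Sum.inr k) i := by
      calc ∑ j ∈ A.filter (· ∈ SO), (x j : ℚ)
          ≤ ∑ _j ∈ A.filter (· ∈ SO), sup := by
            apply Finset.sum_le_sum
            intro j _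
            exact_mod_cast Nat.cast_le.2 (Finset.le_sup (Finset.mem_univ j))
        _ = ((A.filter (· ∈ SO)).card : ℚ) * sup := by
            rw [Finset.sum_const, nsmul_eq_mul]
        _ ≤ ((UB.filter (fun k => b k = i)).card : ℚ) * sup := by
            apply mul_le_mul_of_nonneg_right _ hsupQ.le
            exact_mod_cast hPcard i
        _ = ∑ k ∈ UB.filter (fun k => b k = i), f (Sum.inr k) i := by
            have heq : ∑ k ∈ UB.filter (fun k => b k = i), f (Sum.inr k) i
                = ∑ _k ∈ UB.filter (fun k => b k = i), sup := by
              apply Finset.sum_congr rfl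
              intro k hk
              simp only [Finset.mem_filter] at hk
              rw [← hk.2]
              exact hbspec k hk.1
            rw [heq, Finset.sum_const, nsmul_eq_mul]
        _ ≤ ∑ k : Fin d, f (Sum.inr k) i :=
            Finset.sum_le_sum_of_subset_of_nonneg (Finset.subset_univ _) (fun k _ _ => h0 _ _)
    have htotal : ∑ j : Fin m, f (Sum.inl j) i + ∑ k : Fin d, f (Sum.inr k) i
        = S + (d : ℚ) * M := by
      have := hcol i
      rw [Fintype.sum_sum_type] at this
      exact this
    calc ∑ j ∈ A, (x j : ℚ)
        = ∑ j ∈ A.filter (· ∈ SO), (x j : ℚ) + ∑ j ∈ A.filter (¬ · ∈ SO), (x j : ℚ) :=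
          hsplitsum.symm
      _ ≤ ∑ k : Fin d, f (Sum.inr k) i + ∑ j : Fin m, f (Sum.inl j) i :=
          add_le_add hbound2 hbound1
      _ = S + (d : ℚ) * M := by rw [add_comm]; exact htotal
end

section
/- Reduction from split jobs to interval target (uniform machines). Fix integers n ≥ 2 and s ≥ 0 and a rational t ≥ 0. Let X be a list of m > s jobs with positive integer lengths, let S = (Σ_j x_j)/A, and let X′ be obtained from X by removing some s longest jobs. Then X admits a fractional allocation among the n machines with at most s split jobs and makespan at most (1+t)·S if and only if X′ admits an integral partition among the n machines with makespan at most (1+t)·S. -/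
/-- reduction from split jobs to interval target (uniform machines).
`X` admits a fractional allocation with at most `s` split jobs and makespan at most `(1+t)·S`
iff `X′ = X` minus some `s` longest jobs admits an integral partition with makespan
at most `(1+t)·S`. -/
theorem stmt_11 (m n s : ℕ) (hn : 2 ≤ n) (hm : s < m)
    (t : ℚ) (ht : 0 ≤ t)
    (x : Fin m → ℕ) (hx : ∀ j, 0 < x j)
    (r : Fin n → ℕ) (hr : ∀ i, 0 < r i)
    (S : ℚ) (hS : S = (∑ j, (x j : ℚ)) / ((∑ i, r i : ℕ) : ℚ))
    (T : Finset (Fin m)) (hT : T.card = s)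
    (hlong : ∀ j ∉ T, ∀ j' ∈ T, x j ≤ x j') :
    (∃ f : Fin m → Fin n → ℚ,
        (∀ j i, 0 ≤ f j i) ∧
        (∀ j, ∑ i, f j i = (x j : ℚ)) ∧
        (Finset.univ.filter (fun j =>
            1 < (Finset.univ.filter (fun i => 0 < f j i)).card)).card ≤ s ∧
        (∀ i, (∑ j, f j i) / (r i : ℚ) ≤ (1 + t) * S)) ↔
    (∃ P : Fin m → Fin n, ∀ i,
        (∑ j ∈ Tᶜ.filter (fun j => P j = i), (x j : ℚ)) / (r i : ℚ) ≤ (1 + t) * S) := by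
  classical
  have hne_n : Nonempty (Fin n) := ⟨⟨0, by omega⟩⟩
  have hne_m : Nonempty (Fin m) := ⟨⟨0, by omega⟩⟩
  have hA0 : (0:ℚ) < ((∑ i, r i : ℕ) : ℚ) := by
    have : 0 < ∑ i, r i :=
      Finset.sum_pos (fun i _ => hr i) ⟨⟨0, by omega⟩, Finset.mem_univ _⟩
    exact_mod_cast this
  have hxsum : 0 ≤ ∑ j, (x j : ℚ) :=
    Finset.sum_nonneg (fun j _ => by positivity)
  have hS0 : 0 ≤ S := by rw [hS]; positivity
  have hri : ∀ i, (0:ℚ) < (r i : ℚ) := fun i => by exact_mod_cast hr i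
  constructor
  · rintro ⟨f, hf0, hfsum, hsplit, hload⟩
    set Q : Finset (Fin m) := Finset.univ.filter (fun j =>
        1 < (Finset.univ.filter (fun i => 0 < f j i)).card) with hQdef
    -- unsplit jobs sit fully on one machine
    have hunsplit : ∀ j, ∃ i, j ∉ Q → f j i = (x j : ℚ) := by
      intro j
      by_cases hj : j ∈ Q
      · exact ⟨Classical.arbitrary _, fun h => absurd hj h⟩
      have hcard : (Finset.univ.filter (fun i => 0 < f j i)).card ≤ 1 := by
        by_contra h
        exact hj (Finset.mem_filter.mpr ⟨Finset.mem_univ _, by omega⟩)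
      have hpos : ∃ i, 0 < f j i := by
        by_contra h
        push_neg at h
        have h0 : ∑ i, f j i = 0 :=
          Finset.sum_eq_zero (fun i _ => le_antisymm (h i) (hf0 j i))
        rw [hfsum j] at h0
        have hxj := hx j
        have : (x j : ℚ) > 0 := by exact_mod_cast hxj
        linarith
      obtain ⟨i0, hi0⟩ := hpos
      refine ⟨i0, fun _ => ?_⟩
      have hz : ∀ i, i ≠ i0 → f j i = 0 := by
        intro i hi
        by_contra hne
        have hip : 0 < f j i := lt_of_le_of_ne (hf0 j i) (Ne.symm hne)
        have hsub : ({i, i0} : Finset (Fin n)) ⊆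
            Finset.univ.filter (fun i => 0 < f j i) := by
          intro a ha
          simp only [Finset.mem_insert, Finset.mem_singleton] at ha
          rcases ha with rfl | rfl <;> simp [hip, hi0]
        have h2 : 2 ≤ (Finset.univ.filter (fun i => 0 < f j i)).card := by
          have : ({i, i0} : Finset (Fin n)).card = 2 := by
            rw [Finset.card_insert_of_notMem (by simp [hi]), Finset.card_singleton]
          have hc := Finset.card_le_card hsub
          omega
        omega
      calc f j i0 = ∑ i, f j i := by
            rw [Finset.sum_eq_single i0]
            · exact fun i _ hi => hz i hi
            · exact fun h => absurd (Finset.mem_univ i0) h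
        _ = (x j : ℚ) := hfsum j
    choose g hg using hunsplit
    -- injection from split jobs outside T into T minus split jobs
    have hQcard : Q.card ≤ s := hsplit
    have hcards : (Q \ T).card ≤ (T \ Q).card := by
      have h1 := Finset.card_sdiff_add_card_inter Q T
      have h2 := Finset.card_sdiff_add_card_inter T Q
      have h3 : (Q ∩ T).card = (T ∩ Q).card := by rw [Finset.inter_comm]
      omega
    obtain ⟨ι, hι1, hι2⟩ :
        ∃ ι : Fin m → Fin m, (∀ a ∈ Q \ T, ι a ∈ T \ Q) ∧
          Set.InjOn ι (Q \ T : Finset (Fin m)) := by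
      obtain ⟨ι, h1, h2⟩ := Set.Finite.exists_injOn_of_encard_le
        (s := ((Q \ T : Finset (Fin m)) : Set (Fin m)))
        (t := ((T \ Q : Finset (Fin m)) : Set (Fin m)))
        (Finset.finite_toSet _)
        (by rw [Set.encard_coe_eq_coe_finsetCard, Set.encard_coe_eq_coe_finsetCard]
            exact_mod_cast hcards)
      exact ⟨ι, fun a ha => by simpa using h1 (by simpa using ha), h2⟩
    refine ⟨fun j => if j ∈ Q then g (ι j) else g j, fun i => ?_⟩
    set P : Fin m → Fin n := fun j => if j ∈ Q then g (ι j) else g j with hP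
    set F : Finset (Fin m) := Tᶜ.filter (fun j => P j = i) with hF
    set F₁ : Finset (Fin m) := F.filter (fun j => j ∉ Q) with hF1
    set F₂ : Finset (Fin m) := F.filter (fun j => j ∈ Q) with hF2
    have hFsplit : ∑ j ∈ F, (x j : ℚ) = (∑ j ∈ F₂, (x j:ℚ)) + ∑ j ∈ F₁, (x j:ℚ) :=
      (Finset.sum_filter_add_sum_filter_not F (fun j => j ∈ Q) _).symm
    have hF1sum : ∑ j ∈ F₁, (x j : ℚ) = ∑ j ∈ F₁, f j i := by
      refine Finset.sum_congr rfl (fun j hj => ?_)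
      simp only [hF1, Finset.mem_filter, hF, Finset.mem_compl] at hj
      obtain ⟨⟨hjT, hjP⟩, hjQ⟩ := hj
      have : g j = i := by simpa [hP, hjQ] using hjP
      rw [← this, hg j hjQ]
    have hF2mem : ∀ j ∈ F₂, j ∈ Q \ T := by
      intro j hj
      simp only [hF2, Finset.mem_filter, hF, Finset.mem_compl] at hj
      exact Finset.mem_sdiff.mpr ⟨hj.2, hj.1.1⟩
    have hF2sum : ∑ j ∈ F₂, (x j : ℚ) ≤ ∑ j ∈ F₂.image ι, f j i := by
      have step1 : ∑ j ∈ F₂, (x j : ℚ) ≤ ∑ j ∈ F₂, (x (ι j) : ℚ) := by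
        refine Finset.sum_le_sum (fun j hj => ?_)
        have hjm := hF2mem j hj
        have hjT : j ∉ T := (Finset.mem_sdiff.mp hjm).2
        have hιT : ι j ∈ T := (Finset.mem_sdiff.mp (hι1 j hjm)).1
        exact_mod_cast hlong j hjT (ι j) hιT
      have step2 : ∑ j ∈ F₂, (x (ι j) : ℚ) = ∑ j ∈ F₂.image ι, (x j : ℚ) := by
        rw [Finset.sum_image]
        intro a ha b hb hab
        exact hι2 (by simpa using hF2mem a ha) (by simpa using hF2mem b hb) hab
      have step3 : ∑ j ∈ F₂.image ι, (x j : ℚ) = ∑ j ∈ F₂.image ι, f j i := by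
        refine Finset.sum_congr rfl (fun j' hj' => ?_)
        obtain ⟨j, hj, rfl⟩ := Finset.mem_image.mp hj'
        have hjm := hF2mem j hj
        have hιQ : ι j ∉ Q := (Finset.mem_sdiff.mp (hι1 j hjm)).2
        have hjQ : j ∈ Q := (Finset.mem_sdiff.mp hjm).1
        have hPj : P j = i := by
          simp only [hF2, Finset.mem_filter, hF] at hj
          exact hj.1.2
        have : g (ι j) = i := by simpa [hP, hjQ] using hPj
        rw [← this, hg (ι j) hιQ]
      calc ∑ j ∈ F₂, (x j : ℚ) ≤ ∑ j ∈ F₂, (x (ι j) : ℚ) := step1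
        _ = ∑ j ∈ F₂.image ι, (x j : ℚ) := step2
        _ = ∑ j ∈ F₂.image ι, f j i := step3
    have hdisj : Disjoint F₁ (F₂.image ι) := by
      refine Finset.disjoint_left.mpr (fun a ha hb => ?_)
      obtain ⟨j, hj, rfl⟩ := Finset.mem_image.mp hb
      have : ι j ∈ T := (Finset.mem_sdiff.mp (hι1 j (hF2mem j hj))).1
      simp only [hF1, Finset.mem_filter, hF, Finset.mem_compl] at ha
      exact ha.1.1 this
    have hkey : ∑ j ∈ F, (x j : ℚ) ≤ ∑ j, f j i := by
      calc ∑ j ∈ F, (x j : ℚ)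
          = (∑ j ∈ F₂, (x j:ℚ)) + ∑ j ∈ F₁, (x j:ℚ) := hFsplit
        _ ≤ (∑ j ∈ F₂.image ι, f j i) + ∑ j ∈ F₁, f j i := by
            rw [hF1sum]; exact add_le_add hF2sum le_rfl
        _ = ∑ j ∈ F₁ ∪ F₂.image ι, f j i := by
            rw [Finset.sum_union hdisj]; ring
        _ ≤ ∑ j, f j i := by
            refine Finset.sum_le_sum_of_subset_of_nonneg (Finset.subset_univ _)
              (fun j _ _ => hf0 j i)
    calc (∑ j ∈ F, (x j : ℚ)) / (r i : ℚ) ≤ (∑ j, f j i) / (r i : ℚ) := by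
          gcongr
      _ ≤ (1 + t) * S := hload i
  · rintro ⟨P, hP⟩
    by_cases hTe : T = ∅
    · refine ⟨fun j i => if P j = i then (x j : ℚ) else 0, ?_, ?_, ?_, ?_⟩
      · intro j i; dsimp only; split <;> positivity
      · intro j; simp [Finset.sum_ite_eq]
      · have : (Finset.univ.filter (fun j =>
            1 < (Finset.univ.filter (fun i =>
              (0:ℚ) < if P j = i then (x j : ℚ) else 0)).card)) = ∅ := by
          refine Finset.filter_eq_empty_iff.mpr (fun j _ => ?_)
          have hsub : (Finset.univ.filter (fun i =>
              (0:ℚ) < if P j = i then (x j : ℚ) else 0)) ⊆ {P j} := by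
            intro a ha
            simp only [Finset.mem_filter] at ha
            by_contra hne
            simp only [Finset.mem_singleton] at hne
            rw [if_neg (fun h => hne h.symm)] at ha
            exact lt_irrefl 0 ha.2
          have := Finset.card_le_card hsub
          simp only [Finset.card_singleton] at this
          omega
        rw [this]; simp
      · intro i
        have : ∑ j, (if P j = i then (x j : ℚ) else 0)
            = ∑ j ∈ Tᶜ.filter (fun j => P j = i), (x j : ℚ) := by
          rw [Finset.sum_filter]
          subst hTe
          simp
        rw [this]; exact hP i
    · -- T nonempty : distribute T's jobs proportionally to leftover capacity
      have hTne : T.Nonempty := Finset.nonempty_iff_ne_empty.mpr hTe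
      set load : Fin n → ℚ := fun i => ∑ j ∈ Tᶜ.filter (fun j => P j = i), (x j : ℚ)
        with hloaddef
      set c : Fin n → ℚ := fun i => (1 + t) * S * (r i : ℚ) - load i with hcdef
      have hc0 : ∀ i, 0 ≤ c i := by
        intro i
        have := hP i
        have h2 : load i ≤ (1 + t) * S * (r i : ℚ) := by
          rw [div_le_iff₀ (hri i)] at this
          exact this
        simp only [hcdef]; linarith
      set C : ℚ := ∑ i, c i with hCdef
      have hloadsum : ∑ i, load i = ∑ j ∈ Tᶜ, (x j : ℚ) :=
        Finset.sum_fiberwise Tᶜ P (fun j => (x j : ℚ))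
      have hxT : 0 < ∑ j ∈ T, (x j : ℚ) := by
        refine Finset.sum_pos (fun j _ => ?_) hTne
        exact_mod_cast hx j
      have hCge : ∑ j ∈ T, (x j : ℚ) ≤ C := by
        have hCeq : C = (1 + t) * S * ((∑ i, r i : ℕ) : ℚ) - ∑ j ∈ Tᶜ, (x j : ℚ) := by
          simp only [hCdef, hcdef]
          rw [Finset.sum_sub_distrib, hloadsum, ← Finset.mul_sum]
          push_cast
          ring
        have hSA : S * ((∑ i, r i : ℕ) : ℚ) = ∑ j, (x j : ℚ) := by
          rw [hS, div_mul_cancel₀ _ (ne_of_gt hA0)]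
        have hsplitx : (∑ j ∈ T, (x j : ℚ)) + ∑ j ∈ Tᶜ, (x j : ℚ) = ∑ j, (x j : ℚ) :=
          Finset.sum_add_sum_compl T _
        have h1 : S * ((∑ i, r i : ℕ) : ℚ) ≤ (1 + t) * S * ((∑ i, r i : ℕ) : ℚ) := by
          nlinarith
        rw [hCeq]
        linarith
      have hC0 : 0 < C := lt_of_lt_of_le hxT hCge
      refine ⟨fun j i => if j ∈ T then (x j : ℚ) * c i / C
        else if P j = i then (x j : ℚ) else 0, ?_, ?_, ?_, ?_⟩
      · intro j i
        dsimp only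
        split
        · have := hc0 i
          positivity
        · split <;> positivity
      · intro j
        by_cases hj : j ∈ T
        · simp only [hj, if_true]
          rw [← Finset.sum_div, ← Finset.mul_sum, ← hCdef,
            mul_div_assoc, div_self (ne_of_gt hC0), mul_one]
        · simp [hj, Finset.sum_ite_eq]
      · have hsub : (Finset.univ.filter (fun j =>
            1 < (Finset.univ.filter (fun i =>
              (0:ℚ) < if j ∈ T then (x j : ℚ) * c i / C
                else if P j = i then (x j : ℚ) else 0)).card)) ⊆ T := by
          intro j hj
          by_contra hjT
          simp only [Finset.mem_filter, hjT, if_false] at hj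
          have hsub2 : (Finset.univ.filter (fun i =>
              (0:ℚ) < if P j = i then (x j : ℚ) else 0)) ⊆ {P j} := by
            intro a ha
            simp only [Finset.mem_filter] at ha
            by_contra hne
            simp only [Finset.mem_singleton] at hne
            rw [if_neg (fun h => hne h.symm)] at ha
            exact lt_irrefl 0 ha.2
          have := Finset.card_le_card hsub2
          simp only [Finset.card_singleton] at this
          omega
        calc _ ≤ T.card := Finset.card_le_card hsub
          _ = s := hT
      · intro i
        have hsum : ∑ j, (if j ∈ T then (x j : ℚ) * c i / C
            else if P j = i then (x j : ℚ) else 0)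
            = (∑ j ∈ T, (x j : ℚ)) * c i / C + load i := by
          rw [← Finset.sum_add_sum_compl T]
          congr 1
          · have he : ∀ j ∈ T, (if j ∈ T then (x j : ℚ) * c i / C
                else if P j = i then (x j : ℚ) else 0) = (x j : ℚ) * c i / C :=
              fun j hj => by simp [hj]
            rw [Finset.sum_congr rfl he, ← Finset.sum_div, ← Finset.sum_mul]
          · have he : ∀ j ∈ Tᶜ, (if j ∈ T then (x j : ℚ) * c i / C
                else if P j = i then (x j : ℚ) else 0)
                = if P j = i then (x j : ℚ) else 0 :=
              fun j hj => by simp [Finset.mem_compl.mp hj]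
            rw [Finset.sum_congr rfl he, ← Finset.sum_filter]
        have hbound : (∑ j ∈ T, (x j : ℚ)) * c i / C ≤ c i := by
          rw [div_le_iff₀ hC0]
          have := hc0 i
          nlinarith
        have htotal : ∑ j, (if j ∈ T then (x j : ℚ) * c i / C
            else if P j = i then (x j : ℚ) else 0) ≤ (1 + t) * S * (r i : ℚ) := by
          rw [hsum]
          have : c i + load i = (1 + t) * S * (r i : ℚ) := by simp [hcdef]
          linarith
        rw [div_le_iff₀ (hri i)]
        exact htotal
end

section
/- Let s ≥ 0 be an integer. For every fractional allocation of the jobs among the n machines with at most s split jobs whose makespan B satisfies B ≠ S and B ≠ q/r_i for every integer q and every machine i, there exists a fractional allocation with at most s split jobs whose makespan is strictly smaller than B. (Consequently, any allocation minimizing the makespan among allocations with at most s split jobs is either perfect or has makespan of the form q/r_i with q an integer.) -/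
open Finset

lemma stmt12_aux (m n : ℕ) (x : Fin m → ℕ) (r : Fin n → ℕ) (hr : ∀ i, 0 < r i)
    (B : ℚ) (hBq : ∀ (q : ℤ) (i : Fin n), B ≠ (q : ℚ) / (r i : ℚ))
    (i₀ : Fin n) (k : ℕ) :
    ∀ f : Fin m → Fin n → ℚ, (∀ j i, 0 ≤ f j i) → (∀ j, ∑ i, f j i = (x j : ℚ)) →
    (∀ i, ∑ j, f j i ≤ B * r i) → (∑ j, f j i₀ < B * r i₀) →
    (Finset.univ.filter (fun i => ∑ j, f j i = B * r i)).card ≤ k →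
    ∃ f' : Fin m → Fin n → ℚ,
      (∀ j i, 0 ≤ f' j i) ∧ (∀ j, ∑ i, f' j i = (x j : ℚ)) ∧
      (Finset.univ.filter (fun j => 1 < (Finset.univ.filter (fun i => 0 < f' j i)).card)
        ⊆ Finset.univ.filter (fun j => 1 < (Finset.univ.filter (fun i => 0 < f j i)).card)) ∧
      (∀ i, ∑ j, f' j i < B * r i) := by
  induction k with
  | zero =>
    intro f hf0 hfsum hle h0 hcard
    refine ⟨f, hf0, hfsum, subset_rfl, fun i => ?_⟩
    rcases lt_or_eq_of_le (hle i) with h | h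
    · exact h
    · exfalso
      have : i ∈ Finset.univ.filter (fun i => ∑ j, f j i = B * r i) := by
        simp [h]
      have := Finset.card_pos.2 ⟨i, this⟩
      omega
  | succ k ih =>
    intro f hf0 hfsum hle h0 hcard
    by_cases hne : (Finset.univ.filter (fun i => ∑ j, f j i = B * r i)).Nonempty
    · obtain ⟨i₁, hi₁mem⟩ := hne
      have hi₁ : ∑ j, f j i₁ = B * r i₁ := by
        simpa using hi₁mem
      have hi₀₁ : i₀ ≠ i₁ := by
        intro h; rw [h] at h0; exact absurd hi₁ (ne_of_lt h0)
      -- find a split job with positive mass on i₁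
      have hjex : ∃ j, 0 < f j i₁ ∧
          1 < (Finset.univ.filter (fun i => 0 < f j i)).card := by
        by_contra hcon
        push_neg at hcon
        set P := Finset.univ.filter (fun j => 0 < f j i₁) with hP
        have hwhole : ∀ j ∈ P, f j i₁ = (x j : ℚ) := by
          intro j hj
          have hjpos : 0 < f j i₁ := by simpa [hP] using hj
          have hc1 : (Finset.univ.filter (fun i => 0 < f j i)).card ≤ 1 :=
            hcon j hjpos
          have hzero : ∀ b, b ≠ i₁ → f j b = 0 := by
            intro b hb
            by_contra hb0
            have hbpos : 0 < f j b := lt_of_le_of_ne (hf0 j b) (Ne.symm hb0)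
            have h1 : b ∈ Finset.univ.filter (fun i => 0 < f j i) := by simp [hbpos]
            have h2 : i₁ ∈ Finset.univ.filter (fun i => 0 < f j i) := by simp [hjpos]
            have := Finset.card_le_one.1 hc1 b h1 i₁ h2
            exact hb this
          rw [← hfsum j, Finset.sum_eq_single i₁ (fun b _ hb => hzero b hb)
            (fun h => absurd (Finset.mem_univ i₁) h)]
        have hsum : ∑ j, f j i₁ = ((∑ j ∈ P, x j : ℕ) : ℚ) := by
          rw [← Finset.sum_filter_of_ne (s := Finset.univ) (p := fun j => 0 < f j i₁)
            (fun j _ h => lt_of_le_of_ne (hf0 j i₁) (Ne.symm h))]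
          push_cast
          exact Finset.sum_congr rfl hwhole
        have hBeq : B = (((∑ j ∈ P, x j : ℕ) : ℤ) : ℚ) / (r i₁ : ℚ) := by
          have hr1 : ((r i₁ : ℚ)) ≠ 0 := by
            exact_mod_cast (hr i₁).ne'
          rw [eq_div_iff hr1]
          push_cast
          rw [← hi₁, hsum]
          push_cast
          ring
        exact hBq _ _ hBeq
      obtain ⟨j0, hjpos, hjsplit⟩ := hjex
      -- the amount to move
      set ε : ℚ := min (f j0 i₁) ((B * r i₀ - ∑ j', f j' i₀) / 2) with hε
      have hgap : 0 < B * r i₀ - ∑ j', f j' i₀ := by linarith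
      have hεpos : 0 < ε := lt_min hjpos (by linarith)
      have hε1 : ε ≤ f j0 i₁ := min_le_left _ _
      have hε2 : ε < B * r i₀ - ∑ j', f j' i₀ := lt_of_le_of_lt (min_le_right _ _) (by linarith)
      -- the perturbation
      set δ : Fin n → ℚ := fun i' => (if i' = i₀ then ε else 0) - (if i' = i₁ then ε else 0)
        with hδ
      set g : Fin m → Fin n → ℚ := fun j' i' => f j' i' + (if j' = j0 then δ i' else 0) with hg
      have hδsum : ∑ i', δ i' = 0 := by
        simp [hδ, Finset.sum_sub_distrib, Finset.sum_ite_eq']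
      have hg0 : ∀ j' i', 0 ≤ g j' i' := by
        intro j' i'
        rcases eq_or_ne j' j0 with rfl | hj'
        · rcases eq_or_ne i' i₀ with rfl | h0'
          · simp [hg, hδ, hi₀₁]
            linarith [hf0 j' i']
          · rcases eq_or_ne i' i₁ with rfl | h1'
            · simp [hg, hδ, h0']
              linarith
            · simp [hg, hδ, h0', h1']
              exact hf0 j' i'
        · simpa [hg, hj'] using hf0 j' i'
      have hgsum : ∀ j', ∑ i', g j' i' = (x j' : ℚ) := by
        intro j'
        rcases eq_or_ne j' j0 with rfl | hj'
        · simp [hg, Finset.sum_add_distrib, hδsum, hfsum]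
        · simp [hg, hj', hfsum]
      have hload : ∀ i', ∑ j', g j' i' = (∑ j', f j' i') + δ i' := by
        intro i'
        simp only [hg]
        rw [Finset.sum_add_distrib, Finset.sum_ite_eq' Finset.univ j0 (fun _ => δ i')]
        simp
      have hδ0 : δ i₀ = ε := by simp [hδ, hi₀₁]
      have hδ1 : δ i₁ = -ε := by simp [hδ, Ne.symm hi₀₁]
      have hgle : ∀ i, ∑ j', g j' i ≤ B * r i := by
        intro i
        rw [hload]
        rcases eq_or_ne i i₀ with rfl | h0'
        · rw [hδ0]; linarith
        · rcases eq_or_ne i i₁ with rfl | h1'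
          · rw [hδ1, hi₁]; linarith
          · have : δ i = 0 := by simp [hδ, h0', h1']
            rw [this, add_zero]; exact hle i
      have hg0' : ∑ j', g j' i₀ < B * r i₀ := by
        rw [hload, hδ0]; linarith
      have hgcard : (Finset.univ.filter (fun i => ∑ j', g j' i = B * r i)).card ≤ k := by
        have hsub : Finset.univ.filter (fun i => ∑ j', g j' i = B * r i) ⊆
            (Finset.univ.filter (fun i => ∑ j', f j' i = B * r i)).erase i₁ := by
          intro i hi
          have hi' : ∑ j', g j' i = B * r i := by simpa using hi
          rcases eq_or_ne i i₁ with rfl | h1'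
          · exfalso
            rw [hload, hδ1, hi₁] at hi'
            linarith
          · rcases eq_or_ne i i₀ with rfl | h0'
            · exact absurd hi' (ne_of_lt hg0')
            · have : δ i = 0 := by simp [hδ, h0', h1']
              rw [hload, this, add_zero] at hi'
              exact Finset.mem_erase.2 ⟨h1', by simp [hi']⟩
        calc _ ≤ _ := Finset.card_le_card hsub
          _ = _ - 1 := Finset.card_erase_of_mem hi₁mem
          _ ≤ k := by omega
      obtain ⟨f', h1, h2, h3, h4⟩ := ih g hg0 hgsum hgle hg0' hgcard
      refine ⟨f', h1, h2, ?_, h4⟩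
      refine h3.trans ?_
      intro j' hj'
      rcases eq_or_ne j' j0 with rfl | hne'
      · simp only [Finset.mem_filter, Finset.mem_univ, true_and]
        exact hjsplit
      · have : (fun i => 0 < g j' i) = (fun i => 0 < f j' i) := by
          funext i; simp [hg, hne']
        simpa [this] using hj'
    · -- no machine at the bound: all strict
      refine ⟨f, hf0, hfsum, subset_rfl, fun i => ?_⟩
      rcases lt_or_eq_of_le (hle i) with h | h
      · exact h
      · exact absurd ⟨i, by simp [h]⟩ hne



/-- if an allocation with at most `s` split jobs has makespan `B` with `B ≠ S`
and `B ≠ q / r i` for every integer `q` and machine `i`, then there is an allocation with at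
most `s` split jobs and strictly smaller makespan. -/
theorem stmt_12 (m n s : ℕ) (hn : 0 < n)
    (x : Fin m → ℕ) (hx : ∀ j, 0 < x j)
    (r : Fin n → ℕ) (hr : ∀ i, 0 < r i)
    (S : ℚ) (hS : S = (∑ j, (x j : ℚ)) / ((∑ i, r i : ℕ) : ℚ))
    (f : Fin m → Fin n → ℚ) (hf0 : ∀ j i, 0 ≤ f j i)
    (hfsum : ∀ j, ∑ i, f j i = (x j : ℚ))
    (hsplit : (Finset.univ.filter (fun j =>
        1 < (Finset.univ.filter (fun i => 0 < f j i)).card)).card ≤ s)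
    (B : ℚ)
    (hBub : ∀ i, (∑ j, f j i) / (r i : ℚ) ≤ B)
    (hBmem : ∃ i, (∑ j, f j i) / (r i : ℚ) = B)
    (hBS : B ≠ S)
    (hBq : ∀ (q : ℤ) (i : Fin n), B ≠ (q : ℚ) / (r i : ℚ)) :
    ∃ f' : Fin m → Fin n → ℚ,
      (∀ j i, 0 ≤ f' j i) ∧
      (∀ j, ∑ i, f' j i = (x j : ℚ)) ∧
      (Finset.univ.filter (fun j =>
          1 < (Finset.univ.filter (fun i => 0 < f' j i)).card)).card ≤ s ∧
      (∀ i, (∑ j, f' j i) / (r i : ℚ) < B) := by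
  have hrQ : ∀ i, (0 : ℚ) < (r i : ℚ) := fun i => by exact_mod_cast hr i
  have hle : ∀ i, ∑ j, f j i ≤ B * r i := fun i =>
    (div_le_iff₀ (hrQ i)).1 (hBub i)
  -- some machine is strictly below B
  have hex : ∃ i₀, ∑ j, f j i₀ < B * r i₀ := by
    by_contra hcon
    push_neg at hcon
    have heq : ∀ i, ∑ j, f j i = B * r i := fun i => le_antisymm (hle i) (hcon i)
    have hA : (0 : ℚ) < ((∑ i, r i : ℕ) : ℚ) := by
      have : 0 < ∑ i, r i := Finset.sum_pos (fun i _ => hr i)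
        (Finset.univ_nonempty_iff.2 (Fin.pos_iff_nonempty.1 hn))
      exact_mod_cast this
    apply hBS
    rw [hS]
    rw [eq_div_iff (ne_of_gt hA)]
    have : ∑ j, (x j : ℚ) = ∑ i, ∑ j, f j i := by
      rw [Finset.sum_comm]
      exact Finset.sum_congr rfl (fun j _ => (hfsum j).symm)
    rw [this]
    push_cast
    rw [Finset.mul_sum]
    exact (Finset.sum_congr rfl (fun i _ => heq i)).symm
  obtain ⟨i₀, hi₀⟩ := hex
  obtain ⟨f', h1, h2, h3, h4⟩ := stmt12_aux m n x r hr B hBq i₀ n f hf0 hfsum hle hi₀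
    (le_trans (Finset.card_le_univ _) (by simp))
  refine ⟨f', h1, h2, le_trans (Finset.card_le_card h3) hsplit, fun i => ?_⟩
  exact (div_lt_iff₀ (hrQ i)).2 (h4 i)
end

section
/- Core of the FPTAS for splitting. Let s ≥ 0 be an integer, let X₁ be a set of s longest jobs of X and X₂ the remaining jobs, and let S = (Σ_{j∈X} x_j)/A. Then: (i) for every integral partition of X₂ among the n machines with makespan B, there exists a fractional allocation of all of X among the n machines in which at most the s jobs of X₁ are split and whose makespan is at most max(S, B); and (ii) for every fractional allocation of X among the n machines with at most s split jobs and makespan B′, there exists an integral partition of X₂ among the n machines with makespan at most B′. (Hence the minimum makespan over allocations of X with at most s split jobs equals max(S, minimum makespan over integral partitions of X₂).) -/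
lemma clamp_sum (C : ℕ → ℚ) (hmono : Monotone C) :
    ∀ (n : ℕ) (t : ℚ), C 0 ≤ t → t ≤ C n →
    ∑ i ∈ Finset.range n, min (C (i+1)) (max (C i) t)
      = t + ∑ i ∈ Finset.range n, C i - C 0 := by
  intro n
  induction n with
  | zero => intro t h0 h1; simp; linarith
  | succ n ih =>
    intro t h0 h1
    rw [Finset.sum_range_succ, Finset.sum_range_succ (f := C)]
    rcases le_or_gt t (C n) with h | h
    · rw [ih t h0 h]
      have h2 : max (C n) t = C n := max_eq_left h
      have h3 : min (C (n+1)) (C n) = C n := min_eq_right (hmono (Nat.le_succ n))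
      rw [h2, h3]; ring
    · have hlast : min (C (n+1)) (max (C n) t) = t := by
        rw [max_eq_right h.le, min_eq_right h1]
      rw [hlast]
      have hrest : ∀ i ∈ Finset.range n,
          min (C (i+1)) (max (C i) t) = C (i+1) := by
        intro i hi
        have hi' : i + 1 ≤ n := Finset.mem_range.mp hi
        have : C (i+1) ≤ t := le_trans (hmono hi') h.le
        rw [max_eq_right (le_trans (hmono (Nat.le_succ i)) this),
          min_eq_left this]
      rw [Finset.sum_congr rfl hrest]
      have hsh : ∑ i ∈ Finset.range (n+1), C i
          = ∑ i ∈ Finset.range n, C (i+1) + C 0 := Finset.sum_range_succ' C n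
      rw [Finset.sum_range_succ (f := C)] at hsh
      linarith

lemma pack (k n : ℕ) (x : Fin k → ℚ) (hx : ∀ j, 0 ≤ x j)
    (c : Fin n → ℚ) (hc : ∀ i, 0 ≤ c i) (htot : ∑ j, x j ≤ ∑ i, c i) :
    ∃ g : Fin k → Fin n → ℚ,
      (∀ j i, 0 ≤ g j i) ∧ (∀ j, ∑ i, g j i = x j) ∧ (∀ i, ∑ j, g j i ≤ c i) := by
  set x' : ℕ → ℚ := fun j => if h : j < k then x ⟨j, h⟩ else 0 with hx'
  set c' : ℕ → ℚ := fun i => if h : i < n then c ⟨i, h⟩ else 0 with hc'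
  have hx'0 : ∀ j, 0 ≤ x' j := by intro j; simp only [hx']; split <;> simp [hx _]
  have hc'0 : ∀ i, 0 ≤ c' i := by intro i; simp only [hc']; split <;> simp [hc _]
  set D : ℕ → ℚ := fun j => ∑ j' ∈ Finset.range j, x' j' with hD
  set C : ℕ → ℚ := fun i => ∑ i' ∈ Finset.range i, c' i' with hC
  have hDmono : Monotone D := by
    intro a b hab
    exact Finset.sum_le_sum_of_subset_of_nonneg
      (Finset.range_subset_range.mpr hab) (fun j _ _ => hx'0 j)
  have hCmono : Monotone C := by
    intro a b hab
    exact Finset.sum_le_sum_of_subset_of_nonneg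
      (Finset.range_subset_range.mpr hab) (fun i _ _ => hc'0 i)
  have hC0 : C 0 = 0 := by simp [hC]
  have hD0 : D 0 = 0 := by simp [hD]
  have hDk : D k = ∑ j, x j := by
    show ∑ j' ∈ Finset.range k, x' j' = _
    rw [← Fin.sum_univ_eq_sum_range x' k]
    exact Finset.sum_congr rfl (fun j _ => by simp [hx', j.isLt])
  have hCn : C n = ∑ i, c i := by
    show ∑ i' ∈ Finset.range n, c' i' = _
    rw [← Fin.sum_univ_eq_sum_range c' n]
    exact Finset.sum_congr rfl (fun i _ => by simp [hc', i.isLt])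
  have hDC : ∀ j : ℕ, j ≤ k → C 0 ≤ D j ∧ D j ≤ C n := by
    intro j hj
    constructor
    · rw [hC0, hD]
      exact Finset.sum_nonneg (fun j' _ => hx'0 j')
    · calc D j ≤ D k := hDmono hj
        _ ≤ C n := by rw [hDk, hCn]; exact htot
  set h : ℕ → ℚ → ℚ := fun i t => min (C (i+1)) (max (C i) t) with hh
  have hhmono : ∀ i : ℕ, Monotone (h i) := by
    intro i a b hab
    exact min_le_min le_rfl (max_le_max le_rfl hab)
  refine ⟨fun j i => h i.val (D (j.val+1)) - h i.val (D j.val), ?_, ?_, ?_⟩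
  · intro j i
    show 0 ≤ h i.val (D (j.val+1)) - h i.val (D j.val)
    exact sub_nonneg.mpr (hhmono i.val (hDmono (Nat.le_add_right j.val 1)))
  · intro j
    rw [Fin.sum_univ_eq_sum_range (fun i => h i (D (j.val+1)) - h i (D j.val)) n,
      Finset.sum_sub_distrib]
    have h1 := clamp_sum C hCmono n (D (j.val+1)) (hDC _ j.isLt).1 (hDC _ j.isLt).2
    have h2 := clamp_sum C hCmono n (D j.val) (hDC _ (le_of_lt j.isLt)).1
      (hDC _ (le_of_lt j.isLt)).2
    rw [hh]
    rw [h1, h2]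
    have hd : D (j.val + 1) = D j.val + x' j.val := Finset.sum_range_succ x' j.val
    have hxx : x' j.val = x j := by simp [hx', j.isLt]
    linarith
  · intro i
    rw [Fin.sum_univ_eq_sum_range (fun j => h i.val (D (j+1)) - h i.val (D j)) k,
      Finset.sum_range_sub (fun j => h i.val (D j)) k]
    have hF0 : h i.val (D 0) = C i.val := by
      rw [hD0, hh]
      have h1 : (0:ℚ) ≤ C i.val := hC0 ▸ hCmono (Nat.zero_le _)
      simp only []
      rw [max_eq_left h1, min_eq_right (hCmono (Nat.le_succ i.val))]
    have hFk : h i.val (D k) ≤ C (i.val+1) := min_le_left _ _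
    have hstep : C (i.val+1) = C i.val + c' i.val := Finset.sum_range_succ c' i.val
    have hcc : c' i.val = c i := by simp [hc', i.isLt]
    rw [hF0]
    linarith

set_option maxHeartbeats 1000000 in

/-- core of the FPTAS with splitting. `T` is a set of `s` longest jobs, `X₂` the
remaining jobs. (i) every integral partition of `X₂` with makespan at most `B` yields a
fractional allocation of all of `X` splitting only jobs of `T`, with makespan at most
`max S B`; (ii) every fractional allocation of `X` with at most `s` split jobs and makespan at
most `B′` yields an integral partition of `X₂` with makespan at most `B′`. -/
theorem stmt_13 (m n s : ℕ) (hn : 0 < n) (hm : s < m)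
    (x : Fin m → ℕ) (hx : ∀ j, 0 < x j)
    (r : Fin n → ℕ) (hr : ∀ i, 0 < r i)
    (S : ℚ) (hS : S = (∑ j, (x j : ℚ)) / ((∑ i, r i : ℕ) : ℚ))
    (T : Finset (Fin m)) (hT : T.card = s)
    (hlong : ∀ j ∉ T, ∀ j' ∈ T, x j ≤ x j') :
    -- (i)
    (∀ (B : ℚ) (P : Fin m → Fin n),
        (∀ i, (∑ j ∈ Tᶜ.filter (fun j => P j = i), (x j : ℚ)) / (r i : ℚ) ≤ B) →
        ∃ f : Fin m → Fin n → ℚ,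
          (∀ j i, 0 ≤ f j i) ∧
          (∀ j, ∑ i, f j i = (x j : ℚ)) ∧
          (∀ j, 1 < (Finset.univ.filter (fun i => 0 < f j i)).card → j ∈ T) ∧
          (∀ i, (∑ j, f j i) / (r i : ℚ) ≤ max S B)) ∧
    -- (ii)
    (∀ (B' : ℚ) (f : Fin m → Fin n → ℚ),
        (∀ j i, 0 ≤ f j i) →
        (∀ j, ∑ i, f j i = (x j : ℚ)) →
        (Finset.univ.filter (fun j =>
            1 < (Finset.univ.filter (fun i => 0 < f j i)).card)).card ≤ s →
        (∀ i, (∑ j, f j i) / (r i : ℚ) ≤ B') →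
        ∃ P : Fin m → Fin n,
          ∀ i, (∑ j ∈ Tᶜ.filter (fun j => P j = i), (x j : ℚ)) / (r i : ℚ) ≤ B') := by
  haveI : Nonempty (Fin n) := ⟨⟨0, hn⟩⟩
  have hri : ∀ i, (0:ℚ) < (r i : ℚ) := fun i => by exact_mod_cast hr i
  have hApos : (0:ℚ) < ((∑ i, r i : ℕ) : ℚ) := by
    have : 0 < ∑ i, r i := Finset.sum_pos (fun i _ => hr i) Finset.univ_nonempty
    exact_mod_cast this
  have hSA : S * ((∑ i, r i : ℕ) : ℚ) = ∑ j, (x j : ℚ) := by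
    rw [hS, div_mul_cancel₀ _ (ne_of_gt hApos)]
  constructor
  · -- part (i)
    intro B P hB
    set A : ℚ := ((∑ i, r i : ℕ) : ℚ) with hA
    set L : Fin n → ℚ := fun i => ∑ j ∈ Tᶜ.filter (fun j => P j = i), (x j : ℚ) with hL
    set c : Fin n → ℚ := fun i => max S B * (r i : ℚ) - L i with hc
    have hc0 : ∀ i, 0 ≤ c i := by
      intro i
      have h1 : L i ≤ B * (r i : ℚ) := (div_le_iff₀ (hri i)).mp (hB i)
      have h2 : B * (r i : ℚ) ≤ max S B * (r i : ℚ) :=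
        mul_le_mul_of_nonneg_right (le_max_right S B) (le_of_lt (hri i))
      simp only [hc]; linarith
    set e : {j // j ∈ T} ≃ Fin T.card := T.equivFin with he
    set y : Fin T.card → ℚ := fun j' => (x (e.symm j') : ℚ) with hy
    have hy0 : ∀ j', 0 ≤ y j' := fun j' => by positivity
    have hLsum : ∑ i, L i = ∑ j ∈ Tᶜ, (x j : ℚ) := by
      rw [hL]
      exact Finset.sum_fiberwise Tᶜ P (fun j => (x j : ℚ))
    have hysum : ∑ j', y j' = ∑ j ∈ T, (x j : ℚ) := by
      rw [hy, Equiv.sum_comp e.symm (fun a => (x a : ℚ))]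
      rw [← Finset.sum_attach T (fun j => (x j : ℚ))]
      rfl
    have htot : ∑ j', y j' ≤ ∑ i, c i := by
      have hsplitTot : ∑ j ∈ T, (x j:ℚ) + ∑ j ∈ Tᶜ, (x j:ℚ) = ∑ j, (x j:ℚ) :=
        Finset.sum_add_sum_compl T _
      have hcs : ∑ i, c i = max S B * A - ∑ j ∈ Tᶜ, (x j:ℚ) := by
        rw [hc]
        rw [Finset.sum_sub_distrib, ← Finset.mul_sum, hLsum, hA, Nat.cast_sum]
      have hSB : S * A ≤ max S B * A :=
        mul_le_mul_of_nonneg_right (le_max_left S B) (le_of_lt hApos)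
      rw [hysum, hcs]
      have := hSA
      linarith
    obtain ⟨g, hg0, hgrow, hgcol⟩ := pack T.card n y hy0 c hc0 htot
    refine ⟨fun j i => if hj : j ∈ T then g (e ⟨j, hj⟩) i
      else if P j = i then (x j : ℚ) else 0, ?_, ?_, ?_, ?_⟩
    · intro j i
      by_cases hj : j ∈ T
      · simp only [dif_pos hj]; exact hg0 _ i
      · simp only [dif_neg hj]; split <;> positivity
    · intro j
      by_cases hj : j ∈ T
      · simp only [dif_pos hj]
        rw [hgrow (e ⟨j, hj⟩)]
        simp [hy]
      · simp only [dif_neg hj]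
        simp
    · intro j hcard
      by_contra hj
      refine absurd hcard (Nat.not_lt.mpr ?_)
      have hsub : (Finset.univ.filter (fun i => (0:ℚ) <
          (fun j i => if hj' : j ∈ T then g (e ⟨j, hj'⟩) i
            else if P j = i then (x j:ℚ) else 0) j i))
          ⊆ {P j} := by
        intro i hi
        simp only [Finset.mem_filter, dif_neg hj] at hi
        rcases hi with ⟨-, hi⟩
        by_contra hne
        simp only [Finset.mem_singleton] at hne
        rw [if_neg (fun h => hne h.symm)] at hi
        exact lt_irrefl 0 hi
      calc _ ≤ ({P j} : Finset (Fin n)).card := Finset.card_le_card hsub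
        _ = 1 := Finset.card_singleton _
    · intro i
      rw [div_le_iff₀ (hri i)]
      have hsplit : ∑ j, (if hj : j ∈ T then g (e ⟨j, hj⟩) i
          else if P j = i then (x j : ℚ) else 0)
          = (∑ j ∈ T, (if hj : j ∈ T then g (e ⟨j, hj⟩) i
              else if P j = i then (x j : ℚ) else 0))
          + ∑ j ∈ Tᶜ, (if hj : j ∈ T then g (e ⟨j, hj⟩) i
              else if P j = i then (x j : ℚ) else 0) :=
        (Finset.sum_add_sum_compl T _).symm
      have hTpart : (∑ j ∈ T, (if hj : j ∈ T then g (e ⟨j, hj⟩) i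
          else if P j = i then (x j : ℚ) else 0)) = ∑ j', g j' i := by
        rw [← Finset.sum_attach T]
        rw [Finset.sum_congr rfl (fun a _ => dif_pos a.2)]
        rw [← Finset.univ_eq_attach]
        exact Equiv.sum_comp e (fun j' => g j' i)
      have hCpart : (∑ j ∈ Tᶜ, (if hj : j ∈ T then g (e ⟨j, hj⟩) i
          else if P j = i then (x j : ℚ) else 0)) = L i := by
        rw [Finset.sum_congr rfl (fun j hj =>
          dif_neg (Finset.mem_compl.mp hj))]
        exact (Finset.sum_filter _ _).symm
      rw [hsplit, hTpart, hCpart]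
      have := hgcol i
      simp only [hc] at this
      linarith
  · -- part (ii)
    intro B' f hpos hsum hsplitcard hmk
    have hex : ∀ j, ∃ i, 0 < f j i := by
      intro j
      by_contra hcon
      push_neg at hcon
      have h0 : ∑ i, f j i = 0 :=
        Finset.sum_eq_zero (fun i _ => le_antisymm (hcon i) (hpos j i))
      rw [hsum j] at h0
      have hxj : (0:ℚ) < (x j:ℚ) := by exact_mod_cast hx j
      linarith
    choose M hM using hex
    have key : ∀ j, ¬ (1 < (Finset.univ.filter (fun i => 0 < f j i)).card) →
        f j (M j) = (x j : ℚ) := by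
      intro j hns
      have hzero : ∀ i, i ≠ M j → f j i = 0 := by
        intro i hne
        by_contra hz
        have hip : 0 < f j i := lt_of_le_of_ne (hpos j i) (Ne.symm hz)
        have hsub : ({i, M j} : Finset (Fin n)) ⊆
            Finset.univ.filter (fun i => 0 < f j i) := by
          intro a ha
          simp only [Finset.mem_insert, Finset.mem_singleton] at ha
          rcases ha with rfl | rfl <;> simp [hip, hM j]
        have h2 : 2 ≤ (Finset.univ.filter (fun i => 0 < f j i)).card :=
          (Finset.card_pair hne) ▸ Finset.card_le_card hsub
        omega
      rw [← hsum j]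
      exact (Finset.sum_eq_single (M j) (fun b _ hb => hzero b hb)
        (fun h => absurd (Finset.mem_univ _) h)).symm
    set V : Finset (Fin m) := Finset.univ.filter
      (fun j => j ∉ T ∧ 1 < (Finset.univ.filter (fun i => 0 < f j i)).card) with hV
    set W : Finset (Fin m) := T.filter
      (fun j => ¬ 1 < (Finset.univ.filter (fun i => 0 < f j i)).card) with hW
    have hVW : V.card ≤ W.card := by
      have hdisj : Disjoint V (T.filter
          (fun j => 1 < (Finset.univ.filter (fun i => 0 < f j i)).card)) := by
        rw [Finset.disjoint_left]
        intro a ha ha'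
        exact ((Finset.mem_filter.mp ha).2.1) (Finset.mem_filter.mp ha').1
      have hsub : V ∪ T.filter
          (fun j => 1 < (Finset.univ.filter (fun i => 0 < f j i)).card)
          ⊆ Finset.univ.filter (fun j =>
            1 < (Finset.univ.filter (fun i => 0 < f j i)).card) := by
        intro a ha
        rcases Finset.mem_union.mp ha with h | h
        · exact Finset.mem_filter.mpr ⟨Finset.mem_univ _, (Finset.mem_filter.mp h).2.2⟩
        · exact Finset.mem_filter.mpr ⟨Finset.mem_univ _, (Finset.mem_filter.mp h).2⟩
      have h1 : V.card + (T.filter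
          (fun j => 1 < (Finset.univ.filter (fun i => 0 < f j i)).card)).card ≤ s := by
        rw [← Finset.card_union_of_disjoint hdisj]
        exact le_trans (Finset.card_le_card hsub) hsplitcard
      have h2 : (T.filter
          (fun j => 1 < (Finset.univ.filter (fun i => 0 < f j i)).card)).card
          + W.card = s := by
        rw [hW, Finset.card_filter_add_card_filter_not, hT]
      omega
    have hembne : Nonempty ({a // a ∈ V} ↪ {a // a ∈ W}) := by
      rw [Function.Embedding.nonempty_iff_card_le, Fintype.card_coe, Fintype.card_coe]
      exact hVW
    obtain ⟨emb⟩ := hembne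
    set φ : Fin m → Fin m :=
      fun j => if h : j ∈ V then ((emb ⟨j, h⟩ : {a // a ∈ W}) : Fin m) else j with hφ
    have hφpos : ∀ j (h : j ∈ V), φ j = ((emb ⟨j, h⟩ : {a // a ∈ W}) : Fin m) := by
      intro j h; simp only [hφ]; rw [dif_pos h]
    have hφneg : ∀ j, j ∉ V → φ j = j := by
      intro j h; simp only [hφ]; rw [dif_neg h]
    refine ⟨fun j => M (φ j), ?_⟩
    intro i
    have hri' := hri i
    have h1 : ∀ j ∈ Tᶜ.filter (fun j => M (φ j) = i), (x j : ℚ) ≤ f (φ j) i := by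
      intro j hj
      obtain ⟨hjc, hji⟩ := Finset.mem_filter.mp hj
      have hjT : j ∉ T := Finset.mem_compl.mp hjc
      by_cases hv : j ∈ V
      · have hwm : φ j ∈ W := by rw [hφpos j hv]; exact (emb ⟨j, hv⟩).2
        obtain ⟨hwT, hwns⟩ := Finset.mem_filter.mp hwm
        have hval : f (φ j) i = (x (φ j) : ℚ) := hji ▸ key (φ j) hwns
        have hle : x j ≤ x (φ j) := hlong j hjT (φ j) hwT
        rw [hval]
        exact_mod_cast hle
      · have hφj : φ j = j := hφneg j hv
        have hns : ¬ (1 < (Finset.univ.filter (fun i => 0 < f j i)).card) := by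
          intro hcon
          exact hv (Finset.mem_filter.mpr ⟨Finset.mem_univ _, hjT, hcon⟩)
        rw [hφj] at hji ⊢
        rw [← hji]
        exact le_of_eq (key j hns).symm
    have h2 : ∀ a ∈ Tᶜ.filter (fun j => M (φ j) = i),
        ∀ b ∈ Tᶜ.filter (fun j => M (φ j) = i), φ a = φ b → a = b := by
      intro a ha b hb hab
      have haT : a ∉ T := Finset.mem_compl.mp (Finset.mem_filter.mp ha).1
      have hbT : b ∉ T := Finset.mem_compl.mp (Finset.mem_filter.mp hb).1
      have hWT : ∀ w ∈ W, w ∈ T := fun w hw => (Finset.mem_filter.mp hw).1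
      by_cases hva : a ∈ V <;> by_cases hvb : b ∈ V
      · have hvv : emb ⟨a, hva⟩ = emb ⟨b, hvb⟩ := by
          apply Subtype.ext
          rw [← hφpos a hva, ← hφpos b hvb]
          exact hab
        exact congrArg Subtype.val (emb.injective hvv)
      · exfalso
        have h1' : φ a ∈ W := by rw [hφpos a hva]; exact (emb ⟨a, hva⟩).2
        have h2' : φ b = b := hφneg b hvb
        rw [hab, h2'] at h1'
        exact hbT (hWT b h1')
      · exfalso
        have h1' : φ b ∈ W := by rw [hφpos b hvb]; exact (emb ⟨b, hvb⟩).2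
        have h2' : φ a = a := hφneg a hva
        rw [← hab, h2'] at h1'
        exact haT (hWT a h1')
      · rw [← hφneg a hva, ← hφneg b hvb]
        exact hab
    have hchain : ∑ j ∈ Tᶜ.filter (fun j => M (φ j) = i), (x j : ℚ) ≤ ∑ j, f j i := by
      calc ∑ j ∈ Tᶜ.filter (fun j => M (φ j) = i), (x j : ℚ)
          ≤ ∑ j ∈ Tᶜ.filter (fun j => M (φ j) = i), f (φ j) i := Finset.sum_le_sum h1
        _ = ∑ j' ∈ (Tᶜ.filter (fun j => M (φ j) = i)).image φ, f j' i :=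
            (Finset.sum_image (f := fun j' => f j' i) h2).symm
        _ ≤ ∑ j', f j' i := Finset.sum_le_sum_of_subset_of_nonneg
            (Finset.subset_univ _) (fun j' _ _ => hpos j' i)
    calc (∑ j ∈ Tᶜ.filter (fun j => M (φ j) = i), (x j : ℚ)) / (r i : ℚ)
        ≤ (∑ j, f j i) / (r i : ℚ) := by gcongr
      _ ≤ B' := hmk i
end

section
/- Hardness of bounded splittings: reduction correctness. Fix integers n ≥ 2 and 0 ≤ s ≤ n−2. Let X₁ be a list of m positive integers with sum S₀ and let T be a positive integer with T < S₀. Let X₂ consist of the elements of X₁ together with one job of length S₀ + T, one job of length 2S₀(s+1) − T, and n−2−s jobs of length 2S₀. Then X₁ has a subset with sum exactly T if and only if X₂ admits a fractional allocation among n identical machines with at most s splittings in which every machine's completion time equals 2S₀. -/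
/-- The job lengths of `X₂`: the jobs of `X₁` together with one job of length `S₀ + T`, one job
of length `2S₀(s+1) - T`, and `n - 2 - s` jobs of length `2S₀` (encoded as `n - s` extra
jobs). -/
def x2jobs (m : ℕ) (x1 : Fin m → ℕ) (n s S0 T : ℕ) : (Fin m ⊕ Fin (n - s)) → ℕ :=
  Sum.elim x1 (fun k => if (k : ℕ) = 0 then S0 + T
    else if (k : ℕ) = 1 then 2 * S0 * (s + 1) - T else 2 * S0)

lemma aux_single {N : ℕ} (g : Fin N → ℚ) (h0 : ∀ i, 0 ≤ g i)
    (h1 : (Finset.univ.filter (fun i => 0 < g i)).card = 1) :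
    ∃ i₀ : Fin N, ∀ i, g i = if i = i₀ then (∑ i, g i) else 0 := by
  obtain ⟨i₀, hi⟩ := Finset.card_eq_one.mp h1
  refine ⟨i₀, ?_⟩
  have hz : ∀ i, i ≠ i₀ → g i = 0 := by
    intro i hne
    by_contra h
    have h2 : 0 < g i := lt_of_le_of_ne (h0 i) (Ne.symm h)
    have h3 : i ∈ ({i₀} : Finset _) := by
      rw [← hi]; exact Finset.mem_filter.mpr ⟨Finset.mem_univ i, h2⟩
    simp at h3; exact hne h3
  intro i
  by_cases h : i = i₀
  · subst h; simp only [if_pos rfl]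
    rw [Finset.sum_eq_single i (fun b _ hb => hz b hb) (by simp)]; simp
  · simp [h, hz i h]


section FWD
variable (n s : ℕ) (m : ℕ) (x1 : Fin m → ℕ) (S0 : ℕ) (T : ℕ) (W : Finset (Fin m))

noncomputable def ffwd : (Fin m ⊕ Fin (n - s)) → Fin n → ℚ
  | Sum.inl j', i => if (i:ℕ) = (if j' ∈ W then 1 else 0) then (x1 j' : ℚ) else 0
  | Sum.inr k, i =>
      if (k:ℕ) = 0 then (if (i:ℕ) = 0 then ((S0:ℚ) + T) else 0)
      else if (k:ℕ) = 1 then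
        (if (i:ℕ) = 1 then (2*(S0:ℚ) - T) else
          if 2 ≤ (i:ℕ) ∧ (i:ℕ) ≤ s+1 then 2*(S0:ℚ) else 0)
      else (if (i:ℕ) = s + (k:ℕ) then 2*(S0:ℚ) else 0)

lemma ffwd_inl (j' : Fin m) (i : Fin n) :
    ffwd n s m x1 S0 T W (Sum.inl j') i
      = if (i:ℕ) = (if j' ∈ W then 1 else 0) then (x1 j' : ℚ) else 0 := rfl

lemma ffwd_inr (k : Fin (n-s)) (i : Fin n) :
    ffwd n s m x1 S0 T W (Sum.inr k) i
      = if (k:ℕ) = 0 then (if (i:ℕ) = 0 then ((S0:ℚ) + T) else 0)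
      else if (k:ℕ) = 1 then
        (if (i:ℕ) = 1 then (2*(S0:ℚ) - T) else
          if 2 ≤ (i:ℕ) ∧ (i:ℕ) ≤ s+1 then 2*(S0:ℚ) else 0)
      else (if (i:ℕ) = s + (k:ℕ) then 2*(S0:ℚ) else 0) := rfl

variable {n s m x1 S0 T W}

lemma ffwd_nonneg (hTS : T < S0) : ∀ j i, 0 ≤ ffwd n s m x1 S0 T W j i := by
  have hq : (T:ℚ) < S0 := by exact_mod_cast hTS
  have h1 : (0:ℚ) ≤ S0 := Nat.cast_nonneg _
  have h2 : (0:ℚ) ≤ T := Nat.cast_nonneg _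
  rintro (j' | k) i
  · rw [ffwd_inl]; split_ifs <;> first | positivity | linarith
  · rw [ffwd_inr]; split_ifs <;> first | positivity | linarith

lemma ffwd_rowsum (hn : 2 ≤ n) (hs : s ≤ n - 2) (hTS : T < S0) :
    ∀ j, ∑ i, ffwd n s m x1 S0 T W j i =
    ((Sum.elim x1 (fun k : Fin (n-s) => if (k : ℕ) = 0 then S0 + T
    else if (k : ℕ) = 1 then 2 * S0 * (s + 1) - T else 2 * S0)) j : ℚ) := by
  have hsn : s + 2 ≤ n := by omega
  rintro (j' | ⟨kv, hk⟩)
  · simp only [ffwd_inl, Sum.elim_inl]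
    rw [Fin.sum_univ_eq_sum_range (fun iv => if iv = (if j' ∈ W then 1 else 0) then (x1 j' : ℚ) else 0) n,
      Finset.sum_ite_eq' (Finset.range n)]
    have : (if j' ∈ W then 1 else 0) ∈ Finset.range n := by
      split_ifs <;> simp <;> omega
    simp [this]
  · simp only [ffwd_inr, Sum.elim_inr]
    match kv, hk with
    | 0, hk =>
      simp only [Fin.val_mk, reduceIte]
      rw [Fin.sum_univ_eq_sum_range (fun iv => if iv = 0 then ((S0:ℚ) + T) else 0) n,
        Finset.sum_ite_eq' (Finset.range n)]
      have : (0:ℕ) ∈ Finset.range n := by simp; omega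
      simp [this]
    | 1, hk =>
      simp only [Fin.val_mk, reduceIte, if_neg (show ¬(1 = 0) by omega)]
      have hpt : ∀ iv : ℕ, (if iv = 1 then (2*(S0:ℚ) - T) else
          if 2 ≤ iv ∧ iv ≤ s+1 then 2*(S0:ℚ) else 0)
          = (if iv = 1 then (2*(S0:ℚ) - T) else 0)
          + (if 2 ≤ iv ∧ iv ≤ s+1 then 2*(S0:ℚ) else 0) := by
        intro iv
        rcases eq_or_ne iv 1 with h | h <;> simp [h]
      rw [Fin.sum_univ_eq_sum_range (fun iv => if iv = 1 then (2*(S0:ℚ) - T) else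
          if 2 ≤ iv ∧ iv ≤ s+1 then 2*(S0:ℚ) else 0) n]
      rw [Finset.sum_congr rfl (fun iv _ => hpt iv), Finset.sum_add_distrib,
        Finset.sum_ite_eq' (Finset.range n)]
      have h1 : (1:ℕ) ∈ Finset.range n := by simp; omega
      have h2 : Finset.filter (fun iv => 2 ≤ iv ∧ iv ≤ s+1) (Finset.range n)
          = Finset.Ico 2 (s+2) := by
        ext iv; simp [Finset.mem_Ico]; omega
      rw [← Finset.sum_filter, h2]
      rw [Finset.sum_const, Nat.card_Ico]
      have hle : T ≤ 2 * S0 * (s+1) := by nlinarith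
      rw [if_pos h1, Nat.cast_sub hle]
      push_cast
      ring
    | (v+2), hk =>
      simp only [Fin.val_mk, if_neg (show ¬(v+2 = 0) by omega), if_neg (show ¬(v+2 = 1) by omega)]
      rw [Fin.sum_univ_eq_sum_range (fun iv => if iv = s + (v+2) then 2*(S0:ℚ) else 0) n,
        Finset.sum_ite_eq' (Finset.range n)]
      have : s + (v + 2) ∈ Finset.range n := by simp; omega
      simp [this]

end FWD

section FWD2
variable {n s : ℕ} {m : ℕ} {x1 : Fin m → ℕ} {S0 : ℕ} {T : ℕ} {W : Finset (Fin m)}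

lemma ffwd_colsum (hn : 2 ≤ n) (hs : s ≤ n - 2) (hTS : T < S0)
    (hS0 : S0 = ∑ j, x1 j) (hW : ∑ j ∈ W, x1 j = T) :
    ∀ i : Fin n, ∑ j, ffwd n s m x1 S0 T W j i = 2 * (S0:ℚ) := by
  have hsn : s + 2 ≤ n := by omega
  have hWq : ∑ j ∈ W, (x1 j : ℚ) = T := by exact_mod_cast hW
  have hSq : ∑ j, (x1 j : ℚ) = S0 := by exact_mod_cast hS0.symm
  intro i
  have hiv := i.isLt
  rw [Fintype.sum_sum_type]
  simp only [ffwd_inl, ffwd_inr]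
  rw [Fin.sum_univ_eq_sum_range (fun kv => if kv = 0 then (if (i:ℕ) = 0 then ((S0:ℚ) + T) else 0)
      else if kv = 1 then (if (i:ℕ) = 1 then (2*(S0:ℚ) - T) else
        if 2 ≤ (i:ℕ) ∧ (i:ℕ) ≤ s+1 then 2*(S0:ℚ) else 0)
      else (if (i:ℕ) = s + kv then 2*(S0:ℚ) else 0)) (n-s)]
  by_cases h0 : (i:ℕ) = 0
  · have hL : ∑ j' : Fin m, (if (i:ℕ) = (if j' ∈ W then 1 else 0) then (x1 j' : ℚ) else 0)
        = ∑ j' : Fin m, ((x1 j' : ℚ) - if j' ∈ W then (x1 j' : ℚ) else 0) := by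
      refine Finset.sum_congr rfl fun j' _ => ?_
      by_cases hj : j' ∈ W <;> simp [hj, h0]
    rw [hL, Finset.sum_sub_distrib, hSq, Finset.sum_ite_mem, Finset.univ_inter, hWq]
    rw [Finset.sum_eq_single_of_mem 0 (by simp; omega) ?_]
    · simp only [if_pos rfl, if_pos h0]; simp; ring
    · intro b _ hb
      match b, hb with
      | 1, hb => simp [h0]
      | (v+2), hb =>
        simp only [if_neg (show ¬(v+2 = 0) by omega), if_neg (show ¬(v+2 = 1) by omega),
          if_neg (show ¬((i:ℕ) = s + (v+2)) by omega)]
  · by_cases h1 : (i:ℕ) = 1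
    · have hL : ∑ j' : Fin m, (if (i:ℕ) = (if j' ∈ W then 1 else 0) then (x1 j' : ℚ) else 0)
          = ∑ j' : Fin m, (if j' ∈ W then (x1 j' : ℚ) else 0) := by
        refine Finset.sum_congr rfl fun j' _ => ?_
        by_cases hj : j' ∈ W <;> simp [hj, h1]
      rw [hL, Finset.sum_ite_mem, Finset.univ_inter, hWq]
      rw [Finset.sum_eq_single_of_mem 1 (by simp; omega) ?_]
      · simp only [if_neg (show ¬(1 = 0) by omega), if_pos rfl, if_pos h1]; simp
      · intro b _ hb
        match b, hb with
        | 0, hb => simp [h0]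
        | (v+2), hb =>
          simp only [if_neg (show ¬(v+2 = 0) by omega), if_neg (show ¬(v+2 = 1) by omega),
            if_neg (show ¬((i:ℕ) = s + (v+2)) by omega)]
    · have hL : ∑ j' : Fin m, (if (i:ℕ) = (if j' ∈ W then 1 else 0) then (x1 j' : ℚ) else 0)
          = 0 := by
        refine Finset.sum_eq_zero fun j' _ => ?_
        by_cases hj : j' ∈ W <;> simp [hj, h0, h1]
      rw [hL]
      by_cases h2 : (i:ℕ) ≤ s + 1
      · rw [Finset.sum_eq_single_of_mem 1 (by simp; omega) ?_]
        · rw [if_neg (show ¬(1 = 0) by omega), if_pos rfl, if_neg h1,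
            if_pos (show 2 ≤ (i:ℕ) ∧ (i:ℕ) ≤ s+1 by omega)]; ring
        · intro b _ hb
          match b, hb with
          | 0, hb => simp [h0]
          | (v+2), hb =>
            simp only [if_neg (show ¬(v+2 = 0) by omega), if_neg (show ¬(v+2 = 1) by omega),
              if_neg (show ¬((i:ℕ) = s + (v+2)) by omega)]
      · rw [Finset.sum_eq_single_of_mem ((i:ℕ) - s) (by simp; omega) ?_]
        · rw [if_neg (show ¬((i:ℕ) - s = 0) by omega), if_neg (show ¬((i:ℕ) - s = 1) by omega),
            if_pos (show (i:ℕ) = s + ((i:ℕ) - s) by omega)]; ring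
        · intro b _ hb
          match b with
          | 0 => simp [h0]
          | 1 => simp only [if_neg (show ¬(1 = 0) by omega), if_pos rfl, if_neg h1,
              if_neg (show ¬(2 ≤ (i:ℕ) ∧ (i:ℕ) ≤ s+1) by omega)]; simp
          | (v+2) =>
            simp only [if_neg (show ¬(v+2 = 0) by omega), if_neg (show ¬(v+2 = 1) by omega),
              if_neg (show ¬((i:ℕ) = s + (v+2)) by (intro h; exact hb (by omega)))]

lemma filt_card_one {N : ℕ} {g : Fin N → ℚ} {c : ℕ} (hc : c < N) {v : ℚ} (hv : 0 < v)
    (hg : ∀ i : Fin N, g i = if (i:ℕ) = c then v else 0) :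
    (Finset.univ.filter (fun i => 0 < g i)).card = 1 := by
  have h : Finset.univ.filter (fun i : Fin N => 0 < g i) = {(⟨c, hc⟩ : Fin N)} := by
    ext i
    simp only [Finset.mem_filter, Finset.mem_univ, true_and, Finset.mem_singleton, hg i]
    constructor
    · intro h; by_contra hne
      rw [if_neg (by simpa [Fin.ext_iff] using hne)] at h
      exact lt_irrefl 0 h
    · intro h; subst h; simpa using hv
  rw [h, Finset.card_singleton]

lemma ffwd_split (hn : 2 ≤ n) (hs : s ≤ n - 2) (hx1 : ∀ j, 0 < x1 j)
    (hT0 : 0 < T) (hTS : T < S0) :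
    (∑ j : Fin m ⊕ Fin (n - s),
      ((Finset.univ.filter (fun i => 0 < ffwd n s m x1 S0 T W j i)).card - 1)) ≤ s := by
  have hsn : s + 2 ≤ n := by omega
  have hSq : (0:ℚ) < S0 := by exact_mod_cast (by omega : 0 < S0)
  have hTq : (T:ℚ) < S0 := by exact_mod_cast hTS
  rw [Fintype.sum_sum_type]
  have hA : ∑ j' : Fin m,
      ((Finset.univ.filter (fun i => 0 < ffwd n s m x1 S0 T W (Sum.inl j') i)).card - 1) = 0 := by
    refine Finset.sum_eq_zero fun j' _ => ?_
    rw [filt_card_one (c := if j' ∈ W then 1 else 0) (by split_ifs <;> omega)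
      (v := (x1 j' : ℚ)) (by exact_mod_cast hx1 j') (fun i => ffwd_inl n s m x1 S0 T W j' i)]
    rfl
  rw [hA, zero_add]
  have hB : ∑ k : Fin (n-s),
      ((Finset.univ.filter (fun i => 0 < ffwd n s m x1 S0 T W (Sum.inr k) i)).card - 1) = s := by
    rw [Finset.sum_eq_single_of_mem (⟨1, by omega⟩ : Fin (n-s)) (Finset.mem_univ _) ?_]
    · -- card of support of the big job = s + 1
      have hfe : Finset.univ.filter (fun i : Fin n => 0 < ffwd n s m x1 S0 T W (Sum.inr ⟨1, by omega⟩) i)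
          = Finset.univ.filter (fun i : Fin n => 1 ≤ (i:ℕ) ∧ (i:ℕ) ≤ s+1) := by
        refine Finset.filter_congr fun i _ => ?_
        rw [ffwd_inr]
        simp only [if_neg (show ¬((1:ℕ) = 0) by omega), if_pos rfl]
        by_cases h1 : (i:ℕ) = 1
        · rw [if_pos h1]
          constructor
          · intro _; omega
          · intro _; simp only [if_true]; linarith
        · rw [if_neg h1]
          by_cases h2 : 2 ≤ (i:ℕ) ∧ (i:ℕ) ≤ s+1
          · rw [if_pos h2]
            constructor
            · intro _; omega
            · intro _; simp only [if_true]; linarith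
          · rw [if_neg h2]
            constructor
            · intro h; exact absurd rfl (ne_of_gt h)
            · intro h; omega
      rw [hfe, Finset.card_filter,
        Fin.sum_univ_eq_sum_range (fun iv => if 1 ≤ iv ∧ iv ≤ s+1 then 1 else 0) n,
        ← Finset.sum_filter]
      have : Finset.filter (fun iv => 1 ≤ iv ∧ iv ≤ s+1) (Finset.range n) = Finset.Ico 1 (s+2) := by
        ext iv; simp [Finset.mem_Ico]; omega
      rw [this, Finset.sum_const, Nat.card_Ico, smul_eq_mul, mul_one]
      omega
    · intro k _ hk
      obtain ⟨kv, hkv⟩ := k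
      have hkv1 : kv ≠ 1 := by simpa [Fin.ext_iff] using hk
      match kv, hkv, hkv1 with
      | 0, hkv, _ =>
        rw [filt_card_one (c := 0) (by omega) (v := ((S0:ℚ) + T))
          (by positivity) (fun i => by rw [ffwd_inr]; simp)]
        rfl
      | (v+2), hkv, _ =>
        rw [filt_card_one (c := s + (v+2)) (by omega) (v := 2*(S0:ℚ))
          (by positivity) (fun i => by
            rw [ffwd_inr]
            simp only [if_neg (show ¬(v+2 = 0) by omega), if_neg (show ¬(v+2 = 1) by omega)])]
        rfl
  omega

theorem stmt_15_bwd (n s : ℕ) (hn : 2 ≤ n) (hs : s ≤ n - 2)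
    (m : ℕ) (x1 : Fin m → ℕ) (hx1 : ∀ j, 0 < x1 j)
    (S0 : ℕ) (hS0 : S0 = ∑ j, x1 j)
    (T : ℕ) (hT0 : 0 < T) (hTS : T < S0)
    (f : (Fin m ⊕ Fin (n - s)) → Fin n → ℚ)
    (hf0 : ∀ j i, 0 ≤ f j i)
    (hrow : ∀ j, ∑ i, f j i = (x2jobs m x1 n s S0 T j : ℚ))
    (hsplit : (∑ j : Fin m ⊕ Fin (n - s),
            ((Finset.univ.filter (fun i => 0 < f j i)).card - 1)) ≤ s)
    (hcol : ∀ i : Fin n, ∑ j, f j i = 2 * (S0 : ℚ)) :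
    ∃ W : Finset (Fin m), ∑ j ∈ W, x1 j = T := by
  have hsn : s + 2 ≤ n := by omega
  have hS0pos : 0 < S0 := by omega
  have hSq : (0:ℚ) < S0 := by exact_mod_cast hS0pos
  have hTq : (0:ℚ) < T := by exact_mod_cast hT0
  have hTSq : (T:ℚ) < S0 := by exact_mod_cast hTS
  have hTle : T ≤ 2 * S0 * (s+1) := le_trans hTS.le (by nlinarith)
  set B : Fin m ⊕ Fin (n - s) := Sum.inr ⟨1, by omega⟩ with hBdef
  set Sup : (Fin m ⊕ Fin (n-s)) → Finset (Fin n) :=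
    fun j => Finset.univ.filter (fun i => 0 < f j i) with hSupdef
  -- x2 job sizes are positive (in ℚ)
  have hx2pos : ∀ j, (0:ℚ) < (x2jobs m x1 n s S0 T j : ℚ) := by
    rintro (j' | ⟨kv, hk⟩)
    · have := hx1 j'; simp [x2jobs]; exact_mod_cast this
    · match kv, hk with
      | 0, hk => simp [x2jobs]; positivity
      | 1, hk =>
        simp only [x2jobs, Sum.elim_inr, if_neg (show ¬((1:ℕ) = 0) by omega), if_pos rfl, if_true]
        rw [Nat.cast_sub hTle]
        have : (T:ℚ) < 2*S0*(s+1) := by push_cast; nlinarith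
        push_cast
        linarith
      | v+2, hk =>
        simp only [x2jobs, Sum.elim_inr, if_neg (show ¬(v+2 = 0) by omega),
          if_neg (show ¬(v+2 = 1) by omega)]
        positivity
  -- restricting the sum to the support
  have hsum_sup : ∀ j, ∑ i ∈ Sup j, f j i = ∑ i, f j i := by
    intro j
    refine Finset.sum_subset (Finset.subset_univ _) fun i _ hi => ?_
    have : ¬ 0 < f j i := by simpa [hSupdef] using hi
    exact le_antisymm (not_lt.mp this) (hf0 j i)
  have hsupp_ne : ∀ j, 1 ≤ (Sup j).card := by
    intro j
    by_contra h
    have h0 : Sup j = ∅ := Finset.card_eq_zero.mp (by omega)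
    have h1 := hsum_sup j
    rw [h0, Finset.sum_empty, hrow j] at h1
    exact absurd h1.symm (ne_of_gt (hx2pos j))
  have hub : ∀ j i, f j i ≤ 2*(S0:ℚ) := by
    intro j i
    calc f j i ≤ ∑ j', f j' i :=
          Finset.single_le_sum (fun j' _ => hf0 j' i) (Finset.mem_univ j)
      _ = 2*S0 := hcol i
  have hrowBq : ∑ i, f B i = 2*(S0:ℚ)*(s+1) - T := by
    rw [hrow]
    simp only [hBdef, x2jobs, Sum.elim_inr, if_neg (show ¬((1:ℕ) = 0) by omega), if_pos rfl, if_true]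
    rw [Nat.cast_sub hTle]; push_cast; ring
  have hBcard : s + 1 ≤ (Sup B).card := by
    have h1 : 2*(S0:ℚ)*(s+1) - T = ∑ i ∈ Sup B, f B i := by rw [hsum_sup, hrowBq]
    have h2 : ∑ i ∈ Sup B, f B i ≤ ((Sup B).card : ℚ) * (2*(S0:ℚ)) := by
      calc ∑ i ∈ Sup B, f B i ≤ ∑ _i ∈ Sup B, 2*(S0:ℚ) :=
            Finset.sum_le_sum (fun i _ => hub B i)
        _ = ((Sup B).card : ℚ) * (2*S0) := by rw [Finset.sum_const, nsmul_eq_mul]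
    by_contra hcon
    push_neg at hcon
    have h3 : ((Sup B).card : ℚ) ≤ (s:ℚ) := by exact_mod_cast Nat.lt_succ_iff.mp hcon
    nlinarith
  have hBc : (Sup B).card = s + 1 := by
    have hle1 : (Sup B).card - 1 ≤ s :=
      le_trans (Finset.single_le_sum (f := fun j => (Sup j).card - 1)
        (fun j _ => Nat.zero_le _) (Finset.mem_univ B)) hsplit
    omega
  have hone : ∀ j, j ≠ B → (Sup j).card = 1 := by
    intro j hj
    have hpair : ((Sup j).card - 1) + ((Sup B).card - 1) ≤ s := by
      have h := Finset.sum_le_sum_of_subset (Finset.subset_univ ({j, B} : Finset _))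
        (f := fun j => (Sup j).card - 1)
      rw [Finset.sum_pair hj] at h
      exact le_trans h hsplit
    have := hsupp_ne j
    omega
  set c : (Fin m ⊕ Fin (n-s)) → ℚ := fun j => ∑ i ∈ Sup B, f j i with hcdef
  have hc0 : ∀ j, 0 ≤ c j := fun j => Finset.sum_nonneg fun i _ => hf0 j i
  have hcB : c B = 2*(S0:ℚ)*(s+1) - T := by rw [hcdef]; simp only []; rw [hsum_sup, hrowBq]
  have hcsum : ∑ j, c j = ((s:ℚ)+1) * (2*(S0:ℚ)) := by
    calc ∑ j, c j = ∑ i ∈ Sup B, ∑ j, f j i := Finset.sum_comm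
      _ = ∑ _i ∈ Sup B, 2*(S0:ℚ) := Finset.sum_congr rfl (fun i _ => hcol i)
      _ = ((Sup B).card : ℚ) * (2*S0) := by rw [Finset.sum_const, nsmul_eq_mul]
      _ = ((s:ℚ)+1) * (2*S0) := by rw [hBc]; push_cast; ring
  have hErase : ∑ j ∈ Finset.univ.erase B, c j = T := by
    have h := Finset.sum_erase_add Finset.univ c (Finset.mem_univ B)
    rw [hcsum, hcB] at h
    linarith
  have hcle : ∀ j ∈ Finset.univ.erase B, c j ≤ (T:ℚ) := by
    intro j hj
    calc c j ≤ ∑ j' ∈ Finset.univ.erase B, c j' :=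
          Finset.single_le_sum (fun j' _ => hc0 j') hj
      _ = T := hErase
  have hdich : ∀ j, j ≠ B → c j = 0 ∨ c j = (x2jobs m x1 n s S0 T j : ℚ) := by
    intro j hj
    obtain ⟨i₀, hi₀⟩ := aux_single (f j) (hf0 j) (hone j hj)
    have h1 : c j = ∑ i ∈ Sup B, if i = i₀ then (∑ i', f j i') else 0 :=
      Finset.sum_congr rfl (fun i _ => hi₀ i)
    rw [h1, Finset.sum_ite_eq' (Sup B) i₀, hrow j]
    split_ifs with h
    · right; rfl
    · left; rfl
  have hinr0 : ∀ k : Fin (n-s), Sum.inr k ≠ B → c (Sum.inr k) = 0 := by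
    intro k hk
    rcases hdich _ hk with h | h
    · exact h
    · exfalso
      have hle := hcle _ (Finset.mem_erase.mpr ⟨hk, Finset.mem_univ _⟩)
      rw [h] at hle
      obtain ⟨kv, hkv⟩ := k
      match kv, hkv, hk, hle with
      | 0, hkv, hk, hle =>
        rw [show (x2jobs m x1 n s S0 T (Sum.inr ⟨0, hkv⟩) : ℚ) = (S0:ℚ) + T by
          simp [x2jobs]] at hle
        linarith
      | 1, hkv, hk, hle => exact hk rfl
      | v+2, hkv, hk, hle =>
        rw [show (x2jobs m x1 n s S0 T (Sum.inr ⟨v+2, hkv⟩) : ℚ) = 2*(S0:ℚ) by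
          simp only [x2jobs, Sum.elim_inr, if_neg (show ¬(v+2 = 0) by omega),
            if_neg (show ¬(v+2 = 1) by omega)]; push_cast; ring] at hle
        linarith
  have hinl : ∑ j' : Fin m, c (Sum.inl j') = T := by
    have hst : ∑ j, c j
        = ∑ j' : Fin m, c (Sum.inl j') + ∑ k : Fin (n-s), c (Sum.inr k) :=
      Fintype.sum_sum_type _
    have hR : ∑ k : Fin (n-s), c (Sum.inr k) = c B := by
      rw [hBdef]
      exact Finset.sum_eq_single_of_mem ⟨1, by omega⟩ (Finset.mem_univ _)
        (fun k _ hk => hinr0 k (fun h => hk (Sum.inr.inj h)))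
    rw [hR, hcB, hcsum] at hst
    linarith
  refine ⟨Finset.univ.filter (fun j' => 0 < c (Sum.inl j')), ?_⟩
  have hWq : ∑ j' ∈ Finset.univ.filter (fun j' => 0 < c (Sum.inl j')), (x1 j' : ℚ) = T := by
    have h1 : ∀ j' ∈ Finset.univ.filter (fun j' => 0 < c (Sum.inl j')),
        (x1 j' : ℚ) = c (Sum.inl j') := by
      intro j' hj'
      have hpos : 0 < c (Sum.inl j') := (Finset.mem_filter.mp hj').2
      rcases hdich (Sum.inl j') (by simp [hBdef]) with h | h
      · rw [h] at hpos; exact absurd hpos (lt_irrefl 0)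
      · rw [h]; simp [x2jobs]
    rw [Finset.sum_congr rfl h1]
    have h2 : ∑ x ∈ Finset.univ.filter (fun j' => 0 < c (Sum.inl j')), c (Sum.inl x)
        = ∑ x : Fin m, c (Sum.inl x) :=
      Finset.sum_subset (Finset.filter_subset _ _) (fun j' _ hj' => by
        have hnp : ¬ 0 < c (Sum.inl j') := by simpa using hj'
        exact le_antisymm (not_lt.mp hnp) (hc0 _))
    rw [h2, hinl]
  exact_mod_cast hWq

/-- hardness of bounded splittings, reduction correctness: `X₁` has a subset of
sum exactly `T` iff `X₂` admits a fractional allocation among `n` identical machines with at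
most `s` splittings in which every machine's completion time equals `2S₀`. -/
theorem stmt_15 (n s : ℕ) (hn : 2 ≤ n) (hs : s ≤ n - 2)
    (m : ℕ) (x1 : Fin m → ℕ) (hx1 : ∀ j, 0 < x1 j)
    (S0 : ℕ) (hS0 : S0 = ∑ j, x1 j)
    (T : ℕ) (hT0 : 0 < T) (hTS : T < S0) :
    (∃ W : Finset (Fin m), ∑ j ∈ W, x1 j = T) ↔
    (∃ f : (Fin m ⊕ Fin (n - s)) → Fin n → ℚ,
        (∀ j i, 0 ≤ f j i) ∧
        (∀ j, ∑ i, f j i = (x2jobs m x1 n s S0 T j : ℚ)) ∧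
        (∑ j : Fin m ⊕ Fin (n - s),
            ((Finset.univ.filter (fun i => 0 < f j i)).card - 1)) ≤ s ∧
        (∀ i : Fin n, ∑ j, f j i = 2 * (S0 : ℚ))) := by
  constructor
  · rintro ⟨W, hW⟩
    exact ⟨ffwd n s m x1 S0 T W, ffwd_nonneg hTS, ffwd_rowsum hn hs hTS,
      ffwd_split hn hs hx1 hT0 hTS, ffwd_colsum hn hs hTS hS0 hW⟩
  · rintro ⟨f, hf0, hrow, hsplit, hcol⟩
    exact stmt_15_bwd n s hn hs m x1 hx1 S0 hS0 T hT0 hTS f hf0 hrow hsplit hcol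
end FWD2
end
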